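/- arXiv:1909.09949 — 4 statements merged into one kernel-verified Lean document; each statement's English description precedes it below -/
import Mathlib

section
/- For every n ≥ 0, the q-Fubini number F_{n,q} := ∑_{k=0}^{n} [k]!_q · {n brace k}_q equals ∑_{ω} q^{Inv*(ω)}, where the sum runs over all ordered set partitions ω of {1, …, n} (into any number of blocks). -/
open Finset Polynomial

/-- The q-integer `[n]_q = 1 + q + ⋯ + q^(n-1)`. -/
def qInt {R : Type*} [CommSemiring R] (q : R) (n : ℕ) : R :=
  ∑ i ∈ Finset.range n, q ^ i

/-- The q-factorial `[n]!_q = [1]_q [2]_q ⋯ [n]_q`. -/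
def qFact {R : Type*} [CommSemiring R] (q : R) (n : ℕ) : R :=
  ∏ i ∈ Finset.range n, qInt q (i + 1)

/-- The Carlitz q-Stirling numbers of the second kind, defined by the recurrence
`{n brace m}_q = {n-1 brace m-1}_q + [m]_q {n-1 brace m}_q`. -/
def qStirling {R : Type*} [CommSemiring R] (q : R) : ℕ → ℕ → R
  | 0, 0 => 1
  | 0, _ + 1 => 0
  | _ + 1, 0 => 0
  | n + 1, m + 1 => qStirling q n m + qInt q (m + 1) * qStirling q n (m + 1)

/-- `ω` is an ordered set partition of the finite set `S`: a list of pairwise disjoint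
nonempty blocks whose union is `S`. -/
def IsOrderedPartitionOf (S : Finset ℕ) (ω : List (Finset ℕ)) : Prop :=
  (∀ B ∈ ω, B.Nonempty) ∧ List.Pairwise (fun B C => Disjoint B C) ω ∧
    (∀ x, x ∈ S ↔ ∃ B ∈ ω, x ∈ B)

/-- The inversion number `Inv*(ω)` of an ordered set partition `ω = (B₁, …, B_k)`:
the number of pairs `(b, B_j)` with `b ∈ B_i`, `i < j`, and `b > min B_j`. -/
def invStar (ω : List (Finset ℕ)) : ℕ :=
  ∑ p ∈ (Finset.range ω.length ×ˢ Finset.range ω.length).filter (fun p => p.1 < p.2),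
    ((ω.getD p.1 ∅).filter (fun b => ∃ c ∈ ω.getD p.2 ∅, c < b)).card


namespace QF

def cnt (B C : Finset ℕ) : ℕ := (B.filter (fun b => ∃ c ∈ C, c < b)).card

def rowCnt (B : Finset ℕ) (l : List (Finset ℕ)) : ℕ :=
  ∑ j ∈ Finset.range l.length, cnt B (l.getD j ∅)

def invL : List (Finset ℕ) → ℕ
  | [] => 0
  | B :: l => rowCnt B l + invL l

@[simp] lemma rowCnt_nil (B : Finset ℕ) : rowCnt B [] = 0 := by simp [rowCnt]

lemma rowCnt_cons (B C : Finset ℕ) (l : List (Finset ℕ)) :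
    rowCnt B (C :: l) = cnt B C + rowCnt B l := by
  unfold rowCnt
  rw [List.length_cons, Finset.sum_range_succ']
  simp [add_comm]

lemma sum_filter_lt_product {M : Type*} [AddCommMonoid M] (g : ℕ → ℕ → M) (n : ℕ) :
    ∑ p ∈ (Finset.range n ×ˢ Finset.range n).filter (fun p => p.1 < p.2), g p.1 p.2
      = ∑ j ∈ Finset.range n, ∑ i ∈ Finset.range j, g i j := by
  rw [Finset.sum_filter, Finset.sum_product_right]
  refine Finset.sum_congr rfl fun j hj => ?_
  rw [← Finset.sum_filter]
  refine Finset.sum_congr ?_ fun _ _ => rfl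
  ext i
  simp only [Finset.mem_filter, Finset.mem_range] at *
  omega

lemma invStar_eq_invL (l : List (Finset ℕ)) : invStar l = invL l := by
  rw [invStar]
  show (∑ p ∈ (Finset.range l.length ×ˢ Finset.range l.length).filter (fun p => p.1 < p.2),
      cnt (l.getD p.1 ∅) (l.getD p.2 ∅)) = invL l
  rw [sum_filter_lt_product (fun i j => cnt (l.getD i ∅) (l.getD j ∅)) l.length]
  induction l with
  | nil => simp [invL]
  | cons B l ih =>
      rw [List.length_cons, Finset.sum_range_succ']
      simp only [List.getD_cons_succ, List.getD_cons_zero, Finset.range_zero,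
        Finset.sum_empty, add_zero]
      have : ∀ j, ∑ i ∈ Finset.range (j + 1),
          cnt ((B :: l).getD i ∅) (l.getD j ∅)
          = cnt B (l.getD j ∅) + ∑ i ∈ Finset.range j, cnt (l.getD i ∅) (l.getD j ∅) := by
        intro j
        rw [Finset.sum_range_succ']
        simp [add_comm]
      rw [Finset.sum_congr rfl fun j _ => this j, Finset.sum_add_distrib, ih]
      rfl

end QF

namespace QF

/-- All blocks nonempty and all elements `< m`. -/
def Good (m : ℕ) (l : List (Finset ℕ)) : Prop :=
  (∀ B ∈ l, B.Nonempty) ∧ ∀ B ∈ l, ∀ x ∈ B, x < m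

lemma Good.tail {m : ℕ} {B : Finset ℕ} {l : List (Finset ℕ)} (h : Good m (B :: l)) :
    Good m l :=
  ⟨fun C hC => h.1 C (List.mem_cons_of_mem _ hC), fun C hC => h.2 C (List.mem_cons_of_mem _ hC)⟩

lemma Good.head_ne {m : ℕ} {B : Finset ℕ} {l : List (Finset ℕ)} (h : Good m (B :: l)) :
    m ∉ B ∧ B ≠ {m} ∧ B.Nonempty := by
  have h1 := h.1 B (List.mem_cons_self)
  have h2 := h.2 B (List.mem_cons_self)
  refine ⟨fun hm => absurd (h2 m hm) (lt_irrefl m), fun hB => ?_, h1⟩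
  subst hB
  exact absurd (h2 m (Finset.mem_singleton_self m)) (lt_irrefl m)

lemma Good.block {m : ℕ} {B : Finset ℕ} {l : List (Finset ℕ)} (h : Good m l) (hB : B ∈ l) :
    m ∉ B ∧ B ≠ {m} ∧ B.Nonempty := by
  refine ⟨fun hm => absurd (h.2 B hB m hm) (lt_irrefl m), fun hBm => ?_, h.1 B hB⟩
  subst hBm
  exact absurd (h.2 _ hB m (Finset.mem_singleton_self m)) (lt_irrefl m)

lemma cnt_singleton_right {m : ℕ} {B : Finset ℕ} (hB : ∀ x ∈ B, x < m) :
    cnt B ({m} : Finset ℕ) = 0 := by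
  rw [cnt, Finset.card_eq_zero, Finset.filter_eq_empty_iff]
  rintro b hb ⟨c, hc, hcb⟩
  rw [Finset.mem_singleton] at hc
  exact absurd (hcb.trans (hB b hb)) (by omega)

lemma cnt_singleton_left {m : ℕ} {C : Finset ℕ} (hC : C.Nonempty) (hCm : ∀ x ∈ C, x < m) :
    cnt ({m} : Finset ℕ) C = 1 := by
  rw [cnt, Finset.filter_singleton, if_pos ⟨hC.choose, hC.choose_spec, hCm _ hC.choose_spec⟩,
    Finset.card_singleton]

lemma cnt_insert_right {m : ℕ} {B C : Finset ℕ} (hB : ∀ x ∈ B, x < m) :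
    cnt B (insert m C) = cnt B C := by
  unfold cnt
  congr 1
  refine Finset.filter_congr fun b hb => ?_
  simp only [Finset.mem_insert, eq_iff_iff]
  constructor
  · rintro ⟨c, (rfl | hc), hcb⟩
    · exact absurd (hcb.trans (hB b hb)) (by omega)
    · exact ⟨c, hc, hcb⟩
  · rintro ⟨c, hc, hcb⟩; exact ⟨c, Or.inr hc, hcb⟩

lemma cnt_insert_left {m : ℕ} {B C : Finset ℕ} (hm : m ∉ B) (hC : C.Nonempty)
    (hCm : ∀ x ∈ C, x < m) : cnt (insert m B) C = cnt B C + 1 := by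
  rw [cnt, Finset.filter_insert, if_pos ⟨hC.choose, hC.choose_spec, hCm _ hC.choose_spec⟩,
    Finset.card_insert_of_notMem (fun h => hm (Finset.mem_of_mem_filter _ h))]
  rfl

lemma rowCnt_insertIdx {m : ℕ} {B : Finset ℕ} (hB : ∀ x ∈ B, x < m) :
    ∀ (l : List (Finset ℕ)) (j : ℕ), j ≤ l.length →
      rowCnt B (l.insertIdx j ({m} : Finset ℕ)) = rowCnt B l
  | l, 0, _ => by rw [List.insertIdx_zero, rowCnt_cons, cnt_singleton_right hB, zero_add]
  | [], j + 1, h => by simp at h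
  | C :: l, j + 1, h => by
      rw [List.insertIdx_succ_cons, rowCnt_cons, rowCnt_cons,
        rowCnt_insertIdx hB l j (by simpa using h)]

lemma rowCnt_singleton_left {m : ℕ} : ∀ {l : List (Finset ℕ)}, Good m l →
    rowCnt ({m} : Finset ℕ) l = l.length
  | [], _ => by simp
  | C :: l, h => by
      rw [rowCnt_cons, cnt_singleton_left (h.head_ne).2.2 (h.2 C (List.mem_cons_self)),
        rowCnt_singleton_left h.tail, List.length_cons, add_comm]

lemma rowCnt_insert_left {m : ℕ} {B : Finset ℕ} (hm : m ∉ B) :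
    ∀ {l : List (Finset ℕ)}, Good m l →
      rowCnt (insert m B) l = rowCnt B l + l.length
  | [], _ => by simp
  | C :: l, h => by
      rw [rowCnt_cons, rowCnt_cons,
        cnt_insert_left hm (h.head_ne).2.2 (h.2 C (List.mem_cons_self)),
        rowCnt_insert_left hm h.tail, List.length_cons]
      omega

lemma rowCnt_set {m : ℕ} {B : Finset ℕ} (hB : ∀ x ∈ B, x < m) :
    ∀ (l : List (Finset ℕ)) (i : ℕ), i < l.length →
      rowCnt B (l.set i (insert m (l.getD i ∅))) = rowCnt B l
  | [], i, h => by simp at h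
  | C :: l, 0, _ => by
      rw [List.getD_cons_zero, List.set_cons_zero, rowCnt_cons, rowCnt_cons,
        cnt_insert_right hB]
  | C :: l, i + 1, h => by
      rw [List.getD_cons_succ, List.set_cons_succ, rowCnt_cons, rowCnt_cons,
        rowCnt_set hB l i (by simpa using h)]

lemma invL_insertIdx {m : ℕ} : ∀ {l : List (Finset ℕ)} (j : ℕ), Good m l → j ≤ l.length →
    invL (l.insertIdx j ({m} : Finset ℕ)) = invL l + (l.length - j)
  | l, 0, h, _ => by
      rw [List.insertIdx_zero]
      show rowCnt {m} l + invL l = _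
      rw [rowCnt_singleton_left h]
      omega
  | [], j + 1, _, h => by simp at h
  | B :: l, j + 1, h, hj => by
      rw [List.insertIdx_succ_cons]
      show rowCnt B (l.insertIdx j {m}) + invL (l.insertIdx j {m}) = _
      rw [rowCnt_insertIdx (h.2 B (List.mem_cons_self)) l j (by simpa using hj),
        invL_insertIdx j h.tail (by simpa using hj)]
      show _ = rowCnt B l + invL l + _
      simp only [List.length_cons]
      omega

lemma invL_set {m : ℕ} : ∀ {l : List (Finset ℕ)} (i : ℕ), Good m l → i < l.length →
    invL (l.set i (insert m (l.getD i ∅))) = invL l + (l.length - 1 - i)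
  | [], i, _, h => by simp at h
  | B :: l, 0, h, _ => by
      rw [List.getD_cons_zero, List.set_cons_zero]
      show rowCnt (insert m B) l + invL l = rowCnt B l + invL l + _
      rw [rowCnt_insert_left (h.head_ne).1 h.tail]
      simp only [List.length_cons]
      omega
  | B :: l, i + 1, h, hi => by
      rw [List.getD_cons_succ, List.set_cons_succ]
      show rowCnt B (l.set i (insert m (l.getD i ∅))) + invL (l.set i (insert m (l.getD i ∅)))
        = rowCnt B l + invL l + _
      rw [rowCnt_set (h.2 B (List.mem_cons_self)) l i (by simpa using hi),
        invL_set i h.tail (by simpa using hi)]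
      simp only [List.length_cons]
      omega

end QF

namespace QF

lemma insertIdx_inj {m : ℕ} : ∀ {l₁ l₂ : List (Finset ℕ)} (j₁ j₂ : ℕ),
    Good m l₁ → Good m l₂ → j₁ ≤ l₁.length → j₂ ≤ l₂.length →
    l₁.insertIdx j₁ ({m} : Finset ℕ) = l₂.insertIdx j₂ ({m} : Finset ℕ) →
    j₁ = j₂ ∧ l₁ = l₂
  | l₁, l₂, 0, 0, _, _, _, _, heq => by
      rw [List.insertIdx_zero, List.insertIdx_zero] at heq
      exact ⟨rfl, List.cons_injective heq⟩
  | l₁, [], 0, j₂ + 1, _, _, _, hj₂, heq => by simp at hj₂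
  | l₁, C :: l₂, 0, j₂ + 1, _, h₂, _, _, heq => by
      rw [List.insertIdx_zero, List.insertIdx_succ_cons] at heq
      exact absurd (List.head_eq_of_cons_eq heq).symm h₂.head_ne.2.1
  | [], l₂, j₁ + 1, 0, _, _, hj₁, _, heq => by simp at hj₁
  | B :: l₁, l₂, j₁ + 1, 0, h₁, _, _, _, heq => by
      rw [List.insertIdx_zero, List.insertIdx_succ_cons] at heq
      exact absurd (List.head_eq_of_cons_eq heq) h₁.head_ne.2.1
  | [], _, j₁ + 1, _ + 1, _, _, hj₁, _, _ => by simp at hj₁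
  | _, [], _ + 1, j₂ + 1, _, _, _, hj₂, _ => by simp at hj₂
  | B :: l₁, C :: l₂, j₁ + 1, j₂ + 1, h₁, h₂, hj₁, hj₂, heq => by
      rw [List.insertIdx_succ_cons, List.insertIdx_succ_cons] at heq
      obtain ⟨hBC, htl⟩ := List.cons_eq_cons.mp heq
      obtain ⟨hj, hl⟩ := insertIdx_inj j₁ j₂ h₁.tail h₂.tail (by simpa using hj₁)
        (by simpa using hj₂) htl
      exact ⟨by omega, by rw [hBC, hl]⟩

lemma set_inj {m : ℕ} : ∀ {l₁ l₂ : List (Finset ℕ)} (i₁ i₂ : ℕ),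
    Good m l₁ → Good m l₂ → i₁ < l₁.length → i₂ < l₂.length →
    l₁.set i₁ (insert m (l₁.getD i₁ ∅)) = l₂.set i₂ (insert m (l₂.getD i₂ ∅)) →
    l₁ = l₂
  | [], _, i₁, _, _, _, hi₁, _, _ => by simp at hi₁
  | _, [], _, i₂, _, _, _, hi₂, _ => by simp at hi₂
  | B :: l₁, C :: l₂, 0, 0, h₁, h₂, _, _, heq => by
      rw [List.getD_cons_zero, List.getD_cons_zero, List.set_cons_zero,
        List.set_cons_zero] at heq
      obtain ⟨hBC, htl⟩ := List.cons_eq_cons.mp heq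
      have : B = C := by
        have := congrArg (fun s : Finset ℕ => s.erase m) hBC
        simpa [Finset.erase_insert h₁.head_ne.1, Finset.erase_insert h₂.head_ne.1] using this
      rw [this, htl]
  | B :: l₁, C :: l₂, 0, i₂ + 1, h₁, h₂, _, _, heq => by
      rw [List.getD_cons_zero, List.set_cons_zero, List.getD_cons_succ,
        List.set_cons_succ] at heq
      have hBC := List.head_eq_of_cons_eq heq
      exact absurd (hBC ▸ Finset.mem_insert_self m B) h₂.head_ne.1
  | B :: l₁, C :: l₂, i₁ + 1, 0, h₁, h₂, _, _, heq => by
      rw [List.getD_cons_zero, List.set_cons_zero, List.getD_cons_succ,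
        List.set_cons_succ] at heq
      have hBC := List.head_eq_of_cons_eq heq
      exact absurd (hBC ▸ Finset.mem_insert_self m C) h₁.head_ne.1
  | B :: l₁, C :: l₂, i₁ + 1, i₂ + 1, h₁, h₂, hi₁, hi₂, heq => by
      rw [List.getD_cons_succ, List.getD_cons_succ, List.set_cons_succ,
        List.set_cons_succ] at heq
      obtain ⟨hBC, htl⟩ := List.cons_eq_cons.mp heq
      rw [hBC, set_inj i₁ i₂ h₁.tail h₂.tail (by simpa using hi₁) (by simpa using hi₂) htl]

lemma set_index_inj {m : ℕ} : ∀ {l : List (Finset ℕ)} (i₁ i₂ : ℕ),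
    Good m l → i₁ < l.length → i₂ < l.length →
    l.set i₁ (insert m (l.getD i₁ ∅)) = l.set i₂ (insert m (l.getD i₂ ∅)) →
    i₁ = i₂
  | [], i₁, _, _, hi₁, _, _ => by simp at hi₁
  | B :: l, 0, 0, _, _, _, _ => rfl
  | B :: l, 0, i₂ + 1, h, _, _, heq => by
      rw [List.getD_cons_zero, List.set_cons_zero, List.getD_cons_succ,
        List.set_cons_succ] at heq
      have hBC := List.head_eq_of_cons_eq heq
      exact absurd (hBC ▸ Finset.mem_insert_self m B) h.head_ne.1
  | B :: l, i₁ + 1, 0, h, _, _, heq => by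
      rw [List.getD_cons_zero, List.set_cons_zero, List.getD_cons_succ,
        List.set_cons_succ] at heq
      have hBC := List.head_eq_of_cons_eq heq
      exact absurd (hBC.symm ▸ Finset.mem_insert_self m B) h.head_ne.1
  | B :: l, i₁ + 1, i₂ + 1, h, hi₁, hi₂, heq => by
      rw [List.getD_cons_succ, List.getD_cons_succ, List.set_cons_succ,
        List.set_cons_succ] at heq
      have := set_index_inj i₁ i₂ h.tail (by simpa using hi₁) (by simpa using hi₂)
        (List.tail_eq_of_cons_eq heq)
      omega

lemma insertIdx_ne_set {m : ℕ} : ∀ {l₁ l₂ : List (Finset ℕ)} (j i : ℕ),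
    Good m l₁ → Good m l₂ → j ≤ l₁.length → i < l₂.length →
    l₁.insertIdx j ({m} : Finset ℕ) ≠ l₂.set i (insert m (l₂.getD i ∅))
  | _, [], j, i, _, _, _, hi => by simp at hi
  | l₁, C :: l₂, 0, 0, h₁, h₂, _, _ => by
      rw [List.insertIdx_zero, List.getD_cons_zero, List.set_cons_zero]
      intro heq
      have hBC := List.head_eq_of_cons_eq heq
      obtain ⟨x, hx⟩ := h₂.head_ne.2.2
      have hxm : x < m := h₂.2 C (List.mem_cons_self) x hx
      have : x ∈ ({m} : Finset ℕ) := hBC ▸ Finset.mem_insert_of_mem hx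
      rw [Finset.mem_singleton] at this
      omega
  | l₁, C :: l₂, 0, i + 1, h₁, h₂, _, _ => by
      rw [List.insertIdx_zero, List.getD_cons_succ, List.set_cons_succ]
      intro heq
      exact absurd (List.head_eq_of_cons_eq heq).symm h₂.head_ne.2.1
  | [], _, j + 1, i, _, _, hj, _ => by simp at hj
  | B :: l₁, C :: l₂, j + 1, 0, h₁, h₂, _, _ => by
      rw [List.insertIdx_succ_cons, List.getD_cons_zero, List.set_cons_zero]
      intro heq
      have hBC := List.head_eq_of_cons_eq heq
      exact absurd (hBC ▸ Finset.mem_insert_self m C) h₁.head_ne.1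
  | B :: l₁, C :: l₂, j + 1, i + 1, h₁, h₂, hj, hi => by
      rw [List.insertIdx_succ_cons, List.getD_cons_succ, List.set_cons_succ]
      intro heq
      obtain ⟨hBC, htl⟩ := List.cons_eq_cons.mp heq
      exact insertIdx_ne_set j i h₁.tail h₂.tail (by simpa using hj) (by simpa using hi) htl

/-- All ways of inserting `m` into an ordered partition: as a new singleton block at any
position, or into any existing block. -/
def insertions (m : ℕ) (ω : List (Finset ℕ)) : Finset (List (Finset ℕ)) :=
  ((Finset.range (ω.length + 1)).image fun j => ω.insertIdx j ({m} : Finset ℕ)) ∪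
    ((Finset.range ω.length).image fun i => ω.set i (insert m (ω.getD i ∅)))

/-- The finset of ordered set partitions of `{1, …, n}`, built recursively. -/
def osp : ℕ → Finset (List (Finset ℕ))
  | 0 => {[]}
  | n + 1 => (osp n).biUnion fun ω => insertions (n + 1) ω

lemma length_le_of_mem_insertions {m : ℕ} {ω τ : List (Finset ℕ)}
    (h : τ ∈ insertions m ω) : τ.length ≤ ω.length + 1 := by
  rw [insertions, Finset.mem_union] at h
  rcases h with h | h <;> obtain ⟨j, hj, rfl⟩ := Finset.mem_image.mp h
  · rw [Finset.mem_range] at hj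
    rw [List.length_insertIdx_of_le_length (by omega)]
  · rw [List.length_set]
    omega

lemma length_le_of_mem_osp : ∀ {n : ℕ} {ω : List (Finset ℕ)}, ω ∈ osp n → ω.length ≤ n
  | 0, ω, h => by simp only [osp, Finset.mem_singleton] at h; simp [h]
  | n + 1, ω, h => by
      rw [osp, Finset.mem_biUnion] at h
      obtain ⟨σ, hσ, hω⟩ := h
      exact (length_le_of_mem_insertions hω).trans
        (Nat.add_le_add_right (length_le_of_mem_osp hσ) 1)

end QF

namespace QF

lemma good_of_partition {n : ℕ} {ω : List (Finset ℕ)}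
    (h : IsOrderedPartitionOf (Finset.Icc 1 n) ω) : Good (n + 1) ω := by
  refine ⟨h.1, fun B hB x hx => ?_⟩
  have : x ∈ Finset.Icc 1 n := (h.2.2 x).mpr ⟨B, hB, hx⟩
  rw [Finset.mem_Icc] at this
  omega

lemma pairwise_insertIdx {a : Finset ℕ} :
    ∀ (l : List (Finset ℕ)) (j : ℕ), (∀ b ∈ l, Disjoint a b) →
      l.Pairwise (fun B C => Disjoint B C) →
      (l.insertIdx j a).Pairwise (fun B C => Disjoint B C)
  | l, 0, ha, hp => by
      rw [List.insertIdx_zero]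
      exact List.Pairwise.cons ha hp
  | [], j + 1, _, _ => by simp
  | B :: l, j + 1, ha, hp => by
      rw [List.insertIdx_succ_cons]
      rw [List.pairwise_cons] at hp
      refine List.Pairwise.cons (fun C hC => ?_)
        (pairwise_insertIdx l j (fun b hb => ha b (List.mem_cons_of_mem _ hb)) hp.2)
      by_cases hjl : j ≤ l.length
      · rcases (List.mem_insertIdx hjl).mp hC with rfl | hC
        · exact (ha B (List.mem_cons_self)).symm
        · exact hp.1 C hC
      · rw [List.insertIdx_of_length_lt (by omega)] at hC
        exact hp.1 C hC

lemma pairwise_set {m : ℕ} :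
    ∀ (l : List (Finset ℕ)) (i : ℕ), i < l.length → (∀ B ∈ l, m ∉ B) →
      l.Pairwise (fun B C => Disjoint B C) →
      (l.set i (insert m (l.getD i ∅))).Pairwise (fun B C => Disjoint B C)
  | [], i, hi, _, _ => by simp at hi
  | B :: l, 0, _, hm, hp => by
      rw [List.getD_cons_zero, List.set_cons_zero]
      rw [List.pairwise_cons] at hp ⊢
      refine ⟨fun C hC => ?_, hp.2⟩
      rw [Finset.disjoint_insert_left]
      exact ⟨hm C (List.mem_cons_of_mem _ hC), hp.1 C hC⟩
  | B :: l, i + 1, hi, hm, hp => by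
      rw [List.getD_cons_succ, List.set_cons_succ]
      rw [List.pairwise_cons] at hp ⊢
      have hil : i < l.length := by simpa using hi
      refine ⟨fun C hC => ?_, pairwise_set l i hil
        (fun C hC => hm C (List.mem_cons_of_mem _ hC)) hp.2⟩
      rcases List.mem_or_eq_of_mem_set hC with hC | rfl
      · exact hp.1 C hC
      · rw [Finset.disjoint_insert_right]
        have hmem : l.getD i ∅ ∈ l := by
          rw [List.getD_eq_getElem _ _ hil]; exact List.getElem_mem hil
        exact ⟨hm B (List.mem_cons_self), hp.1 _ hmem⟩

lemma partition_insertIdx {n : ℕ} {ω : List (Finset ℕ)}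
    (h : IsOrderedPartitionOf (Finset.Icc 1 n) ω) {j : ℕ} (hj : j ≤ ω.length) :
    IsOrderedPartitionOf (Finset.Icc 1 (n + 1)) (ω.insertIdx j ({n + 1} : Finset ℕ)) := by
  have hg := good_of_partition h
  refine ⟨fun B hB => ?_, ?_, fun x => ?_⟩
  · rcases (List.mem_insertIdx hj).mp hB with rfl | hB
    · exact ⟨n + 1, Finset.mem_singleton_self _⟩
    · exact h.1 B hB
  · exact pairwise_insertIdx ω j
      (fun B hB => Finset.disjoint_singleton_left.mpr (hg.block hB).1) h.2.1
  · rw [Finset.mem_Icc]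
    constructor
    · intro hx
      by_cases hxn : x = n + 1
      · exact ⟨{n + 1}, (List.mem_insertIdx hj).mpr (Or.inl rfl), by simp [hxn]⟩
      · obtain ⟨B, hB, hxB⟩ := (h.2.2 x).mp (Finset.mem_Icc.mpr ⟨hx.1, by omega⟩)
        exact ⟨B, (List.mem_insertIdx hj).mpr (Or.inr hB), hxB⟩
    · rintro ⟨B, hB, hxB⟩
      rcases (List.mem_insertIdx hj).mp hB with rfl | hB
      · rw [Finset.mem_singleton] at hxB; omega
      · have := Finset.mem_Icc.mp ((h.2.2 x).mpr ⟨B, hB, hxB⟩)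
        omega

lemma partition_set {n : ℕ} {ω : List (Finset ℕ)}
    (h : IsOrderedPartitionOf (Finset.Icc 1 n) ω) {i : ℕ} (hi : i < ω.length) :
    IsOrderedPartitionOf (Finset.Icc 1 (n + 1))
      (ω.set i (insert (n + 1) (ω.getD i ∅))) := by
  have hg := good_of_partition h
  have hgetD : ω.getD i ∅ ∈ ω := by
    rw [List.getD_eq_getElem _ _ hi]; exact List.getElem_mem hi
  have hmemX : ω.set i (insert (n + 1) (ω.getD i ∅)) =
      ω.set i (insert (n + 1) (ω.getD i ∅)) := rfl
  have hX_mem : insert (n + 1) (ω.getD i ∅) ∈ ω.set i (insert (n + 1) (ω.getD i ∅)) := by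
    have hlen : i < (ω.set i (insert (n + 1) (ω.getD i ∅))).length := by
      rw [List.length_set]; exact hi
    exact List.mem_iff_getElem.mpr ⟨i, hlen, List.getElem_set_self hlen⟩
  refine ⟨fun B hB => ?_, ?_, fun x => ?_⟩
  · rcases List.mem_or_eq_of_mem_set hB with hB | rfl
    · exact h.1 B hB
    · exact Finset.insert_nonempty _ _
  · exact pairwise_set ω i hi (fun B hB => (hg.block hB).1) h.2.1
  · rw [Finset.mem_Icc]
    constructor
    · intro hx
      by_cases hxn : x = n + 1
      · exact ⟨_, hX_mem, by simp [hxn]⟩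
      · obtain ⟨B, hB, hxB⟩ := (h.2.2 x).mp (Finset.mem_Icc.mpr ⟨hx.1, by omega⟩)
        obtain ⟨t, ht, rfl⟩ := List.mem_iff_getElem.mp hB
        by_cases hti : t = i
        · subst hti
          refine ⟨_, hX_mem, Finset.mem_insert_of_mem ?_⟩
          rwa [List.getD_eq_getElem _ _ ht]
        · refine ⟨ω[t], ?_, hxB⟩
          have hlen : t < (ω.set i (insert (n + 1) (ω.getD i ∅))).length := by
            rw [List.length_set]; exact ht
          exact List.mem_iff_getElem.mpr ⟨t, hlen,
            List.getElem_set_of_ne (fun hit => hti hit.symm) _ hlen⟩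
    · rintro ⟨B, hB, hxB⟩
      rcases List.mem_or_eq_of_mem_set hB with hB | rfl
      · have := Finset.mem_Icc.mp ((h.2.2 x).mpr ⟨B, hB, hxB⟩)
        omega
      · rcases Finset.mem_insert.mp hxB with rfl | hxB
        · omega
        · have := Finset.mem_Icc.mp ((h.2.2 x).mpr ⟨_, hgetD, hxB⟩)
          omega

end QF

namespace QF

lemma insertIdx_getElem_eraseIdx :
    ∀ (l : List (Finset ℕ)) (i : ℕ) (hi : i < l.length),
      (l.eraseIdx i).insertIdx i l[i] = l
  | [], i, hi => by simp at hi
  | B :: l, 0, _ => by simp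
  | B :: l, i + 1, hi => by
      rw [List.eraseIdx_cons_succ, List.getElem_cons_succ, List.insertIdx_succ_cons,
        insertIdx_getElem_eraseIdx l i (by simpa using hi)]

lemma block_index_unique {m : ℕ} {τ : List (Finset ℕ)}
    (hp : τ.Pairwise (fun B C => Disjoint B C)) {i j : ℕ} (hi : i < τ.length)
    (hj : j < τ.length) (hmi : m ∈ τ[i]) (hmj : m ∈ τ[j]) : i = j := by
  rcases lt_trichotomy i j with h | h | h
  · exact absurd hmj (Finset.disjoint_left.mp
      (List.pairwise_iff_getElem.mp hp i j hi hj h) hmi)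
  · exact h
  · exact absurd hmi (Finset.disjoint_left.mp
      (List.pairwise_iff_getElem.mp hp j i hj hi h) hmj)

lemma exists_preimage {n : ℕ} {τ : List (Finset ℕ)}
    (h : IsOrderedPartitionOf (Finset.Icc 1 (n + 1)) τ) :
    ∃ ω, IsOrderedPartitionOf (Finset.Icc 1 n) ω ∧ τ ∈ insertions (n + 1) ω := by
  set m := n + 1 with hm
  have hmIcc : m ∈ Finset.Icc 1 (n + 1) := Finset.mem_Icc.mpr ⟨by omega, by omega⟩
  obtain ⟨B₀, hB₀, hmB₀⟩ := (h.2.2 m).mp hmIcc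
  obtain ⟨i, hi, rfl⟩ := List.mem_iff_getElem.mp hB₀
  -- every block other than τ[i] avoids m
  have havoid : ∀ t (ht : t < τ.length), t ≠ i → m ∉ τ[t] := fun t ht hti hmem =>
    hti (block_index_unique h.2.1 ht hi hmem hmB₀)
  by_cases hsing : τ[i] = {m}
  · -- singleton case
    refine ⟨τ.eraseIdx i, ⟨?_, ?_, ?_⟩, ?_⟩
    · exact fun B hB => h.1 B (List.mem_of_mem_eraseIdx hB)
    · exact h.2.1.sublist (List.eraseIdx_sublist τ i)
    · intro x
      rw [Finset.mem_Icc]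
      constructor
      · intro hx
        obtain ⟨B, hB, hxB⟩ := (h.2.2 x).mp (Finset.mem_Icc.mpr ⟨hx.1, by omega⟩)
        obtain ⟨t, ht, rfl⟩ := List.mem_iff_getElem.mp hB
        have hti : t ≠ i := by
          rintro rfl
          rw [hsing, Finset.mem_singleton] at hxB
          omega
        refine ⟨τ[t], List.mem_iff_getElem.mpr ?_, hxB⟩
        have hlen : τ.length - 1 = (τ.eraseIdx i).length :=
          (List.length_eraseIdx_of_lt hi).symm
        by_cases htlt : t < i
        · exact ⟨t, by omega, List.getElem_eraseIdx_of_lt (l := τ) (i := i) (j := t) (by omega) htlt⟩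
        · refine ⟨t - 1, by omega, ?_⟩
          rw [List.getElem_eraseIdx_of_ge (l := τ) (i := i) (j := t - 1) (by omega) (by omega)]
          congr 1
          omega
      · rintro ⟨B, hB, hxB⟩
        obtain ⟨s, hs, rfl⟩ := List.mem_iff_getElem.mp hB
        have hs' : s < (τ.eraseIdx i).length := hs
        have hlen : (τ.eraseIdx i).length = τ.length - 1 :=
          List.length_eraseIdx_of_lt hi
        have : ∃ t, ∃ (ht : t < τ.length), t ≠ i ∧ τ[t] = (τ.eraseIdx i)[s] := by
          by_cases hsi : s < i
          · exact ⟨s, by omega, by omega,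
              (List.getElem_eraseIdx_of_lt (l := τ) (i := i) (j := s) hs hsi).symm⟩
          · exact ⟨s + 1, by omega, by omega, by
              rw [List.getElem_eraseIdx_of_ge (l := τ) (i := i) (j := s) hs (by omega)]⟩
        obtain ⟨t, ht, hti, htel⟩ := this
        have hxIcc := Finset.mem_Icc.mp ((h.2.2 x).mpr ⟨τ[t], List.getElem_mem ht,
          htel ▸ hxB⟩)
        have hxm : x ≠ m := by
          rintro rfl
          exact havoid t ht hti (htel ▸ hxB)
        omega
    · rw [insertions, Finset.mem_union]
      left
      rw [Finset.mem_image]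
      refine ⟨i, Finset.mem_range.mpr ?_, ?_⟩
      · rw [List.length_eraseIdx_of_lt hi]; omega
      · rw [← hsing, insertIdx_getElem_eraseIdx τ i hi]
  · -- m sits in a bigger block
    have hXne : (τ[i].erase m).Nonempty := by
      rcases Finset.eq_empty_or_nonempty (τ[i].erase m) with he | hne
      · exfalso
        apply hsing
        apply Finset.Subset.antisymm
        · intro x hx
          rw [Finset.mem_singleton]
          by_contra hxm
          exact absurd (Finset.mem_erase.mpr ⟨hxm, hx⟩) (he ▸ Finset.notMem_empty x)
        · simpa using hmB₀
      · exact hne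
    set X := τ[i].erase m with hX
    have hmX : m ∉ X := Finset.notMem_erase m _
    have hset_len : i < (τ.set i X).length := by rw [List.length_set]; exact hi
    have hgetD : (τ.set i X).getD i ∅ = X := by
      rw [List.getD_eq_getElem _ _ hset_len, List.getElem_set_self]
    refine ⟨τ.set i X, ⟨?_, ?_, ?_⟩, ?_⟩
    · intro B hB
      rcases List.mem_or_eq_of_mem_set hB with hB | rfl
      · exact h.1 B hB
      · exact hXne
    · have hp := List.pairwise_iff_getElem.mp h.2.1
      rw [List.pairwise_iff_getElem]
      intro u v hu hv huv
      have hu' : u < τ.length := by simpa using hu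
      have hv' : v < τ.length := by simpa using hv
      by_cases hui : u = i
      · subst hui
        have hvne : u ≠ v := Nat.ne_of_lt huv
        rw [List.getElem_set_self (by rwa [List.length_set]),
          List.getElem_set_of_ne hvne _ (by rwa [List.length_set])]
        exact Disjoint.mono_left (Finset.erase_subset m τ[u]) (hp u v hu' hv' huv)
      · by_cases hvi : v = i
        · subst hvi
          rw [List.getElem_set_of_ne (fun hh => hui hh.symm) _ (by rwa [List.length_set]),
            List.getElem_set_self (by rwa [List.length_set])]
          exact Disjoint.mono_right (Finset.erase_subset m τ[v]) (hp u v hu' hv' huv)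
        · rw [List.getElem_set_of_ne (fun hh => hui hh.symm) _ (by rwa [List.length_set]),
            List.getElem_set_of_ne (fun hh => hvi hh.symm) _ (by rwa [List.length_set])]
          exact hp u v hu' hv' huv
    · intro x
      rw [Finset.mem_Icc]
      constructor
      · intro hx
        obtain ⟨B, hB, hxB⟩ := (h.2.2 x).mp (Finset.mem_Icc.mpr ⟨hx.1, by omega⟩)
        obtain ⟨t, ht, rfl⟩ := List.mem_iff_getElem.mp hB
        have hxm : x ≠ m := by omega
        by_cases hti : t = i
        · subst hti
          refine ⟨X, List.mem_iff_getElem.mpr ⟨t, hset_len, List.getElem_set_self _⟩, ?_⟩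
          exact Finset.mem_erase.mpr ⟨hxm, hxB⟩
        · refine ⟨τ[t], List.mem_iff_getElem.mpr ⟨t, by rwa [List.length_set], ?_⟩, hxB⟩
          exact List.getElem_set_of_ne (fun hh => hti hh.symm) _ (by rwa [List.length_set])
      · rintro ⟨B, hB, hxB⟩
        obtain ⟨s, hs, rfl⟩ := List.mem_iff_getElem.mp hB
        rw [List.length_set] at hs
        have hgets := List.getElem_set (l := τ) (i := i) (j := s) (a := X)
          (h := by rwa [List.length_set])
        by_cases hsi : i = s
        · rw [hgets, if_pos hsi] at hxB
          have hxIcc := Finset.mem_Icc.mp ((h.2.2 x).mpr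
            ⟨τ[i], List.getElem_mem hi, Finset.mem_of_mem_erase hxB⟩)
          have : x ≠ m := fun hh => hmX (hh ▸ hxB)
          omega
        · rw [hgets, if_neg hsi] at hxB
          have hxIcc := Finset.mem_Icc.mp ((h.2.2 x).mpr ⟨τ[s], List.getElem_mem hs, hxB⟩)
          have : x ≠ m := by
            rintro rfl
            exact havoid s hs (fun hh => hsi hh.symm) hxB
          omega
    · rw [insertions, Finset.mem_union]
      right
      rw [Finset.mem_image]
      refine ⟨i, Finset.mem_range.mpr (by rwa [List.length_set]), ?_⟩
      rw [hgetD, Finset.insert_erase hmB₀, List.set_set]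
      apply List.ext_getElem (by rw [List.length_set])
      intro t ht1 ht2
      rw [List.getElem_set]
      split
      · next hh => subst hh; rfl
      · rfl

end QF

namespace QF

lemma osp_iff : ∀ (n : ℕ) (ω : List (Finset ℕ)),
    ω ∈ osp n ↔ IsOrderedPartitionOf (Finset.Icc 1 n) ω
  | 0, ω => by
      rw [osp, Finset.mem_singleton]
      constructor
      · rintro rfl
        refine ⟨by simp, by simp, fun x => ?_⟩
        simp only [List.not_mem_nil, false_and, exists_false, iff_false]
        rw [Finset.mem_Icc]
        omega
      · rintro ⟨h1, _, h3⟩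
        cases ω with
        | nil => rfl
        | cons B l =>
            obtain ⟨x, hx⟩ := h1 B (List.mem_cons_self)
            have := (h3 x).mpr ⟨B, List.mem_cons_self, hx⟩
            rw [Finset.mem_Icc] at this
            omega
  | n + 1, τ => by
      rw [osp, Finset.mem_biUnion]
      constructor
      · rintro ⟨ω, hω, hτ⟩
        have hpart := (osp_iff n ω).mp hω
        rw [insertions, Finset.mem_union] at hτ
        rcases hτ with hτ | hτ <;> obtain ⟨j, hj, rfl⟩ := Finset.mem_image.mp hτ <;>
          rw [Finset.mem_range] at hj
        · exact partition_insertIdx hpart (by omega)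
        · exact partition_set hpart hj
      · intro hpart
        obtain ⟨ω, hω, hτ⟩ := exists_preimage hpart
        exact ⟨ω, (osp_iff n ω).mpr hω, hτ⟩

lemma good_of_osp {n : ℕ} {ω : List (Finset ℕ)} (h : ω ∈ osp n) : Good (n + 1) ω :=
  good_of_partition ((osp_iff n ω).mp h)

lemma insertions_pairwiseDisjoint (n : ℕ) :
    (↑(osp n) : Set (List (Finset ℕ))).PairwiseDisjoint (insertions (n + 1)) := by
  intro ω₁ h₁ ω₂ h₂ hne
  have g₁ := good_of_osp h₁
  have g₂ := good_of_osp h₂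
  rw [Function.onFun, Finset.disjoint_left]
  intro τ hτ₁ hτ₂
  rw [insertions, Finset.mem_union] at hτ₁ hτ₂
  apply hne
  rcases hτ₁ with hτ₁ | hτ₁ <;> rcases hτ₂ with hτ₂ | hτ₂ <;>
    obtain ⟨j₁, hj₁, he₁⟩ := Finset.mem_image.mp hτ₁ <;>
    obtain ⟨j₂, hj₂, he₂⟩ := Finset.mem_image.mp hτ₂ <;>
    rw [Finset.mem_range] at hj₁ hj₂
  · exact (insertIdx_inj j₁ j₂ g₁ g₂ (by omega) (by omega) (he₁.trans he₂.symm)).2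
  · exact absurd (he₁.trans he₂.symm) (insertIdx_ne_set j₁ j₂ g₁ g₂ (by omega) hj₂)
  · exact absurd (he₂.trans he₁.symm) (insertIdx_ne_set j₂ j₁ g₂ g₁ (by omega) hj₁)
  · exact set_inj j₁ j₂ g₁ g₂ hj₁ hj₂ (he₁.trans he₂.symm)

variable {R : Type*} [CommSemiring R]

lemma sum_insertions (q : R) {m : ℕ} {ω : List (Finset ℕ)} (hg : Good m ω) (k : ℕ) :
    ∑ τ ∈ (insertions m ω).filter (fun τ => τ.length = k), q ^ invL τ
      = ((if ω.length + 1 = k then qInt q k else 0)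
          + (if ω.length = k then qInt q k else 0)) * q ^ invL ω := by
  classical
  rw [insertions, Finset.filter_union]
  have hdisj : Disjoint
      (((Finset.range (ω.length + 1)).image
        fun j => ω.insertIdx j ({m} : Finset ℕ)).filter (fun τ => τ.length = k))
      (((Finset.range ω.length).image
        fun i => ω.set i (insert m (ω.getD i ∅))).filter (fun τ => τ.length = k)) := by
    rw [Finset.disjoint_left]
    intro τ hτ₁ hτ₂
    obtain ⟨j₁, hj₁, he₁⟩ := Finset.mem_image.mp (Finset.mem_of_mem_filter _ hτ₁)
    obtain ⟨j₂, hj₂, he₂⟩ := Finset.mem_image.mp (Finset.mem_of_mem_filter _ hτ₂)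
    rw [Finset.mem_range] at hj₁ hj₂
    exact insertIdx_ne_set j₁ j₂ hg hg (by omega) hj₂ (he₁.trans he₂.symm)
  rw [Finset.sum_union hdisj]
  have hlen1 : ∀ j ∈ Finset.range (ω.length + 1),
      (ω.insertIdx j ({m} : Finset ℕ)).length = ω.length + 1 := fun j hj =>
    List.length_insertIdx_of_le_length (by simpa [Nat.lt_succ_iff] using hj) _
  have hsum1 : ∑ τ ∈ (((Finset.range (ω.length + 1)).image
      fun j => ω.insertIdx j ({m} : Finset ℕ)).filter (fun τ => τ.length = k)), q ^ invL τ
      = (if ω.length + 1 = k then qInt q k else 0) * q ^ invL ω := by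
    by_cases hk : ω.length + 1 = k
    · rw [if_pos hk, Finset.filter_true_of_mem (fun τ hτ => by
        obtain ⟨j, hj, rfl⟩ := Finset.mem_image.mp hτ
        rw [hlen1 j hj]; exact hk)]
      rw [Finset.sum_image (fun j₁ h₁ j₂ h₂ heq => (insertIdx_inj j₁ j₂ hg hg
        (by simpa [Nat.lt_succ_iff] using h₁) (by simpa [Nat.lt_succ_iff] using h₂) heq).1)]
      have : ∀ j ∈ Finset.range (ω.length + 1),
          q ^ invL (ω.insertIdx j ({m} : Finset ℕ)) = q ^ invL ω * q ^ (ω.length - j) := by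
        intro j hj
        rw [invL_insertIdx j hg (by simpa [Nat.lt_succ_iff] using hj), pow_add]
      rw [Finset.sum_congr rfl this, ← Finset.mul_sum]
      have hrefl : ∑ j ∈ Finset.range (ω.length + 1), q ^ (ω.length - j)
          = qInt q (ω.length + 1) := by
        rw [qInt, ← Finset.sum_range_reflect]
        refine Finset.sum_congr rfl fun j hj => ?_
        congr 1
        rw [Finset.mem_range] at hj
        omega
      rw [hrefl, hk, mul_comm]
    · rw [if_neg hk, Finset.filter_false_of_mem (fun τ hτ => by
        obtain ⟨j, hj, rfl⟩ := Finset.mem_image.mp hτ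
        rw [hlen1 j hj]; exact hk), Finset.sum_empty, zero_mul]
  have hsum2 : ∑ τ ∈ (((Finset.range ω.length).image
      fun i => ω.set i (insert m (ω.getD i ∅))).filter (fun τ => τ.length = k)), q ^ invL τ
      = (if ω.length = k then qInt q k else 0) * q ^ invL ω := by
    by_cases hk : ω.length = k
    · rw [if_pos hk, Finset.filter_true_of_mem (fun τ hτ => by
        obtain ⟨i, hi, rfl⟩ := Finset.mem_image.mp hτ
        rw [List.length_set]; exact hk)]
      rw [Finset.sum_image (fun i₁ h₁ i₂ h₂ heq => set_index_inj i₁ i₂ hg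
        (by simpa using h₁) (by simpa using h₂) heq)]
      have : ∀ i ∈ Finset.range ω.length,
          q ^ invL (ω.set i (insert m (ω.getD i ∅))) = q ^ invL ω * q ^ (ω.length - 1 - i) := by
        intro i hi
        rw [invL_set i hg (by simpa using hi), pow_add]
      rw [Finset.sum_congr rfl this, ← Finset.mul_sum]
      have hrefl : ∑ i ∈ Finset.range ω.length, q ^ (ω.length - 1 - i)
          = qInt q ω.length := by
        rw [qInt, ← Finset.sum_range_reflect]
        refine Finset.sum_congr rfl fun i hi => ?_
        congr 1
        rw [Finset.mem_range] at hi
        omega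
      rw [hrefl, hk, mul_comm]
    · rw [if_neg hk, Finset.filter_false_of_mem (fun τ hτ => by
        obtain ⟨i, hi, rfl⟩ := Finset.mem_image.mp hτ
        rw [List.length_set]; exact hk), Finset.sum_empty, zero_mul]
  rw [hsum1, hsum2, add_mul]

end QF

namespace QF

variable {R : Type*} [CommSemiring R]

lemma qFact_succ (q : R) (k : ℕ) : qFact q (k + 1) = qFact q k * qInt q (k + 1) := by
  rw [qFact, Finset.prod_range_succ, qFact]

lemma master (q : R) : ∀ (n : ℕ) (k : ℕ),
    ∑ ω ∈ (osp n).filter (fun ω => ω.length = k), q ^ invL ω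
      = qFact q k * qStirling q n k
  | 0, 0 => by
      rw [osp]
      simp [Finset.filter_singleton, invL, qFact, qStirling]
  | 0, k + 1 => by
      rw [osp]
      simp [Finset.filter_singleton, qStirling]
  | n + 1, k => by
      have hdisj := insertions_pairwiseDisjoint n
      have step : ∑ ω ∈ (osp (n + 1)).filter (fun ω => ω.length = k), q ^ invL ω
          = ∑ ω ∈ osp n,
              ((if ω.length + 1 = k then qInt q k else 0)
                + (if ω.length = k then qInt q k else 0)) * q ^ invL ω := by
        rw [Finset.sum_filter]
        rw [osp]
        rw [Finset.sum_biUnion hdisj]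
        refine Finset.sum_congr rfl fun ω hω => ?_
        rw [← Finset.sum_filter]
        exact sum_insertions q (good_of_osp hω) k
      rw [step]
      have split : ∑ ω ∈ osp n,
          ((if ω.length + 1 = k then qInt q k else 0)
            + (if ω.length = k then qInt q k else 0)) * q ^ invL ω
          = qInt q k * (∑ ω ∈ (osp n).filter (fun ω => ω.length + 1 = k), q ^ invL ω)
            + qInt q k * (∑ ω ∈ (osp n).filter (fun ω => ω.length = k), q ^ invL ω) := by
        rw [Finset.mul_sum, Finset.mul_sum, Finset.sum_filter, Finset.sum_filter,
          ← Finset.sum_add_distrib]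
        refine Finset.sum_congr rfl fun ω _ => ?_
        rw [add_mul, ite_mul, ite_mul]
        simp
      rw [split]
      cases k with
      | zero =>
          have h0 : qInt q 0 = 0 := by simp [qInt]
          rw [h0]
          simp [qStirling, qFact]
      | succ m =>
          have hfe : (osp n).filter (fun ω => ω.length + 1 = m + 1)
              = (osp n).filter (fun ω => ω.length = m) := by
            refine Finset.filter_congr fun ω _ => ?_
            simp
          rw [hfe, master q n m, master q n (m + 1)]
          show qInt q (m + 1) * (qFact q m * qStirling q n m)
              + qInt q (m + 1) * (qFact q (m + 1) * qStirling q n (m + 1))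
            = qFact q (m + 1) * qStirling q (n + 1) (m + 1)
          rw [qStirling, qFact_succ]
          ring

end QF

/-- The q-Fubini number `F_{n,q} = ∑_{k=0}^n [k]!_q {n brace k}_q` equals the inversion
generating polynomial over all ordered set partitions of `{1, …, n}`. -/
theorem qFubini_eq_sum_invStar (n : ℕ) :
    (∑ k ∈ Finset.range (n + 1),
        qFact (Polynomial.X : Polynomial ℚ) k * qStirling (Polynomial.X : Polynomial ℚ) n k)
      = ∑ᶠ ω ∈ {ω : List (Finset ℕ) | IsOrderedPartitionOf (Finset.Icc 1 n) ω},
          (Polynomial.X : Polynomial ℚ) ^ invStar ω := by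
  have hset : {ω : List (Finset ℕ) | IsOrderedPartitionOf (Finset.Icc 1 n) ω}
      = (↑(QF.osp n) : Set (List (Finset ℕ))) := by
    ext ω
    simp only [Set.mem_setOf_eq, Finset.coe_sort_coe, Finset.mem_coe]
    exact (QF.osp_iff n ω).symm
  rw [hset, finsum_mem_coe_finset]
  have hmaps : ∀ ω ∈ QF.osp n, ω.length ∈ Finset.range (n + 1) := fun ω hω =>
    Finset.mem_range.mpr (Nat.lt_succ_of_le (QF.length_le_of_mem_osp hω))
  rw [← Finset.sum_fiberwise_of_maps_to hmaps
    (fun ω => (Polynomial.X : Polynomial ℚ) ^ invStar ω)]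
  refine Finset.sum_congr rfl fun k _ => ?_
  rw [← QF.master (Polynomial.X : Polynomial ℚ) n k]
  exact Finset.sum_congr rfl fun ω _ => by rw [QF.invStar_eq_invL]
end

section
/- For all n, k ≥ 0, [k]!_q · {n brace k}_q = ∑_{ω} q^{Inv*(ω)}, where the sum runs over all ordered set partitions ω of {1, …, n} into exactly k blocks. -/
open Finset Polynomial

def inv2 (B C : Finset ℕ) : ℕ := (B.filter (fun b => ∃ c ∈ C, c < b)).card

lemma invStar_eq (ω : List (Finset ℕ)) :
    invStar ω = ∑ i ∈ range ω.length, ∑ j ∈ range ω.length,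
      if i < j then inv2 (ω.getD i ∅) (ω.getD j ∅) else 0 := by
  rw [invStar, Finset.sum_filter, Finset.sum_product]; rfl

lemma mapsum_eq (f : Finset ℕ → ℕ) (l : List (Finset ℕ)) :
    (l.map f).sum = ∑ j ∈ range l.length, f (l.getD j ∅) := by
  induction l with
  | nil => simp
  | cons B ω ih =>
      simp only [List.map_cons, List.sum_cons, List.length_cons, Finset.sum_range_succ']
      simp [ih, Nat.add_comm]

lemma invStar_nil : invStar ([] : List (Finset ℕ)) = 0 := by simp [invStar]

lemma invStar_cons (B : Finset ℕ) (ω : List (Finset ℕ)) :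
    invStar (B :: ω) = (ω.map (inv2 B)).sum + invStar ω := by
  rw [invStar_eq, invStar_eq, mapsum_eq]
  simp only [List.length_cons]
  rw [Finset.sum_range_succ']
  have h0 : ∑ j ∈ range (ω.length + 1),
      (if 0 < j then inv2 ((B :: ω).getD 0 ∅) ((B :: ω).getD j ∅) else 0)
      = ∑ j ∈ range ω.length, inv2 B (ω.getD j ∅) := by
    rw [Finset.sum_range_succ']
    simp
  rw [h0, Nat.add_comm]
  congr 1
  refine Finset.sum_congr rfl fun i _ => ?_
  rw [Finset.sum_range_succ']
  simp [Nat.succ_lt_succ_iff]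

lemma inv2_singleton_right {B : Finset ℕ} {x : ℕ} (h : ∀ b ∈ B, b < x) :
    inv2 B {x} = 0 := by
  rw [inv2, Finset.card_eq_zero, Finset.filter_eq_empty_iff]
  intro b hb
  simp only [Finset.mem_singleton]
  rintro ⟨c, rfl, hc⟩
  exact absurd hc (not_lt.2 (h b hb).le)

lemma inv2_singleton_left {C : Finset ℕ} {x : ℕ} (hC : C.Nonempty) (h : ∀ c ∈ C, c < x) :
    inv2 {x} C = 1 := by
  rw [inv2]
  obtain ⟨c, hc⟩ := hC
  rw [Finset.filter_eq_self.2 (by simp only [Finset.mem_singleton]; rintro b rfl; exact ⟨c, hc, h c hc⟩)]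
  simp

lemma inv2_insert_right {B C : Finset ℕ} {x : ℕ} (h : ∀ b ∈ B, b < x) :
    inv2 B (insert x C) = inv2 B C := by
  unfold inv2
  congr 1
  refine Finset.filter_congr fun b hb => ?_
  simp only [Finset.mem_insert]
  constructor
  · rintro ⟨c, (rfl | hc), hcb⟩
    · exact absurd hcb (not_lt.2 (h b hb).le)
    · exact ⟨c, hc, hcb⟩
  · rintro ⟨c, hc, hcb⟩; exact ⟨c, Or.inr hc, hcb⟩

lemma inv2_insert_left {B C : Finset ℕ} {x : ℕ} (hx : x ∉ B) (hC : C.Nonempty)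
    (h : ∀ c ∈ C, c < x) : inv2 (insert x B) C = inv2 B C + 1 := by
  obtain ⟨c, hc⟩ := hC
  rw [inv2, Finset.filter_insert, if_pos ⟨c, hc, h c hc⟩,
    Finset.card_insert_of_notMem (fun hmem => hx (Finset.mem_of_mem_filter x hmem))]
  rfl

def insNew (x : ℕ) : ℕ → List (Finset ℕ) → List (Finset ℕ)
  | 0, ω => {x} :: ω
  | _ + 1, [] => [{x}]
  | i + 1, B :: ω => B :: insNew x i ω

def insOld (x : ℕ) : ℕ → List (Finset ℕ) → List (Finset ℕ)
  | _, [] => []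
  | 0, B :: ω => insert x B :: ω
  | i + 1, B :: ω => B :: insOld x i ω

lemma insNew_perm (x : ℕ) : ∀ (i : ℕ) (ω : List (Finset ℕ)), i ≤ ω.length →
    (insNew x i ω).Perm ({x} :: ω)
  | 0, ω, _ => List.Perm.refl _
  | i + 1, B :: ω, h => by
      simpa [insNew] using ((insNew_perm x i ω (Nat.succ_le_succ_iff.1 h)).cons B).trans
        (List.Perm.swap _ _ _)

lemma length_insNew (x : ℕ) : ∀ (i : ℕ) (ω : List (Finset ℕ)), i ≤ ω.length →
    (insNew x i ω).length = ω.length + 1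
  | 0, ω, _ => rfl
  | i + 1, B :: ω, h => by
      simp [insNew, length_insNew x i ω (Nat.succ_le_succ_iff.1 h)]

lemma length_insOld (x : ℕ) : ∀ (i : ℕ) (ω : List (Finset ℕ)),
    (insOld x i ω).length = ω.length
  | _, [] => by simp [insOld]
  | 0, B :: ω => rfl
  | i + 1, B :: ω => by simp [insOld, length_insOld x i ω]

lemma insOld_perm (x : ℕ) : ∀ (i : ℕ) (ω : List (Finset ℕ)), i < ω.length →
    (insOld x i ω).Perm (insert x (ω.getD i ∅) :: ω.eraseIdx i)
  | 0, B :: ω, _ => by simp [insOld]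
  | i + 1, B :: ω, h => by
      simpa [insOld] using ((insOld_perm x i ω (Nat.succ_lt_succ_iff.1 h)).cons B).trans
        (List.Perm.swap _ _ _)

lemma getD_cons_eraseIdx : ∀ (i : ℕ) (ω : List (Finset ℕ)), i < ω.length →
    ω.Perm (ω.getD i ∅ :: ω.eraseIdx i)
  | 0, B :: ω, _ => by simp
  | i + 1, B :: ω, h => by
      simpa using ((getD_cons_eraseIdx i ω (Nat.succ_lt_succ_iff.1 h)).cons B).trans
        (List.Perm.swap _ _ _)

lemma mapsum_insNew (B : Finset ℕ) (x i : ℕ) (ω : List (Finset ℕ)) (hB : ∀ b ∈ B, b < x)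
    (hi : i ≤ ω.length) :
    ((insNew x i ω).map (inv2 B)).sum = (ω.map (inv2 B)).sum := by
  rw [((insNew_perm x i ω hi).map (inv2 B)).sum_eq]
  simp [inv2_singleton_right hB]

lemma mapsum_insOld (B : Finset ℕ) (x : ℕ) (ω : List (Finset ℕ)) (hB : ∀ b ∈ B, b < x) :
    ∀ i, ((insOld x i ω).map (inv2 B)).sum = (ω.map (inv2 B)).sum := by
  induction ω with
  | nil => intro i; simp [insOld]
  | cons C σ ih =>
      intro i
      cases i with
      | zero => simp [insOld, inv2_insert_right hB]
      | succ i => simp [insOld, ih i]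

lemma sum_map_add_one (f : Finset ℕ → ℕ) (l : List (Finset ℕ)) :
    (l.map fun C => f C + 1).sum = (l.map f).sum + l.length := by
  induction l with
  | nil => simp
  | cons C σ ih => simp [ih]; omega

lemma invStar_insNew (x : ℕ) (ω : List (Finset ℕ)) :
    ∀ i, i ≤ ω.length → (∀ B ∈ ω, B.Nonempty) → (∀ B ∈ ω, ∀ b ∈ B, b < x) →
    invStar (insNew x i ω) = invStar ω + (ω.length - i) := by
  induction ω with
  | nil =>
      intro i hi _ _
      obtain rfl : i = 0 := Nat.le_zero.1 hi
      simp [insNew, invStar_cons, invStar_nil]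
  | cons B σ ih =>
      intro i hi hne hlt
      cases i with
      | zero =>
          show invStar ({x} :: B :: σ) = _
          rw [invStar_cons]
          have hmap : (B :: σ).map (inv2 {x}) = (B :: σ).map (fun _ => 1) :=
            List.map_congr_left fun C hC =>
              inv2_singleton_left (hne C hC) (hlt C hC)
          rw [hmap]
          simp [List.map_const', Nat.add_comm]
      | succ i =>
          show invStar (B :: insNew x i σ) = _
          have hi' : i ≤ σ.length := Nat.succ_le_succ_iff.1 hi
          rw [invStar_cons, invStar_cons,
            mapsum_insNew B x i σ (hlt B (List.mem_cons_self)) hi',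
            ih i hi' (fun C hC => hne C (List.mem_cons_of_mem B hC))
              (fun C hC => hlt C (List.mem_cons_of_mem B hC))]
          simp only [List.length_cons]
          omega

lemma invStar_insOld (x : ℕ) (ω : List (Finset ℕ)) :
    ∀ i, i < ω.length → (∀ B ∈ ω, B.Nonempty) → (∀ B ∈ ω, ∀ b ∈ B, b < x) →
    invStar (insOld x i ω) = invStar ω + (ω.length - 1 - i) := by
  induction ω with
  | nil => intro i hi; exact absurd hi (by simp)
  | cons B σ ih =>
      intro i hi hne hlt
      cases i with
      | zero =>
          show invStar (insert x B :: σ) = _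
          rw [invStar_cons, invStar_cons]
          have hmap : σ.map (inv2 (insert x B)) = σ.map (fun C => inv2 B C + 1) :=
            List.map_congr_left fun C hC =>
              inv2_insert_left (fun hxB => lt_irrefl x (hlt B (List.mem_cons_self) x hxB))
                (hne C (List.mem_cons_of_mem B hC))
                (fun c hc => hlt C (List.mem_cons_of_mem B hC) c hc)
          rw [hmap, sum_map_add_one]
          simp only [List.length_cons]
          omega
      | succ i =>
          show invStar (B :: insOld x i σ) = _
          have hi' : i < σ.length := Nat.succ_lt_succ_iff.1 hi
          rw [invStar_cons, invStar_cons,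
            mapsum_insOld B x σ (hlt B (List.mem_cons_self)) i,
            ih i hi' (fun C hC => hne C (List.mem_cons_of_mem B hC))
              (fun C hC => hlt C (List.mem_cons_of_mem B hC))]
          simp only [List.length_cons]
          omega

lemma isOP_perm {S : Finset ℕ} {ω ω' : List (Finset ℕ)} (h : ω.Perm ω')
    (hop : IsOrderedPartitionOf S ω) : IsOrderedPartitionOf S ω' := by
  obtain ⟨h1, h2, h3⟩ := hop
  refine ⟨fun B hB => h1 B (h.mem_iff.2 hB),
    (h.pairwise_iff (fun {a b} hd => hd.symm)).1 h2, fun y => (h3 y).trans ?_⟩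
  constructor
  · rintro ⟨B, hB, hyB⟩; exact ⟨B, h.mem_iff.1 hB, hyB⟩
  · rintro ⟨B, hB, hyB⟩; exact ⟨B, h.mem_iff.2 hB, hyB⟩

lemma blocks_subset {S : Finset ℕ} {ω : List (Finset ℕ)} (h : IsOrderedPartitionOf S ω) :
    ∀ B ∈ ω, ∀ b ∈ B, b ∈ S := fun B hB b hb => (h.2.2 b).2 ⟨B, hB, hb⟩

lemma isOP_insNew {S : Finset ℕ} {x : ℕ} {ω : List (Finset ℕ)} {i : ℕ}
    (h : IsOrderedPartitionOf S ω) (hx : x ∉ S) (hi : i ≤ ω.length) :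
    IsOrderedPartitionOf (insert x S) (insNew x i ω) := by
  apply isOP_perm (insNew_perm x i ω hi).symm
  obtain ⟨h1, h2, h3⟩ := h
  have hxB : ∀ B ∈ ω, x ∉ B := fun B hB hxB => hx ((h3 x).2 ⟨B, hB, hxB⟩)
  refine ⟨?_, ?_, fun y => ?_⟩
  · rintro B hB
    rcases List.mem_cons.1 hB with rfl | hB
    · exact Finset.singleton_nonempty x
    · exact h1 B hB
  · exact List.pairwise_cons.2
      ⟨fun B hB => Finset.disjoint_singleton_left.2 (hxB B hB), h2⟩
  · constructor
    · intro hy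
      rcases Finset.mem_insert.1 hy with hyx | hy
      · exact ⟨{x}, List.mem_cons_self, by simp [hyx]⟩
      · obtain ⟨B, hB, hyB⟩ := (h3 y).1 hy
        exact ⟨B, List.mem_cons_of_mem _ hB, hyB⟩
    · rintro ⟨B, hB, hyB⟩
      rcases List.mem_cons.1 hB with rfl | hB
      · exact Finset.mem_insert.2 (Or.inl (Finset.mem_singleton.1 hyB))
      · exact Finset.mem_insert_of_mem ((h3 y).2 ⟨B, hB, hyB⟩)

lemma isOP_insOld {S : Finset ℕ} {x : ℕ} {ω : List (Finset ℕ)} {i : ℕ}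
    (h : IsOrderedPartitionOf S ω) (hx : x ∉ S) (hi : i < ω.length) :
    IsOrderedPartitionOf (insert x S) (insOld x i ω) := by
  apply isOP_perm (insOld_perm x i ω hi).symm
  have h' := isOP_perm (getD_cons_eraseIdx i ω hi) h
  obtain ⟨h1, h2, h3⟩ := h'
  have hxB : ∀ B ∈ (ω.getD i ∅ :: ω.eraseIdx i), x ∉ B :=
    fun B hB hxB => hx ((h3 x).2 ⟨B, hB, hxB⟩)
  refine ⟨?_, ?_, fun y => ?_⟩
  · rintro B hB
    rcases List.mem_cons.1 hB with rfl | hB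
    · exact Finset.insert_nonempty _ _
    · exact h1 B (List.mem_cons_of_mem _ hB)
  · refine List.pairwise_cons.2 ⟨fun B hB => ?_, (List.pairwise_cons.1 h2).2⟩
    rw [Finset.disjoint_insert_left]
    exact ⟨hxB B (List.mem_cons_of_mem _ hB), (List.pairwise_cons.1 h2).1 B hB⟩
  · constructor
    · intro hy
      rcases Finset.mem_insert.1 hy with hyx | hy
      · exact ⟨_, List.mem_cons_self, by simp [hyx]⟩
      · obtain ⟨B, hB, hyB⟩ := (h3 y).1 hy
        rcases List.mem_cons.1 hB with rfl | hB
        · exact ⟨_, List.mem_cons_self, Finset.mem_insert_of_mem hyB⟩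
        · exact ⟨B, List.mem_cons_of_mem _ hB, hyB⟩
    · rintro ⟨B, hB, hyB⟩
      rcases List.mem_cons.1 hB with rfl | hB
      · rcases Finset.mem_insert.1 hyB with hyx | hyB
        · exact Finset.mem_insert.2 (Or.inl hyx)
        · exact Finset.mem_insert_of_mem ((h3 y).2 ⟨_, List.mem_cons_self, hyB⟩)
      · exact Finset.mem_insert_of_mem ((h3 y).2 ⟨B, List.mem_cons_of_mem _ hB, hyB⟩)

lemma isOP_shrink_new {S : Finset ℕ} {x : ℕ} {ω : List (Finset ℕ)}
    (h : IsOrderedPartitionOf (insert x S) ({x} :: ω)) (hx : x ∉ S) :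
    IsOrderedPartitionOf S ω := by
  obtain ⟨h1, h2, h3⟩ := h
  have hxB : ∀ B ∈ ω, x ∉ B := fun B hB =>
    Finset.disjoint_singleton_left.1 ((List.pairwise_cons.1 h2).1 B hB)
  refine ⟨fun B hB => h1 B (List.mem_cons_of_mem _ hB), (List.pairwise_cons.1 h2).2,
    fun y => ?_⟩
  constructor
  · intro hy
    obtain ⟨B, hB, hyB⟩ := (h3 y).1 (Finset.mem_insert_of_mem hy)
    rcases List.mem_cons.1 hB with rfl | hB
    · exact absurd (Finset.mem_singleton.1 hyB ▸ hy) hx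
    · exact ⟨B, hB, hyB⟩
  · rintro ⟨B, hB, hyB⟩
    have hy : y ∈ insert x S := (h3 y).2 ⟨B, List.mem_cons_of_mem _ hB, hyB⟩
    rcases Finset.mem_insert.1 hy with rfl | hy
    · exact absurd hyB (hxB B hB)
    · exact hy

lemma isOP_shrink_old {S : Finset ℕ} {x : ℕ} {B : Finset ℕ} {ω : List (Finset ℕ)}
    (h : IsOrderedPartitionOf (insert x S) (B :: ω)) (hx : x ∉ S) (hxB : x ∈ B)
    (hne : (B.erase x).Nonempty) : IsOrderedPartitionOf S (B.erase x :: ω) := by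
  obtain ⟨h1, h2, h3⟩ := h
  have hxC : ∀ C ∈ ω, x ∉ C := fun C hC hxC =>
    Finset.disjoint_left.1 ((List.pairwise_cons.1 h2).1 C hC) hxB hxC
  refine ⟨?_, ?_, fun y => ?_⟩
  · rintro C hC
    rcases List.mem_cons.1 hC with rfl | hC
    · exact hne
    · exact h1 C (List.mem_cons_of_mem _ hC)
  · exact List.pairwise_cons.2
      ⟨fun C hC => ((List.pairwise_cons.1 h2).1 C hC).mono_left (Finset.erase_subset x B),
        (List.pairwise_cons.1 h2).2⟩
  · constructor
    · intro hy
      obtain ⟨C, hC, hyC⟩ := (h3 y).1 (Finset.mem_insert_of_mem hy)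
      rcases List.mem_cons.1 hC with rfl | hC
      · exact ⟨C.erase x, List.mem_cons_self,
          Finset.mem_erase.2 ⟨fun hyx => hx (hyx ▸ hy), hyC⟩⟩
      · exact ⟨C, List.mem_cons_of_mem _ hC, hyC⟩
    · rintro ⟨C, hC, hyC⟩
      rcases List.mem_cons.1 hC with rfl | hC
      · have hy := (h3 y).2 ⟨B, List.mem_cons_self, Finset.mem_of_mem_erase hyC⟩
        rcases Finset.mem_insert.1 hy with hyx | hy
        · exact absurd hyx (Finset.mem_erase.1 hyC).1
        · exact hy
      · have hy := (h3 y).2 ⟨C, List.mem_cons_of_mem _ hC, hyC⟩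
        rcases Finset.mem_insert.1 hy with hyx | hy
        · exact absurd (hyx ▸ hyC) (hxC C hC)
        · exact hy

lemma findIdx_insNew (x : ℕ) : ∀ (i : ℕ) (ω : List (Finset ℕ)), i ≤ ω.length →
    (∀ B ∈ ω, x ∉ B) → (insNew x i ω).findIdx (fun B => decide (x ∈ B)) = i
  | 0, ω, _, _ => by simp [insNew, List.findIdx_cons]
  | i + 1, [], h, _ => absurd h (by simp)
  | i + 1, B :: ω, h, hB => by
      have : x ∉ B := hB B (List.mem_cons_self)
      simp only [insNew, List.findIdx_cons, this, decide_false, cond_false]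
      rw [findIdx_insNew x i ω (Nat.succ_le_succ_iff.1 h)
        (fun C hC => hB C (List.mem_cons_of_mem _ hC))]

lemma eraseIdx_insNew (x : ℕ) : ∀ (i : ℕ) (ω : List (Finset ℕ)), i ≤ ω.length →
    (insNew x i ω).eraseIdx i = ω
  | 0, ω, _ => rfl
  | i + 1, [], h => absurd h (by simp)
  | i + 1, B :: ω, h => by
      simp only [insNew, List.eraseIdx_cons_succ, List.cons.injEq, true_and]
      exact eraseIdx_insNew x i ω (Nat.succ_le_succ_iff.1 h)

lemma insNew_reconstruct (x : ℕ) : ∀ (i : ℕ) (ω : List (Finset ℕ)), i < ω.length →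
    ω.getD i ∅ = {x} → insNew x i (ω.eraseIdx i) = ω
  | 0, B :: ω, _, hg => by
      simp only [List.getD_cons_zero] at hg
      simp [insNew, hg]
  | i + 1, B :: ω, h, hg => by
      simp only [List.getD_cons_succ] at hg
      simp only [List.eraseIdx_cons_succ, insNew, List.cons.injEq, true_and]
      exact insNew_reconstruct x i ω (Nat.succ_lt_succ_iff.1 h) hg

lemma findIdx_insOld (x : ℕ) : ∀ (i : ℕ) (ω : List (Finset ℕ)), i < ω.length →
    (∀ B ∈ ω, x ∉ B) → (insOld x i ω).findIdx (fun B => decide (x ∈ B)) = i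
  | 0, B :: ω, _, _ => by simp [insOld, List.findIdx_cons]
  | i + 1, B :: ω, h, hB => by
      have : x ∉ B := hB B (List.mem_cons_self)
      simp only [insOld, List.findIdx_cons, this, decide_false, cond_false]
      rw [findIdx_insOld x i ω (Nat.succ_lt_succ_iff.1 h)
        (fun C hC => hB C (List.mem_cons_of_mem _ hC))]

lemma set_erase_insOld (x : ℕ) : ∀ (i : ℕ) (ω : List (Finset ℕ)), i < ω.length →
    (∀ B ∈ ω, x ∉ B) →
    (insOld x i ω).set i (((insOld x i ω).getD i ∅).erase x) = ω
  | 0, B :: ω, _, hB => by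
      simp [insOld, Finset.erase_insert (hB B (List.mem_cons_self))]
  | i + 1, B :: ω, h, hB => by
      simp only [insOld, List.getD_cons_succ, List.set_cons_succ, List.cons.injEq, true_and]
      exact set_erase_insOld x i ω (Nat.succ_lt_succ_iff.1 h)
        (fun C hC => hB C (List.mem_cons_of_mem _ hC))

lemma insOld_reconstruct (x : ℕ) : ∀ (i : ℕ) (ω : List (Finset ℕ)), i < ω.length →
    x ∈ ω.getD i ∅ → insOld x i (ω.set i ((ω.getD i ∅).erase x)) = ω
  | 0, B :: ω, _, hx => by
      simp only [List.getD_cons_zero] at hx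
      simp [insOld, Finset.insert_erase hx]
  | i + 1, B :: ω, h, hx => by
      simp only [List.getD_cons_succ] at hx
      simp only [List.getD_cons_succ, List.set_cons_succ, insOld, List.cons.injEq, true_and]
      exact insOld_reconstruct x i ω (Nat.succ_lt_succ_iff.1 h) hx

lemma getD_insOld (x : ℕ) : ∀ (i : ℕ) (ω : List (Finset ℕ)), i < ω.length →
    (insOld x i ω).getD i ∅ = insert x (ω.getD i ∅)
  | 0, B :: ω, _ => rfl
  | i + 1, B :: ω, h => by
      simpa [insOld] using getD_insOld x i ω (Nat.succ_lt_succ_iff.1 h)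

lemma osp_finite (S : Finset ℕ) (k : ℕ) :
    {ω : List (Finset ℕ) | IsOrderedPartitionOf S ω ∧ ω.length = k}.Finite := by
  have h1 : {l : List {B : Finset ℕ // B ∈ S.powerset} | l.length = k}.Finite :=
    List.finite_length_eq _ k
  apply Set.Finite.subset (h1.image (List.map Subtype.val))
  rintro ω ⟨hop, hlen⟩
  have hsub : ∀ B ∈ ω, B ∈ S.powerset := fun B hB =>
    Finset.mem_powerset.2 (fun y hy => blocks_subset hop B hB y hy)
  refine ⟨ω.attach.map (fun b => ⟨b.1, hsub b.1 b.2⟩), by simp [hlen], ?_⟩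
  simp only [List.map_map]
  exact (List.attach_map_val (l := ω)).trans (List.map_id ω)

noncomputable def ospF (n k : ℕ) : Finset (List (Finset ℕ)) :=
  (osp_finite (Finset.Icc 1 n) k).toFinset

lemma mem_ospF {n k : ℕ} {ω : List (Finset ℕ)} :
    ω ∈ ospF n k ↔ IsOrderedPartitionOf (Finset.Icc 1 n) ω ∧ ω.length = k :=
  Set.Finite.mem_toFinset _

noncomputable def Fpoly (n k : ℕ) : Polynomial ℚ :=
  ∑ ω ∈ ospF n k, (Polynomial.X : Polynomial ℚ) ^ invStar ω

lemma Icc_succ_eq (n : ℕ) : Finset.Icc 1 (n + 1) = insert (n + 1) (Finset.Icc 1 n) := by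
  ext y; simp only [Finset.mem_Icc, Finset.mem_insert]; omega

lemma fresh_of_isOP {n : ℕ} {ω : List (Finset ℕ)} (h : IsOrderedPartitionOf (Finset.Icc 1 n) ω) :
    ∀ B ∈ ω, ∀ b ∈ B, b < n + 1 := by
  intro B hB b hb
  have := blocks_subset h B hB b hb
  rw [Finset.mem_Icc] at this
  omega

lemma getD_mem {l : List (Finset ℕ)} {i : ℕ} (h : i < l.length) : l.getD i ∅ ∈ l := by
  rw [List.getD_eq_getElem _ _ h]
  exact List.getElem_mem h

lemma set_perm (C : Finset ℕ) : ∀ (i : ℕ) (ω : List (Finset ℕ)), i < ω.length →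
    (ω.set i C).Perm (C :: ω.eraseIdx i)
  | 0, B :: ω, _ => by simp
  | i + 1, B :: ω, h => by
      simpa using ((set_perm C i ω (Nat.succ_lt_succ_iff.1 h)).cons B).trans
        (List.Perm.swap _ _ _)

lemma findIdx_lt {n : ℕ} {ω : List (Finset ℕ)}
    (hop : IsOrderedPartitionOf (Finset.Icc 1 (n + 1)) ω) :
    ω.findIdx (fun B => decide ((n + 1) ∈ B)) < ω.length := by
  apply List.findIdx_lt_length_of_exists
  obtain ⟨B, hB, hxB⟩ := (hop.2.2 (n + 1)).1 (by simp [Finset.mem_Icc])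
  exact ⟨B, hB, by simpa⟩

lemma mem_getD_findIdx {n : ℕ} {ω : List (Finset ℕ)}
    (hop : IsOrderedPartitionOf (Finset.Icc 1 (n + 1)) ω) :
    (n + 1) ∈ ω.getD (ω.findIdx (fun B => decide ((n + 1) ∈ B))) ∅ := by
  have h := findIdx_lt hop
  have := List.findIdx_getElem (w := h)
  rw [List.getD_eq_getElem _ _ h]
  simpa using this

lemma getD_eq_singleton {n : ℕ} {ω : List (Finset ℕ)}
    (hop : IsOrderedPartitionOf (Finset.Icc 1 (n + 1)) ω)
    (hP : ({n + 1} : Finset ℕ) ∈ ω) :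
    ω.getD (ω.findIdx (fun B => decide ((n + 1) ∈ B))) ∅ = {n + 1} := by
  obtain ⟨j, hj, hωj⟩ := List.getElem_of_mem hP
  have hi := findIdx_lt hop
  have hx : (n + 1) ∈ ω.getD (ω.findIdx (fun B => decide ((n + 1) ∈ B))) ∅ :=
    mem_getD_findIdx hop
  rw [List.getD_eq_getElem _ _ hi] at hx ⊢
  rcases eq_or_ne (ω.findIdx (fun B => decide ((n + 1) ∈ B))) j with rfl | hne
  · exact hωj
  · exfalso
    have hdisj : Disjoint ω[ω.findIdx (fun B => decide ((n + 1) ∈ B))] ω[j] := by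
      rcases lt_or_gt_of_ne hne with h | h
      · exact List.pairwise_iff_getElem.1 hop.2.1 _ _ hi hj h
      · exact (List.pairwise_iff_getElem.1 hop.2.1 _ _ hj hi h).symm
    exact Finset.disjoint_left.1 hdisj hx (hωj ▸ Finset.mem_singleton_self _)

lemma erase_getD_nonempty {n : ℕ} {ω : List (Finset ℕ)}
    (hop : IsOrderedPartitionOf (Finset.Icc 1 (n + 1)) ω)
    (hnP : ({n + 1} : Finset ℕ) ∉ ω) :
    ((ω.getD (ω.findIdx (fun B => decide ((n + 1) ∈ B))) ∅).erase (n + 1)).Nonempty := by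
  have hi := findIdx_lt hop
  have hx := mem_getD_findIdx hop
  rw [Finset.nonempty_iff_ne_empty]
  intro hemp
  rcases (Finset.erase_eq_empty_iff _ _).1 hemp with h | h
  · rw [h] at hx; exact absurd hx (Finset.notMem_empty _)
  · exact hnP (h ▸ getD_mem hi)

lemma sumA (n k : ℕ) :
    ∑ p ∈ Finset.range (k + 1) ×ˢ ospF n k,
        (Polynomial.X : Polynomial ℚ) ^ (invStar p.2 + (k - p.1))
      = ∑ ω ∈ (ospF (n + 1) (k + 1)).filter (fun ω => ({n + 1} : Finset ℕ) ∈ ω),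
        (Polynomial.X : Polynomial ℚ) ^ invStar ω := by
  have hxS : (n + 1) ∉ Finset.Icc 1 n := by simp
  refine Finset.sum_nbij' (fun p => insNew (n + 1) p.1 p.2)
    (fun ω => (ω.findIdx (fun B => decide ((n + 1) ∈ B)),
      ω.eraseIdx (ω.findIdx (fun B => decide ((n + 1) ∈ B))))) ?_ ?_ ?_ ?_ ?_
  · rintro ⟨i, ω⟩ hp
    simp only [Finset.mem_product, Finset.mem_range, mem_ospF] at hp
    obtain ⟨hi, hop, hlen⟩ := hp
    have hik : i ≤ ω.length := by omega
    rw [Finset.mem_filter, mem_ospF]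
    refine ⟨⟨?_, ?_⟩, ?_⟩
    · rw [Icc_succ_eq]; exact isOP_insNew hop hxS hik
    · rw [length_insNew _ _ _ hik, hlen]
    · exact (insNew_perm _ _ _ hik).mem_iff.2 (List.mem_cons_self)
  · intro ω hω
    rw [Finset.mem_filter, mem_ospF] at hω
    obtain ⟨⟨hop, hlen⟩, hP⟩ := hω
    have hi := findIdx_lt hop
    simp only [Finset.mem_product, Finset.mem_range, mem_ospF]
    refine ⟨by omega, ?_, ?_⟩
    · have hperm := getD_cons_eraseIdx _ ω hi
      have hsing := getD_eq_singleton hop hP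
      have h2 : IsOrderedPartitionOf (Finset.Icc 1 (n + 1))
          (({n + 1} : Finset ℕ) :: ω.eraseIdx (ω.findIdx (fun B => decide ((n + 1) ∈ B)))) := by
        rw [← hsing]; exact isOP_perm hperm hop
      rw [Icc_succ_eq] at h2
      exact isOP_shrink_new h2 hxS
    · rw [List.length_eraseIdx, if_pos hi, hlen]
      omega
  · rintro ⟨i, ω⟩ hp
    simp only [Finset.mem_product, Finset.mem_range, mem_ospF] at hp
    obtain ⟨hi, hop, hlen⟩ := hp
    have hik : i ≤ ω.length := by omega
    have hxnot : ∀ B ∈ ω, (n + 1) ∉ B := fun B hB hx =>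
      lt_irrefl _ (fresh_of_isOP hop B hB _ hx)
    simp only
    rw [findIdx_insNew _ _ _ hik hxnot, eraseIdx_insNew _ _ _ hik]
  · intro ω hω
    rw [Finset.mem_filter, mem_ospF] at hω
    obtain ⟨⟨hop, hlen⟩, hP⟩ := hω
    exact insNew_reconstruct _ _ _ (findIdx_lt hop) (getD_eq_singleton hop hP)
  · rintro ⟨i, ω⟩ hp
    simp only [Finset.mem_product, Finset.mem_range, mem_ospF] at hp
    obtain ⟨hi, hop, hlen⟩ := hp
    have hik : i ≤ ω.length := by omega
    simp only
    rw [invStar_insNew (n + 1) ω i hik hop.1 (fresh_of_isOP hop), hlen]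

lemma sumB (n k : ℕ) :
    ∑ p ∈ Finset.range (k + 1) ×ˢ ospF n (k + 1),
        (Polynomial.X : Polynomial ℚ) ^ (invStar p.2 + (k - p.1))
      = ∑ ω ∈ (ospF (n + 1) (k + 1)).filter (fun ω => ({n + 1} : Finset ℕ) ∉ ω),
        (Polynomial.X : Polynomial ℚ) ^ invStar ω := by
  have hxS : (n + 1) ∉ Finset.Icc 1 n := by simp
  refine Finset.sum_nbij' (fun p => insOld (n + 1) p.1 p.2)
    (fun ω => (ω.findIdx (fun B => decide ((n + 1) ∈ B)),
      ω.set (ω.findIdx (fun B => decide ((n + 1) ∈ B)))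
        ((ω.getD (ω.findIdx (fun B => decide ((n + 1) ∈ B))) ∅).erase (n + 1)))) ?_ ?_ ?_ ?_ ?_
  · rintro ⟨i, ω⟩ hp
    simp only [Finset.mem_product, Finset.mem_range, mem_ospF] at hp
    obtain ⟨hi, hop, hlen⟩ := hp
    have hik : i < ω.length := by omega
    have hxnot : ∀ B ∈ ω, (n + 1) ∉ B := fun B hB hx =>
      lt_irrefl _ (fresh_of_isOP hop B hB _ hx)
    rw [Finset.mem_filter, mem_ospF]
    refine ⟨⟨?_, ?_⟩, ?_⟩
    · rw [Icc_succ_eq]; exact isOP_insOld hop hxS hik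
    · rw [length_insOld, hlen]
    · intro hmem
      rw [(insOld_perm _ _ _ hik).mem_iff] at hmem
      rcases List.mem_cons.1 hmem with heq | hmem2
      · obtain ⟨b, hb⟩ := hop.1 _ (getD_mem hik)
        have hbmem : b ∈ insert (n + 1) (ω.getD i ∅) := Finset.mem_insert_of_mem hb
        rw [← heq, Finset.mem_singleton] at hbmem
        exact lt_irrefl _ (hbmem ▸ fresh_of_isOP hop _ (getD_mem hik) b hb)
      · have : ({n + 1} : Finset ℕ) ∈ ω := (List.eraseIdx_sublist ω i).mem hmem2
        exact hxnot _ this (Finset.mem_singleton_self _)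
  · intro ω hω
    rw [Finset.mem_filter, mem_ospF] at hω
    obtain ⟨⟨hop, hlen⟩, hnP⟩ := hω
    have hi := findIdx_lt hop
    simp only [Finset.mem_product, Finset.mem_range, mem_ospF]
    refine ⟨by omega, ?_, ?_⟩
    · have hpermset := set_perm ((ω.getD (ω.findIdx (fun B => decide ((n + 1) ∈ B))) ∅).erase
        (n + 1)) (ω.findIdx (fun B => decide ((n + 1) ∈ B))) ω hi
      have h2 : IsOrderedPartitionOf (Finset.Icc 1 (n + 1))
          (ω.getD (ω.findIdx (fun B => decide ((n + 1) ∈ B))) ∅ ::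
            ω.eraseIdx (ω.findIdx (fun B => decide ((n + 1) ∈ B)))) :=
        isOP_perm (getD_cons_eraseIdx _ ω hi) hop
      rw [Icc_succ_eq] at h2
      have h3 := isOP_shrink_old h2 hxS (mem_getD_findIdx hop) (erase_getD_nonempty hop hnP)
      exact isOP_perm hpermset.symm h3
    · rw [List.length_set, hlen]
  · rintro ⟨i, ω⟩ hp
    simp only [Finset.mem_product, Finset.mem_range, mem_ospF] at hp
    obtain ⟨hi, hop, hlen⟩ := hp
    have hik : i < ω.length := by omega
    have hxnot : ∀ B ∈ ω, (n + 1) ∉ B := fun B hB hx =>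
      lt_irrefl _ (fresh_of_isOP hop B hB _ hx)
    simp only
    rw [findIdx_insOld _ _ _ hik hxnot, set_erase_insOld _ _ _ hik hxnot]
  · intro ω hω
    rw [Finset.mem_filter, mem_ospF] at hω
    obtain ⟨⟨hop, hlen⟩, hnP⟩ := hω
    exact insOld_reconstruct _ _ _ (findIdx_lt hop) (mem_getD_findIdx hop)
  · rintro ⟨i, ω⟩ hp
    simp only [Finset.mem_product, Finset.mem_range, mem_ospF] at hp
    obtain ⟨hi, hop, hlen⟩ := hp
    have hik : i < ω.length := by omega
    simp only
    rw [invStar_insOld (n + 1) ω i hik hop.1 (fresh_of_isOP hop), hlen]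
    congr 2

lemma key_prod (k : ℕ) (T : Finset (List (Finset ℕ))) :
    ∑ p ∈ Finset.range (k + 1) ×ˢ T,
        (Polynomial.X : Polynomial ℚ) ^ (invStar p.2 + (k - p.1))
      = qInt Polynomial.X (k + 1) * ∑ ω ∈ T, (Polynomial.X : Polynomial ℚ) ^ invStar ω := by
  rw [Finset.sum_product]
  have h : ∀ i ∈ Finset.range (k + 1),
      ∑ ω ∈ T, (Polynomial.X : Polynomial ℚ) ^ (invStar ω + (k - i))
        = (Polynomial.X : Polynomial ℚ) ^ (k - i) *
          ∑ ω ∈ T, (Polynomial.X : Polynomial ℚ) ^ invStar ω := by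
    intro i _
    rw [Finset.mul_sum]
    exact Finset.sum_congr rfl fun ω _ => by rw [pow_add, mul_comm]
  rw [Finset.sum_congr rfl h, ← Finset.sum_mul]
  congr 1
  rw [qInt, ← Finset.sum_range_reflect (fun j => (Polynomial.X : Polynomial ℚ) ^ j) (k + 1)]
  exact Finset.sum_congr rfl fun j hj => by norm_num

lemma main_rec (n k : ℕ) :
    Fpoly (n + 1) (k + 1)
      = qInt Polynomial.X (k + 1) * (Fpoly n k + Fpoly n (k + 1)) := by
  classical
  rw [Fpoly, ← Finset.sum_filter_add_sum_filter_not (ospF (n + 1) (k + 1))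
    (fun ω => ({n + 1} : Finset ℕ) ∈ ω)
    (fun ω => (Polynomial.X : Polynomial ℚ) ^ invStar ω),
    ← sumA, ← sumB, key_prod, key_prod, mul_add]
  rfl

lemma ospF_zero_zero : ospF 0 0 = {[]} := by
  ext ω
  rw [mem_ospF, Finset.mem_singleton]
  constructor
  · rintro ⟨_, hlen⟩
    exact List.length_eq_zero_iff.1 hlen
  · rintro rfl
    refine ⟨⟨by simp, by simp, fun y => ?_⟩, rfl⟩
    simp [Finset.mem_Icc]
  
lemma ospF_zero_succ (k : ℕ) : ospF 0 (k + 1) = ∅ := by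
  ext ω
  simp only [mem_ospF, Finset.notMem_empty, iff_false]
  rintro ⟨hop, hlen⟩
  cases ω with
  | nil => simp at hlen
  | cons B σ =>
      obtain ⟨b, hb⟩ := hop.1 B (List.mem_cons_self)
      have := blocks_subset hop B (List.mem_cons_self) b hb
      rw [Finset.mem_Icc] at this
      omega

lemma ospF_succ_zero (n : ℕ) : ospF (n + 1) 0 = ∅ := by
  ext ω
  simp only [mem_ospF, Finset.notMem_empty, iff_false]
  rintro ⟨hop, hlen⟩
  obtain rfl := List.length_eq_zero_iff.1 hlen
  obtain ⟨B, hB, -⟩ := (hop.2.2 1).1 (by simp [Finset.mem_Icc])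
  simp at hB

lemma key_lemma : ∀ n k : ℕ,
    qFact (Polynomial.X : Polynomial ℚ) k * qStirling (Polynomial.X : Polynomial ℚ) n k
      = Fpoly n k := by
  intro n
  induction n with
  | zero =>
      intro k
      cases k with
      | zero => simp [Fpoly, ospF_zero_zero, qFact, qStirling, invStar_nil]
      | succ k => simp [Fpoly, ospF_zero_succ, qStirling]
  | succ n ih =>
      intro k
      cases k with
      | zero => simp [Fpoly, ospF_succ_zero, qStirling]
      | succ k =>
          rw [main_rec n k, ← ih k, ← ih (k + 1)]
          show qFact _ (k + 1) * qStirling _ (n + 1) (k + 1) = _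
          rw [show qStirling (Polynomial.X : Polynomial ℚ) (n + 1) (k + 1)
            = qStirling Polynomial.X n k
              + qInt Polynomial.X (k + 1) * qStirling Polynomial.X n (k + 1) from rfl,
            qFact, Finset.prod_range_succ, ← qFact]
          ring


/-- `[k]!_q {n brace k}_q` equals the inversion generating polynomial over all ordered
set partitions of `{1, …, n}` into exactly `k` blocks. -/
theorem qFact_mul_qStirling_eq_sum_invStar (n k : ℕ) :
    qFact (Polynomial.X : Polynomial ℚ) k * qStirling (Polynomial.X : Polynomial ℚ) n k
      = ∑ᶠ ω ∈ {ω : List (Finset ℕ) |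
            IsOrderedPartitionOf (Finset.Icc 1 n) ω ∧ ω.length = k},
          (Polynomial.X : Polynomial ℚ) ^ invStar ω := by
  rw [finsum_mem_eq_finite_toFinset_sum _ (osp_finite (Finset.Icc 1 n) k)]
  exact key_lemma n k
end

section
/- For all n, k ≥ 0, the q-poly-Bernoulli number B_{n,q}^{(k)} := ∑_{m=0}^{min(n,k)} [m]!_q · {n+1 brace m+1}_q · [m]!_q · {k+1 brace m+1}_q equals ∑_{(σ,τ)} q^{Inv*(σ) + Inv*(τ)}, where the sum runs over all pairs (σ, τ) such that for some m with 0 ≤ m ≤ min(n,k), σ is an ordered set partition of {0, 1, …, n} into m+1 blocks whose first block contains the element 0, and τ is an ordered set partition of {1, …, k+1} into m+1 blocks whose last block contains the element k+1. -/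
open Finset Polynomial

namespace QPB

/-- inversion count between two blocks -/
def cross (B C : Finset ℕ) : ℕ := (B.filter (fun b => ∃ c ∈ C, c < b)).card

def crossSum (B : Finset ℕ) (t : List (Finset ℕ)) : ℕ := (t.map (cross B)).sum

def myInv : List (Finset ℕ) → ℕ
  | [] => 0
  | B :: t => crossSum B t + myInv t

lemma invStar_eq_double (l : List (Finset ℕ)) :
    invStar l = ∑ a ∈ range l.length, ∑ b ∈ range l.length,
      if a < b then cross (l.getD a ∅) (l.getD b ∅) else 0 := by
  rw [invStar, Finset.sum_filter, Finset.sum_product]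
  rfl

lemma sum_range_getD {α M : Type*} [AddCommMonoid M] (l : List α) (d : α) (f : α → M) :
    ∑ i ∈ range l.length, f (l.getD i d) = (l.map f).sum := by
  induction l with
  | nil => simp
  | cons a t ih =>
    rw [List.length_cons, Finset.sum_range_succ']
    simp only [List.getD_cons_succ, List.getD_cons_zero, List.map_cons, List.sum_cons]
    rw [ih, add_comm]

lemma invStar_eq_myInv (l : List (Finset ℕ)) : invStar l = myInv l := by
  induction l with
  | nil => simp [invStar_eq_double, myInv]
  | cons B t ih =>
    rw [invStar_eq_double, List.length_cons, Finset.sum_range_succ']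
    have h0 : (∑ b ∈ range (t.length + 1),
        if 0 < b then cross ((B :: t).getD 0 ∅) ((B :: t).getD b ∅) else 0) = crossSum B t := by
      rw [Finset.sum_range_succ']
      simp only [List.getD_cons_succ, List.getD_cons_zero, Nat.zero_lt_succ, if_true,
        lt_irrefl, if_false, add_zero]
      rw [sum_range_getD t ∅ (cross B)]
      rfl
    rw [h0]
    have h1 : ∀ a ∈ range t.length, (∑ b ∈ range (t.length + 1),
        if a + 1 < b then cross ((B :: t).getD (a+1) ∅) ((B :: t).getD b ∅) else 0)
        = ∑ b ∈ range t.length, if a < b then cross (t.getD a ∅) (t.getD b ∅) else 0 := by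
      intro a _
      rw [Finset.sum_range_succ']
      simp [List.getD_cons_succ, List.getD_cons_zero]
    rw [Finset.sum_congr rfl h1, myInv, ← ih, invStar_eq_double, add_comm]


variable {x : ℕ}

lemma cross_single_right {B : Finset ℕ} (hB : ∀ b ∈ B, b < x) : cross B {x} = 0 := by
  rw [cross, Finset.card_eq_zero, Finset.filter_eq_empty_iff]
  rintro b hb ⟨c, hc, hcb⟩
  simp only [Finset.mem_singleton] at hc
  subst hc
  exact absurd (hB b hb) (by omega)

lemma cross_single_left {C : Finset ℕ} (hC : C.Nonempty) (h : ∀ c ∈ C, c < x) :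
    cross ({x} : Finset ℕ) C = 1 := by
  obtain ⟨c, hc⟩ := hC
  rw [cross, Finset.filter_singleton, if_pos ⟨c, hc, h c hc⟩, Finset.card_singleton]

lemma cross_insert_left {B C : Finset ℕ} (hxB : x ∉ B) (hC : C.Nonempty)
    (hc : ∀ c ∈ C, c < x) : cross (insert x B) C = cross B C + 1 := by
  obtain ⟨c, hcC⟩ := hC
  rw [cross, Finset.filter_insert, if_pos ⟨c, hcC, hc c hcC⟩, Finset.card_insert_of_notMem
    (fun h => hxB (Finset.mem_of_mem_filter _ h))]
  rfl

lemma cross_insert_right {B C : Finset ℕ} (h : ∀ b ∈ B, b < x) :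
    cross B (insert x C) = cross B C := by
  rw [cross, cross]
  congr 1
  apply Finset.filter_congr
  intro b hb
  simp only [Finset.mem_insert]
  constructor
  · rintro ⟨c, (rfl | hc), hcb⟩
    · exact absurd (h b hb) (by omega)
    · exact ⟨c, hc, hcb⟩
  · rintro ⟨c, hc, hcb⟩; exact ⟨c, Or.inr hc, hcb⟩

lemma crossSum_perm {B : Finset ℕ} {t1 t2 : List (Finset ℕ)} (h : t1.Perm t2) :
    crossSum B t1 = crossSum B t2 :=
  (h.map (cross B)).sum_eq

lemma crossSum_singleton {t : List (Finset ℕ)} (hne : ∀ B ∈ t, B.Nonempty)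
    (hlt : ∀ B ∈ t, ∀ b ∈ B, b < x) : crossSum ({x} : Finset ℕ) t = t.length := by
  induction t with
  | nil => rfl
  | cons C t ih =>
    have : crossSum ({x} : Finset ℕ) (C :: t) = cross {x} C + crossSum {x} t := rfl
    rw [this, cross_single_left (hne C (by simp)) (hlt C (by simp)),
      ih (fun B hB => hne B (by simp [hB])) (fun B hB => hlt B (by simp [hB]))]
    simp [add_comm]

lemma crossSum_insert_left {B : Finset ℕ} {t : List (Finset ℕ)} (hxB : x ∉ B)
    (hne : ∀ C ∈ t, C.Nonempty) (hlt : ∀ C ∈ t, ∀ c ∈ C, c < x) :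
    crossSum (insert x B) t = crossSum B t + t.length := by
  induction t with
  | nil => rfl
  | cons C t ih =>
    have h1 : crossSum (insert x B) (C :: t) = cross (insert x B) C + crossSum (insert x B) t := rfl
    have h2 : crossSum B (C :: t) = cross B C + crossSum B t := rfl
    rw [h1, h2, cross_insert_left hxB (hne C (by simp)) (hlt C (by simp)),
      ih (fun D hD => hne D (by simp [hD])) (fun D hD => hlt D (by simp [hD]))]
    simp
    omega

lemma map_sum_set {α : Type*} {t : List α} {i : ℕ} {a d : α} (f : α → ℕ)
    (hi : i < t.length) (hf : f a = f (t.getD i d)) :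
    ((t.set i a).map f).sum = (t.map f).sum := by
  induction t generalizing i with
  | nil => simp at hi
  | cons b t ih =>
    cases i with
    | zero => simp only [List.set_cons_zero, List.map_cons, List.sum_cons,
        List.getD_cons_zero] at hf ⊢; rw [hf]
    | succ i =>
      simp only [List.set_cons_succ, List.map_cons, List.sum_cons]
      rw [ih (by simpa using hi) (by simpa [List.getD_cons_succ] using hf)]

lemma myInv_insN : ∀ (l : List (Finset ℕ)) (i : ℕ), i ≤ l.length →
    (∀ B ∈ l, B.Nonempty) → (∀ B ∈ l, ∀ b ∈ B, b < x) →
    myInv (l.insertIdx i ({x} : Finset ℕ)) = myInv l + (l.length - i) := by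
  intro l
  induction l with
  | nil =>
    intro i hi _ _
    have : i = 0 := by simpa using hi
    subst this
    simp [List.insertIdx_zero, myInv, crossSum]
  | cons B t ih =>
    intro i hi hne hlt
    cases i with
    | zero =>
      rw [List.insertIdx_zero]
      have : myInv (({x} : Finset ℕ) :: B :: t) = crossSum {x} (B :: t) + myInv (B :: t) := rfl
      rw [this, crossSum_singleton hne hlt]
      simp [add_comm]
    | succ i =>
      rw [List.insertIdx_succ_cons]
      have h1 : myInv (B :: (t.insertIdx i ({x} : Finset ℕ))) =
          crossSum B (t.insertIdx i ({x} : Finset ℕ)) + myInv (t.insertIdx i {x}) := rfl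
      have h2 : myInv (B :: t) = crossSum B t + myInv t := rfl
      have hit : i ≤ t.length := by simpa using hi
      have hcs : crossSum B (t.insertIdx i ({x} : Finset ℕ)) = crossSum B t := by
        rw [crossSum_perm (List.perm_insertIdx _ _ hit)]
        have : crossSum B (({x} : Finset ℕ) :: t) = cross B {x} + crossSum B t := rfl
        rw [this, cross_single_right (hlt B (by simp))]
        simp
      rw [h1, h2, hcs, ih i hit (fun C hC => hne C (by simp [hC]))
        (fun C hC => hlt C (by simp [hC]))]
      simp only [List.length_cons]
      omega

lemma myInv_insB : ∀ (l : List (Finset ℕ)) (i : ℕ), i < l.length →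
    (∀ B ∈ l, B.Nonempty) → (∀ B ∈ l, ∀ b ∈ B, b < x) →
    myInv (l.set i (insert x (l.getD i ∅))) = myInv l + (l.length - 1 - i) := by
  intro l
  induction l with
  | nil => intro i hi; simp at hi
  | cons B t ih =>
    intro i hi hne hlt
    cases i with
    | zero =>
      simp only [List.getD_cons_zero, List.set_cons_zero]
      have h1 : myInv (insert x B :: t) = crossSum (insert x B) t + myInv t := rfl
      have h2 : myInv (B :: t) = crossSum B t + myInv t := rfl
      have hxB : x ∉ B := fun h => absurd (hlt B (by simp) x h) (by omega)
      rw [h1, h2, crossSum_insert_left hxB (fun C hC => hne C (by simp [hC]))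
        (fun C hC => hlt C (by simp [hC]))]
      simp only [List.length_cons]
      omega
    | succ i =>
      simp only [List.getD_cons_succ, List.set_cons_succ]
      have hit : i < t.length := by simpa using hi
      have h1 : myInv (B :: t.set i (insert x (t.getD i ∅))) =
          crossSum B (t.set i (insert x (t.getD i ∅))) + myInv (t.set i (insert x (t.getD i ∅))) := rfl
      have h2 : myInv (B :: t) = crossSum B t + myInv t := rfl
      have hcs : crossSum B (t.set i (insert x (t.getD i ∅))) = crossSum B t := by
        apply map_sum_set _ hit
        exact cross_insert_right (hlt B (by simp))
      rw [h1, h2, hcs, ih i hit (fun C hC => hne C (by simp [hC]))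
        (fun C hC => hlt C (by simp [hC]))]
      simp only [List.length_cons]
      omega


/-- all lists of length `M` with entries in `T` -/
def lists (T : Finset (Finset ℕ)) : ℕ → Finset (List (Finset ℕ))
  | 0 => {[]}
  | M + 1 => (T ×ˢ lists T M).image fun p => p.1 :: p.2

lemma mem_lists {T : Finset (Finset ℕ)} : ∀ {M : ℕ} {l : List (Finset ℕ)},
    l ∈ lists T M ↔ l.length = M ∧ ∀ B ∈ l, B ∈ T := by
  intro M
  induction M with
  | zero =>
    intro l
    constructor
    · intro h; simp [lists] at h; simp [h]
    · rintro ⟨h, -⟩; simp [lists, List.length_eq_zero_iff.mp h]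
  | succ M ih =>
    intro l
    simp only [lists, Finset.mem_image, Finset.mem_product, Prod.exists]
    constructor
    · rintro ⟨B, t, ⟨hB, ht⟩, rfl⟩
      obtain ⟨hlen, hmem⟩ := ih.mp ht
      refine ⟨by simp [hlen], ?_⟩
      intro C hC
      rcases List.mem_cons.mp hC with rfl | hC
      · exact hB
      · exact hmem C hC
    · rintro ⟨hlen, hmem⟩
      cases l with
      | nil => simp at hlen
      | cons B t =>
        exact ⟨B, t, ⟨hmem B (by simp), ih.mpr ⟨by simpa using hlen,
          fun C hC => hmem C (by simp [hC])⟩⟩, rfl⟩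

open Classical in
/-- Finset of ordered set partitions of `S` into `M` blocks satisfying `P`. -/
noncomputable def ospFP (S : Finset ℕ) (M : ℕ) (P : List (Finset ℕ) → Prop) :
    Finset (List (Finset ℕ)) :=
  (lists S.powerset M).filter (fun l => IsOrderedPartitionOf S l ∧ P l)

lemma blocks_subset {S : Finset ℕ} {l : List (Finset ℕ)} (h : IsOrderedPartitionOf S l)
    {B : Finset ℕ} (hB : B ∈ l) : B ⊆ S := by
  intro b hb
  exact (h.2.2 b).mpr ⟨B, hB, hb⟩

lemma mem_ospFP {S : Finset ℕ} {M : ℕ} {P : List (Finset ℕ) → Prop} {l : List (Finset ℕ)} :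
    l ∈ ospFP S M P ↔ IsOrderedPartitionOf S l ∧ l.length = M ∧ P l := by
  classical
  simp only [ospFP, Finset.mem_filter, mem_lists, Finset.mem_powerset]
  constructor
  · rintro ⟨⟨hlen, _⟩, hpart, hP⟩; exact ⟨hpart, hlen, hP⟩
  · rintro ⟨hpart, hlen, hP⟩
    exact ⟨⟨hlen, fun B hB => blocks_subset hpart hB⟩, hpart, hP⟩

lemma ospFP_congr {S : Finset ℕ} {M : ℕ} {P P' : List (Finset ℕ) → Prop}
    (h : ∀ l, IsOrderedPartitionOf S l → l.length = M → (P l ↔ P' l)) :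
    ospFP S M P = ospFP S M P' := by
  ext l
  simp only [mem_ospFP]
  constructor
  · rintro ⟨h1, h2, h3⟩; exact ⟨h1, h2, (h l h1 h2).mp h3⟩
  · rintro ⟨h1, h2, h3⟩; exact ⟨h1, h2, (h l h1 h2).mpr h3⟩

lemma ospFP_false {S : Finset ℕ} {M : ℕ} : ospFP S M (fun _ => False) = ∅ := by
  ext l; simp [mem_ospFP]

/-- unique block containing an element -/
lemma idx_unique {S : Finset ℕ} {l : List (Finset ℕ)} (h : IsOrderedPartitionOf S l)
    {i j : ℕ} (hi : i < l.length) (hj : j < l.length) {a : ℕ}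
    (ha : a ∈ l[i]) (ha' : a ∈ l[j]) : i = j := by
  by_contra hne
  have hpw := List.pairwise_iff_getElem.mp h.2.1
  rcases Nat.lt_or_ge i j with hlt | hge
  · simpa using (hpw i j hi hj hlt).le_bot (Finset.mem_inter.mpr ⟨ha, ha'⟩)
  · have hlt : j < i := by omega
    simpa using (hpw j i hj hi hlt).le_bot (Finset.mem_inter.mpr ⟨ha', ha⟩)

def insN (i x : ℕ) (l : List (Finset ℕ)) : List (Finset ℕ) := l.insertIdx i {x}

def insB (i x : ℕ) (l : List (Finset ℕ)) : List (Finset ℕ) := l.set i (insert x (l.getD i ∅))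

lemma set_getD_self {α : Type*} (l : List α) (i : ℕ) (d : α) :
    l.set i (l.getD i d) = l := by
  apply List.ext_getElem (by simp)
  intro j h1 h2
  rw [List.getElem_set]
  split
  · next h => subst h; rw [List.getD_eq_getElem l d h2]
  · rfl


lemma insN_getD {x : ℕ} {l : List (Finset ℕ)} {i : ℕ} (hi : i ≤ l.length) (j : ℕ) :
    (insN i x l).getD j ∅ =
      if j < i then l.getD j ∅ else if j = i then {x} else l.getD (j - 1) ∅ := by
  have hlen : (insN i x l).length = l.length + 1 := List.length_insertIdx_of_le_length hi _
  simp only [insN] at hlen ⊢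
  rcases lt_trichotomy j i with hj | rfl | hj
  · rw [if_pos hj]
    have hjl : j < l.length := lt_of_lt_of_le hj hi
    rw [List.getD_eq_getElem _ _ (by omega), List.getD_eq_getElem _ _ hjl]
    exact List.getElem_insertIdx_of_lt hj _
  · rw [if_neg (lt_irrefl _), if_pos rfl, List.getD_eq_getElem _ _ (by omega)]
    exact List.getElem_insertIdx_self _
  · rw [if_neg (by omega), if_neg (by omega)]
    by_cases hjl : j ≤ l.length
    · have h1 : j - 1 < l.length := by omega
      rw [List.getD_eq_getElem _ _ (by omega), List.getD_eq_getElem _ _ h1]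
      obtain ⟨k, rfl⟩ : ∃ k, j = i + k + 1 := ⟨j - i - 1, by omega⟩
      have h2 : i + k < l.length := by omega
      have := List.getElem_insertIdx_add_succ l {x} i k h2
      simp only [this]
      congr 1
    · rw [List.getD_eq_default _ _ (by omega), List.getD_eq_default _ _ (by omega)]

lemma insB_getD {x : ℕ} {l : List (Finset ℕ)} {i : ℕ} (hi : i < l.length) (j : ℕ) :
    (insB i x l).getD j ∅ = if j = i then insert x (l.getD i ∅) else l.getD j ∅ := by
  have hlen : (insB i x l).length = l.length := List.length_set
  by_cases hjl : j < l.length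
  · rw [List.getD_eq_getElem _ _ (by omega)]
    simp only [insB, List.getElem_set]
    split
    · next h => rw [if_pos h.symm]
    · next h => rw [if_neg (fun hh => h hh.symm), List.getD_eq_getElem _ _ hjl]
  · rw [List.getD_eq_default _ _ (by omega), if_neg (by omega),
      List.getD_eq_default _ _ (by omega)]

lemma insertIdx_eraseIdx_self {α : Type*} :
    ∀ (l : List α) (i : ℕ) (h : i < l.length), (l.eraseIdx i).insertIdx i l[i] = l := by
  intro l
  induction l with
  | nil => intro i h; simp at h
  | cons a t ih =>
    intro i h
    cases i with
    | zero => simp [List.insertIdx_zero]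
    | succ i =>
      have : i < t.length := by simpa using h
      simp only [List.eraseIdx_cons_succ, List.getElem_cons_succ, List.insertIdx_succ_cons]
      rw [ih i this]

section Master

variable {S : Finset ℕ} {x : ℕ}

lemma insN_mem (hx : ∀ y ∈ S, y < x) {l : List (Finset ℕ)} {i M : ℕ} (hi : i ≤ M)
    (hl : IsOrderedPartitionOf S l) (hlen : l.length = M) :
    IsOrderedPartitionOf (insert x S) (insN i x l) ∧ (insN i x l).length = M + 1 := by
  have hxS : x ∉ S := fun h => absurd (hx x h) (lt_irrefl x)
  have hil : i ≤ l.length := by omega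
  have hperm : (insN i x l).Perm (({x} : Finset ℕ) :: l) := List.perm_insertIdx _ _ hil
  obtain ⟨hne, hpw, hun⟩ := hl
  refine ⟨⟨?_, ?_, ?_⟩, by simp only [insN]; rw [List.length_insertIdx_of_le_length hil, hlen]⟩
  · intro B hB
    rcases List.mem_cons.mp (hperm.mem_iff.mp hB) with rfl | hB
    · exact ⟨x, Finset.mem_singleton_self x⟩
    · exact hne B hB
  · refine (hperm.pairwise_iff (fun h => h.symm)).mpr (List.Pairwise.cons ?_ hpw)
    intro B hB
    rw [Finset.disjoint_singleton_left]
    exact fun h => hxS (blocks_subset ⟨hne, hpw, hun⟩ hB h)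
  · intro y
    rw [Finset.mem_insert, hun y]
    constructor
    · rintro (h | ⟨B, hB, hyB⟩)
      · exact ⟨({x} : Finset ℕ), hperm.mem_iff.mpr (by simp), by simp [h]⟩
      · exact ⟨B, hperm.mem_iff.mpr (by simp [hB]), hyB⟩
    · rintro ⟨B, hB, hyB⟩
      rcases List.mem_cons.mp (hperm.mem_iff.mp hB) with rfl | hB
      · exact Or.inl (Finset.mem_singleton.mp hyB)
      · exact Or.inr ⟨B, hB, hyB⟩

lemma insB_mem (hx : ∀ y ∈ S, y < x) {l : List (Finset ℕ)} {i M : ℕ} (hi : i ≤ M)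
    (hl : IsOrderedPartitionOf S l) (hlen : l.length = M + 1) :
    IsOrderedPartitionOf (insert x S) (insB i x l) ∧ (insB i x l).length = M + 1 := by
  have hxS : x ∉ S := fun h => absurd (hx x h) (lt_irrefl x)
  have hil : i < l.length := by omega
  obtain ⟨hne, hpw, hun⟩ := hl
  have hsub : ∀ B ∈ l, B ⊆ S := fun B hB => blocks_subset ⟨hne, hpw, hun⟩ hB
  have hlen' : (insB i x l).length = M + 1 := by simp only [insB, List.length_set]; omega
  refine ⟨⟨?_, ?_, ?_⟩, hlen'⟩
  · intro B hB
    obtain ⟨j, hj, rfl⟩ := List.mem_iff_getElem.mp hB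
    simp only [insB, List.getElem_set]
    split
    · exact Finset.insert_nonempty _ _
    · exact hne _ (List.getElem_mem _)
  · rw [List.pairwise_iff_getElem]
    intro a b ha hb hab
    have hal : a < l.length := by rw [hlen'] at ha; omega
    have hbl : b < l.length := by rw [hlen'] at hb; omega
    have hd := List.pairwise_iff_getElem.mp hpw a b hal hbl hab
    have hxa : x ∉ l[b] := fun h => hxS (hsub _ (List.getElem_mem hbl) h)
    have hxb : x ∉ l[a] := fun h => hxS (hsub _ (List.getElem_mem hal) h)
    have hgdi : l.getD i ∅ = l[i] := List.getD_eq_getElem _ _ hil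
    simp only [insB, List.getElem_set]
    split <;> split
    · next h1 h2 => omega
    · next h1 h2 =>
      subst h1
      rw [Finset.disjoint_insert_left]
      exact ⟨hxa, by rw [← hgdi] at hd; exact hd⟩
    · next h1 h2 =>
      subst h2
      rw [Finset.disjoint_insert_right]
      exact ⟨hxb, by rw [← hgdi] at hd; exact hd⟩
    · exact hd
  · intro y
    rw [Finset.mem_insert, hun y]
    have hgdi : l.getD i ∅ = l[i] := List.getD_eq_getElem _ _ hil
    constructor
    · rintro (h | ⟨B, hB, hyB⟩)
      · refine ⟨(insB i x l)[i]'(by rw [hlen']; omega), List.getElem_mem _, ?_⟩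
        simp only [insB, List.getElem_set, if_pos rfl]
        rw [h]
        exact Finset.mem_insert_self x _
      · obtain ⟨j, hj, rfl⟩ := List.mem_iff_getElem.mp hB
        refine ⟨(insB i x l)[j]'(by rw [hlen']; omega), List.getElem_mem _, ?_⟩
        simp only [insB, List.getElem_set]
        split
        · next h =>
          subst h
          rw [hgdi]
          exact Finset.mem_insert_of_mem hyB
        · exact hyB
    · rintro ⟨B, hB, hyB⟩
      obtain ⟨j, hj, rfl⟩ := List.mem_iff_getElem.mp hB
      have hjl : j < l.length := by rw [hlen'] at hj; omega
      revert hyB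
      simp only [insB, List.getElem_set]
      split
      · next h =>
        intro hy
        rcases Finset.mem_insert.mp hy with h | hy
        · exact Or.inl h
        · exact Or.inr ⟨l.getD i ∅, by rw [hgdi]; exact List.getElem_mem _, hy⟩
      · intro hy
        exact Or.inr ⟨l[j], List.getElem_mem _, hy⟩


lemma eraseIdx_getElem_mem {α : Type*} {l : List α} {i j : ℕ} (hj : j < l.length)
    (hij : j ≠ i) : l[j] ∈ l.eraseIdx i := by
  rcases lt_or_gt_of_ne hij with h | h
  · have hb : j < (l.eraseIdx i).length := by rw [List.length_eraseIdx]; split <;> omega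
    have he := List.getElem_eraseIdx_of_lt hb h
    rw [← he]
    exact List.getElem_mem hb
  · have hb : j - 1 < (l.eraseIdx i).length := by rw [List.length_eraseIdx]; split <;> omega
    have he := List.getElem_eraseIdx_of_ge hb (by omega)
    have h2 : j - 1 + 1 = j := by omega
    simp only [h2] at he
    rw [← he]
    exact List.getElem_mem hb

lemma mem_eraseIdx_idx {α : Type*} {l : List α} {i : ℕ} (hi : i < l.length) {B : α}
    (h : B ∈ l.eraseIdx i) : ∃ j, ∃ (hj : j < l.length), j ≠ i ∧ l[j] = B := by
  obtain ⟨j', hj', rfl⟩ := List.mem_iff_getElem.mp h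
  rcases lt_or_ge j' i with hlt | hge
  · have hb : j' < l.length := by rw [List.length_eraseIdx] at hj'; split at hj' <;> omega
    exact ⟨j', hb, by omega, (List.getElem_eraseIdx_of_lt hj' hlt).symm⟩
  · have hb : j' + 1 < l.length := by rw [List.length_eraseIdx] at hj' <;> split at hj' <;> omega
    exact ⟨j' + 1, hb, by omega, (List.getElem_eraseIdx_of_ge hj' hge).symm⟩

lemma not_mem_getD {S : Finset ℕ} {x : ℕ} (hxS : x ∉ S) {l : List (Finset ℕ)}
    (hpart : IsOrderedPartitionOf S l) (j : ℕ) : x ∉ l.getD j ∅ := by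
  intro h
  by_cases hj : j < l.length
  · rw [List.getD_eq_getElem _ _ hj] at h
    exact hxS (blocks_subset hpart (List.getElem_mem hj) h)
  · rw [List.getD_eq_default _ _ (by omega)] at h
    simp at h

lemma loc_insN {S : Finset ℕ} {x : ℕ} (hxS : x ∉ S) {l : List (Finset ℕ)}
    (hpart : IsOrderedPartitionOf S l) {i : ℕ} (hi : i ≤ l.length) (j : ℕ) :
    x ∈ (insN i x l).getD j ∅ ↔ j = i := by
  rw [insN_getD hi]
  split_ifs with h1 h2
  · simp only [not_mem_getD hxS hpart j, false_iff]; omega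
  · simp [h2]
  · simp only [not_mem_getD hxS hpart (j-1), false_iff]; omega

lemma loc_insB {S : Finset ℕ} {x : ℕ} (hxS : x ∉ S) {l : List (Finset ℕ)}
    (hpart : IsOrderedPartitionOf S l) {i : ℕ} (hi : i < l.length) (j : ℕ) :
    x ∈ (insB i x l).getD j ∅ ↔ j = i := by
  rw [insB_getD hi]
  split_ifs with h1
  · simp [h1]
  · simp only [not_mem_getD hxS hpart j, false_iff]; omega

lemma cover (hx : ∀ y ∈ S, y < x) {M : ℕ} {P : List (Finset ℕ) → Prop} {ω : List (Finset ℕ)}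
    (hω : ω ∈ ospFP (insert x S) (M + 1) P) :
    ∃ i, i ≤ M ∧ ((∃ l ∈ ospFP S M (fun l => P (insN i x l)), insN i x l = ω) ∨
      (∃ l ∈ ospFP S (M + 1) (fun l => P (insB i x l)), insB i x l = ω)) := by
  have hxS : x ∉ S := fun h => lt_irrefl x (hx x h)
  obtain ⟨hpart, hlen, hP⟩ := mem_ospFP.mp hω
  obtain ⟨hne, hpw, hun⟩ := hpart
  obtain ⟨B, hB, hxB⟩ := (hun x).mp (Finset.mem_insert_self x S)
  obtain ⟨i, hi, rfl⟩ := List.mem_iff_getElem.mp hB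
  refine ⟨i, by omega, ?_⟩
  have hxi : x ∈ ω[i] := hxB
  by_cases hsing : ω[i] = ({x} : Finset ℕ)
  · -- singleton block: erase the block
    left
    have heq : insN i x (ω.eraseIdx i) = ω := by
      have h := insertIdx_eraseIdx_self ω i hi
      rw [hsing] at h
      exact h
    have hlenE : (ω.eraseIdx i).length = M := by
      rw [List.length_eraseIdx]
      split <;> omega
    have hpartE : IsOrderedPartitionOf S (ω.eraseIdx i) := by
      refine ⟨fun C hC => hne C (List.mem_of_mem_eraseIdx hC),
        List.Pairwise.sublist (List.eraseIdx_sublist ω i) hpw, ?_⟩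
      intro y
      constructor
      · intro hyS
        obtain ⟨C, hC, hyC⟩ := (hun y).mp (Finset.mem_insert_of_mem hyS)
        obtain ⟨j, hj, rfl⟩ := List.mem_iff_getElem.mp hC
        have hji : j ≠ i := by
          intro h
          subst h
          rw [hsing] at hyC
          exact hxS (Finset.mem_singleton.mp hyC ▸ hyS)
        exact ⟨ω[j], eraseIdx_getElem_mem hj hji, hyC⟩
      · rintro ⟨C, hC, hyC⟩
        obtain ⟨j, hj, hji, rfl⟩ := mem_eraseIdx_idx hi hC
        have hymem : y ∈ insert x S := (hun y).mpr ⟨ω[j], List.getElem_mem hj, hyC⟩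
        rcases Finset.mem_insert.mp hymem with h | h
        · subst h
          exact absurd (idx_unique ⟨hne, hpw, hun⟩ hj hi hyC hxi) hji
        · exact h
    refine ⟨ω.eraseIdx i, mem_ospFP.mpr ⟨hpartE, hlenE, ?_⟩, heq⟩
    rw [heq]
    exact hP
  · -- non-singleton block: remove x from the block
    right
    set l := ω.set i (ω[i].erase x) with hl
    have hgdi : l.getD i ∅ = ω[i].erase x := by
      rw [List.getD_eq_getElem _ _ (by rw [List.length_set]; omega)]
      simp [hl, List.getElem_set]
    have heq : insB i x l = ω := by
      simp only [insB, hgdi, Finset.insert_erase hxi]; simp only [hl, List.set_set]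
      rw [show ω[i] = ω.getD i ∅ from (List.getD_eq_getElem _ _ hi).symm, set_getD_self]
    have hlenL : l.length = M + 1 := by rw [hl, List.length_set]; omega
    have hgetL : ∀ (j : ℕ) (hj : j < l.length),
        l[j] = if i = j then ω[i].erase x else ω[j]'(by rw [hlenL] at hj; omega) := by
      intro j hj
      exact List.getElem_set (by rw [hl] at hj; exact hj)
    have hpartL : IsOrderedPartitionOf S l := by
      refine ⟨?_, ?_, ?_⟩
      · intro C hC
        obtain ⟨j, hj, rfl⟩ := List.mem_iff_getElem.mp hC
        rw [hgetL j hj]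
        split
        · -- erase x ω[i] nonempty
          obtain ⟨y, hy, hyx⟩ : ∃ y ∈ ω[i], y ≠ x := by
            by_contra hcon
            push_neg at hcon
            apply hsing
            apply Finset.Subset.antisymm
            · intro z hz; simp [hcon z hz]
            · intro z hz; simp only [Finset.mem_singleton] at hz; exact hz ▸ hxi
          exact ⟨y, Finset.mem_erase.mpr ⟨hyx, hy⟩⟩
        · exact hne _ (List.getElem_mem _)
      · rw [List.pairwise_iff_getElem]
        intro a b ha hb hab
        have ha' : a < ω.length := by rw [hlenL] at ha; omega
        have hb' : b < ω.length := by rw [hlenL] at hb; omega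
        have hd := List.pairwise_iff_getElem.mp hpw a b ha' hb' hab
        rw [hgetL a ha, hgetL b hb]
        split <;> split
        · next h1 h2 => omega
        · next h1 h2 =>
          subst h1
          exact hd.mono_left (Finset.erase_subset x ω[i])
        · next h1 h2 =>
          subst h2
          exact hd.mono_right (Finset.erase_subset x ω[i])
        · exact hd
      · intro y
        constructor
        · intro hyS
          obtain ⟨C, hC, hyC⟩ := (hun y).mp (Finset.mem_insert_of_mem hyS)
          obtain ⟨j, hj, rfl⟩ := List.mem_iff_getElem.mp hC
          have hyx : y ≠ x := fun h => hxS (h ▸ hyS)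
          refine ⟨l[j]'(by rw [hlenL]; omega), List.getElem_mem _, ?_⟩
          rw [hgetL j (by rw [hlenL]; omega)]
          split
          · next h =>
            subst h
            exact Finset.mem_erase.mpr ⟨hyx, hyC⟩
          · exact hyC
        · rintro ⟨C, hC, hyC⟩
          obtain ⟨j, hj, rfl⟩ := List.mem_iff_getElem.mp hC
          rw [hgetL j hj] at hyC
          have hj' : j < ω.length := by rw [hlenL] at hj; omega
          split at hyC
          · next hij =>
            have hyx : y ≠ x := (Finset.mem_erase.mp hyC).1
            have : y ∈ insert x S := (hun y).mpr ⟨ω[i], List.getElem_mem hi,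
              Finset.mem_of_mem_erase hyC⟩
            rcases Finset.mem_insert.mp this with h | h
            · exact absurd h hyx
            · exact h
          · next hij =>
            have : y ∈ insert x S := (hun y).mpr ⟨ω[j], List.getElem_mem hj', hyC⟩
            rcases Finset.mem_insert.mp this with h | h
            · subst h
              exact absurd (idx_unique ⟨hne, hpw, hun⟩ hj' hi hyC hxi) (fun hh => hij hh.symm)
            · exact h
    refine ⟨l, mem_ospFP.mpr ⟨hpartL, hlenL, ?_⟩, heq⟩
    rw [heq]
    exact hP


theorem master {Rc : Type*} [CommSemiring Rc] (q : Rc) (hx : ∀ y ∈ S, y < x) (M : ℕ)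
    (P : List (Finset ℕ) → Prop) :
    ∑ ω ∈ ospFP (insert x S) (M + 1) P, q ^ invStar ω
      = ∑ i ∈ Finset.range (M + 1), q ^ (M - i) *
        ((∑ l ∈ ospFP S M (fun l => P (insN i x l)), q ^ invStar l)
          + ∑ l ∈ ospFP S (M + 1) (fun l => P (insB i x l)), q ^ invStar l) := by
  classical
  have hxS : x ∉ S := fun h => lt_irrefl x (hx x h)
  have hloc : ∀ i, i ≤ M → ∀ ω ∈ ((ospFP S M (fun l => P (insN i x l))).image (insN i x)) ∪
      ((ospFP S (M + 1) (fun l => P (insB i x l))).image (insB i x)),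
      ∀ j, x ∈ ω.getD j ∅ ↔ j = i := by
    intro i hi ω hω j
    rw [Finset.mem_union] at hω
    rcases hω with hω | hω <;> obtain ⟨l, hl, rfl⟩ := Finset.mem_image.mp hω <;>
      obtain ⟨hpart, hlenl, -⟩ := mem_ospFP.mp hl
    · exact loc_insN hxS hpart (by omega) j
    · exact loc_insB hxS hpart (by omega) j
  have hcover : ospFP (insert x S) (M + 1) P = (Finset.range (M + 1)).biUnion
      (fun i => ((ospFP S M (fun l => P (insN i x l))).image (insN i x)) ∪
        ((ospFP S (M + 1) (fun l => P (insB i x l))).image (insB i x))) := by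
    ext ω
    rw [Finset.mem_biUnion]
    constructor
    · intro hω
      obtain ⟨i, hi, hcase⟩ := cover hx hω
      refine ⟨i, Finset.mem_range.mpr (by omega), ?_⟩
      rw [Finset.mem_union]
      rcases hcase with ⟨l, hl, heq⟩ | ⟨l, hl, heq⟩
      · exact Or.inl (Finset.mem_image.mpr ⟨l, hl, heq⟩)
      · exact Or.inr (Finset.mem_image.mpr ⟨l, hl, heq⟩)
    · rintro ⟨i, hi, hω⟩
      rw [Finset.mem_range] at hi
      rw [Finset.mem_union] at hω
      rcases hω with hω | hω <;> obtain ⟨l, hl, rfl⟩ := Finset.mem_image.mp hω <;>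
        obtain ⟨hpart, hlenl, hPl⟩ := mem_ospFP.mp hl
      · obtain ⟨hp', hlen'⟩ := insN_mem hx (by omega : i ≤ M) hpart hlenl
        exact mem_ospFP.mpr ⟨hp', hlen', hPl⟩
      · obtain ⟨hp', hlen'⟩ := insB_mem hx (by omega : i ≤ M) hpart hlenl
        exact mem_ospFP.mpr ⟨hp', hlen', hPl⟩
  rw [hcover, Finset.sum_biUnion ?hdisj]
  case hdisj =>
    intro i hi j hj hij
    rw [Finset.mem_coe, Finset.mem_range] at hi hj
    simp only [Function.onFun]
    rw [Finset.disjoint_left]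
    intro ω hω1 hω2
    have h1 := (hloc i (by omega) ω hω1 i).mpr rfl
    exact hij ((hloc j (by omega) ω hω2 i).mp h1)
  refine Finset.sum_congr rfl ?_
  intro i hi
  rw [Finset.mem_range] at hi
  have hiM : i ≤ M := by omega
  have hdisjNB : Disjoint ((ospFP S M (fun l => P (insN i x l))).image (insN i x))
      ((ospFP S (M + 1) (fun l => P (insB i x l))).image (insB i x)) := by
    rw [Finset.disjoint_left]
    rintro ω hω1 hω2
    obtain ⟨l, hl, rfl⟩ := Finset.mem_image.mp hω1
    obtain ⟨l', hl', heq⟩ := Finset.mem_image.mp hω2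
    obtain ⟨hpart, hlenl, -⟩ := mem_ospFP.mp hl
    obtain ⟨hpart', hlenl', -⟩ := mem_ospFP.mp hl'
    have h1 : (insN i x l).getD i ∅ = ({x} : Finset ℕ) := by
      rw [insN_getD (by omega)]
      simp
    have hil' : i < l'.length := by omega
    have h2 : (insB i x l').getD i ∅ = insert x (l'.getD i ∅) := by
      rw [insB_getD hil']
      simp
    rw [← heq] at h1
    rw [h2] at h1
    have hbne : (l'.getD i ∅).Nonempty := by
      rw [List.getD_eq_getElem _ _ hil']
      exact hpart'.1 _ (List.getElem_mem hil')
    obtain ⟨y, hy⟩ := hbne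
    have hyx : y ≠ x := fun h => hxS (blocks_subset hpart'
      (by rw [List.getD_eq_getElem _ _ hil']; exact List.getElem_mem hil') (h ▸ hy))
    have : y ∈ insert x (l'.getD i ∅) := Finset.mem_insert_of_mem hy
    rw [h1] at this
    exact hyx (Finset.mem_singleton.mp this)
  rw [Finset.sum_union hdisjNB]
  have hN : ∑ ω ∈ (ospFP S M (fun l => P (insN i x l))).image (insN i x), q ^ invStar ω
      = (∑ l ∈ ospFP S M (fun l => P (insN i x l)), q ^ invStar l) * q ^ (M - i) := by
    rw [Finset.sum_image (fun a _ b _ (h : insN i x a = insN i x b) =>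
      List.insertIdx_injective i ({x} : Finset ℕ) h)]
    rw [Finset.sum_mul]
    refine Finset.sum_congr rfl ?_
    intro l hl
    obtain ⟨hpart, hlenl, -⟩ := mem_ospFP.mp hl
    have hne : ∀ B ∈ l, B.Nonempty := hpart.1
    have hlt : ∀ B ∈ l, ∀ b ∈ B, b < x := fun B hB b hb => hx b (blocks_subset hpart hB hb)
    rw [invStar_eq_myInv, invStar_eq_myInv]
    have := myInv_insN l i (by omega) hne hlt
    simp only [insN]
    rw [this, hlenl, pow_add]
  have hB : ∑ ω ∈ (ospFP S (M + 1) (fun l => P (insB i x l))).image (insB i x), q ^ invStar ω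
      = (∑ l ∈ ospFP S (M + 1) (fun l => P (insB i x l)), q ^ invStar l) * q ^ (M - i) := by
    have hinj : ∀ a ∈ ospFP S (M + 1) (fun l => P (insB i x l)),
        ∀ b ∈ ospFP S (M + 1) (fun l => P (insB i x l)), insB i x a = insB i x b → a = b := by
      intro a ha b hb h
      obtain ⟨hparta, hlena, -⟩ := mem_ospFP.mp ha
      obtain ⟨hpartb, hlenb, -⟩ := mem_ospFP.mp hb
      have hila : i < a.length := by omega
      have hilb : i < b.length := by omega
      have hga : (insB i x a).getD i ∅ = insert x (a.getD i ∅) := by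
        rw [insB_getD hila]; simp
      have hgb : (insB i x b).getD i ∅ = insert x (b.getD i ∅) := by
        rw [insB_getD hilb]; simp
      have hxa : x ∉ a.getD i ∅ := not_mem_getD (fun hh => lt_irrefl x (hx x hh)) hparta i
      have hxb : x ∉ b.getD i ∅ := not_mem_getD (fun hh => lt_irrefl x (hx x hh)) hpartb i
      have hblocks : a.getD i ∅ = b.getD i ∅ := by
        have := hga.symm.trans (h ▸ hgb)
        have h2 := congrArg (fun s => Finset.erase s x) this
        simpa only [Finset.erase_insert hxa, Finset.erase_insert hxb] using h2
      have h3 := congrArg (fun ll => ll.set i (a.getD i ∅)) h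
      simp only [insB, List.set_set] at h3
      rwa [set_getD_self, hblocks, set_getD_self] at h3
    rw [Finset.sum_image hinj, Finset.sum_mul]
    refine Finset.sum_congr rfl ?_
    intro l hl
    obtain ⟨hpart, hlenl, -⟩ := mem_ospFP.mp hl
    have hne : ∀ B ∈ l, B.Nonempty := hpart.1
    have hlt : ∀ B ∈ l, ∀ b ∈ B, b < x := fun B hB b hb => hx b (blocks_subset hpart hB hb)
    rw [invStar_eq_myInv, invStar_eq_myInv]
    have := myInv_insB l i (by omega) hne hlt
    simp only [insB] at this ⊢
    rw [this, hlenl]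
    have : M + 1 - 1 - i = M - i := by omega
    rw [this, pow_add]
  rw [hN, hB]
  ring

end Master

lemma invStar_nil : invStar [] = 0 := by simp [invStar]

lemma ospFP_empty_zero {P : List (Finset ℕ) → Prop} (hP : P []) :
    ospFP ∅ 0 P = {[]} := by
  ext l
  rw [mem_ospFP, Finset.mem_singleton]
  constructor
  · rintro ⟨-, hlen, -⟩
    exact List.length_eq_zero_iff.mp hlen
  · rintro rfl
    exact ⟨⟨by simp, by simp, by simp⟩, rfl, hP⟩

lemma ospFP_zero_of_nonempty {S : Finset ℕ} (hS : S.Nonempty) (P : List (Finset ℕ) → Prop) :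
    ospFP S 0 P = ∅ := by
  ext l
  simp only [mem_ospFP, Finset.notMem_empty, iff_false]
  rintro ⟨hpart, hlen, -⟩
  obtain ⟨y, hy⟩ := hS
  obtain ⟨B, hB, -⟩ := (hpart.2.2 y).mp hy
  rw [List.length_eq_zero_iff.mp hlen] at hB
  simp at hB

lemma ospFP_empty_succ {M : ℕ} (P : List (Finset ℕ) → Prop) :
    ospFP ∅ (M + 1) P = ∅ := by
  ext l
  simp only [mem_ospFP, Finset.notMem_empty, iff_false]
  rintro ⟨hpart, hlen, -⟩
  have h0 : 0 < l.length := by omega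
  have hne := hpart.1 _ (List.getElem_mem h0)
  obtain ⟨y, hy⟩ := hne
  have : y ∈ (∅ : Finset ℕ) := (hpart.2.2 y).mpr ⟨l[0], List.getElem_mem h0, hy⟩
  simp at this

lemma ospFP_singleton_one {a : ℕ} {P : List (Finset ℕ) → Prop} (hP : P [{a}]) :
    ospFP {a} 1 P = {[({a} : Finset ℕ)]} := by
  ext l
  rw [mem_ospFP, Finset.mem_singleton]
  constructor
  · rintro ⟨hpart, hlen, -⟩
    obtain ⟨B, rfl⟩ : ∃ B, l = [B] := by
      cases l with
      | nil => simp at hlen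
      | cons B t =>
        cases t with
        | nil => exact ⟨B, rfl⟩
        | cons C u => simp at hlen
    have hBsub : B ⊆ {a} := blocks_subset hpart (by simp)
    have hBne : B.Nonempty := hpart.1 B (by simp)
    rcases Finset.subset_singleton_iff.mp hBsub with rfl | rfl
    · exact absurd hBne (by simp)
    · rfl
  · rintro rfl
    refine ⟨⟨by simp, by simp, ?_⟩, rfl, hP⟩
    intro y
    simp

lemma ospFP_singleton_succ_succ {a : ℕ} {M : ℕ} (P : List (Finset ℕ) → Prop) :
    ospFP {a} (M + 2) P = ∅ := by
  ext l
  simp only [mem_ospFP, Finset.notMem_empty, iff_false]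
  rintro ⟨hpart, hlen, -⟩
  have h0 : 0 < l.length := by omega
  have h1 : 1 < l.length := by omega
  have hd := List.pairwise_iff_getElem.mp hpart.2.1 0 1 h0 h1 (by omega)
  have hB0 : l[0] ⊆ {a} := blocks_subset hpart (List.getElem_mem h0)
  have hB1 : l[1] ⊆ {a} := blocks_subset hpart (List.getElem_mem h1)
  have hB0' := hpart.1 _ (List.getElem_mem h0)
  have hB1' := hpart.1 _ (List.getElem_mem h1)
  rcases Finset.subset_singleton_iff.mp hB0 with h | h
  · exact absurd h (Finset.nonempty_iff_ne_empty.mp hB0')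
  · rcases Finset.subset_singleton_iff.mp hB1 with h' | h'
    · exact absurd h' (Finset.nonempty_iff_ne_empty.mp hB1')
    · rw [h, h'] at hd
      simp at hd

lemma qInt_zero {Rc : Type*} [CommSemiring Rc] (q : Rc) : qInt q 0 = 0 := by simp [qInt]

lemma qFact_succ {Rc : Type*} [CommSemiring Rc] (q : Rc) (m : ℕ) :
    qFact q (m + 1) = qFact q m * qInt q (m + 1) := Finset.prod_range_succ _ _

lemma qStirling_succ_succ {Rc : Type*} [CommSemiring Rc] (q : Rc) (c m : ℕ) :
    qStirling q (c + 1) (m + 1) = qStirling q c m + qInt q (m + 1) * qStirling q c (m + 1) := rfl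

lemma sum_pow_rev' {Rc : Type*} [CommSemiring Rc] (q : Rc) (m : ℕ) :
    ∑ i ∈ Finset.range m, q ^ (m - 1 - i) = qInt q m := by
  rw [qInt]
  exact Finset.sum_range_reflect (fun j => q ^ j) m

lemma sum_pow_rev {Rc : Type*} [CommSemiring Rc] (q : Rc) (M : ℕ) :
    ∑ i ∈ Finset.range (M + 1), q ^ (M - i) = qInt q (M + 1) := by
  rw [← sum_pow_rev' q (M + 1)]
  simp only [Nat.add_sub_cancel]

lemma hSum_eq {Rc : Type*} [CommSemiring Rc] (q : Rc) :
    ∀ (c : ℕ) (S : Finset ℕ), S.card = c → ∀ M : ℕ,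
      (∑ ω ∈ ospFP S M (fun _ => True), q ^ invStar ω) = qFact q M * qStirling q c M := by
  intro c
  induction c with
  | zero =>
    intro S hS M
    rw [Finset.card_eq_zero] at hS
    subst hS
    cases M with
    | zero =>
      rw [ospFP_empty_zero (P := fun _ => True) trivial]
      simp [invStar_nil, qFact, qStirling]
    | succ M => simp [ospFP_empty_succ, qStirling]
  | succ c ih =>
    intro S hS M
    have hSne : S.Nonempty := by rw [← Finset.card_pos]; omega
    set x := S.max' hSne with hxdef
    have hxS : x ∈ S := S.max'_mem hSne
    have hins : insert x (S.erase x) = S := Finset.insert_erase hxS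
    have hx : ∀ y ∈ S.erase x, y < x := fun y hy =>
      lt_of_le_of_ne (S.le_max' y (Finset.mem_of_mem_erase hy)) (Finset.ne_of_mem_erase hy)
    have hcard : (S.erase x).card = c := by rw [Finset.card_erase_of_mem hxS]; omega
    cases M with
    | zero =>
      rw [ospFP_zero_of_nonempty hSne]
      simp [qStirling]
    | succ M =>
      rw [← hins, master q hx M (fun _ => True)]
      have h1 := ih (S.erase x) hcard M
      have h2 := ih (S.erase x) hcard (M + 1)
      have hstep : ∀ i ∈ Finset.range (M + 1),
          q ^ (M - i) * ((∑ l ∈ ospFP (S.erase x) M (fun l => True), q ^ invStar l)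
            + ∑ l ∈ ospFP (S.erase x) (M + 1) (fun l => True), q ^ invStar l)
          = q ^ (M - i) * (qFact q M * qStirling q c M
            + qFact q (M + 1) * qStirling q c (M + 1)) := by
        intro i _
        rw [h1, h2]
      rw [Finset.sum_congr rfl hstep, ← Finset.sum_mul, sum_pow_rev,
        qStirling_succ_succ, qFact_succ]
      ring

lemma qStirling_succ_zero {Rc : Type*} [CommSemiring Rc] (q : Rc) (c : ℕ) :
    qStirling q (c + 1) 0 = 0 := rfl

lemma qStirling_zero_succ {Rc : Type*} [CommSemiring Rc] (q : Rc) (m : ℕ) :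
    qStirling q 0 (m + 1) = 0 := rfl

lemma qInt_succ_last {Rc : Type*} [CommSemiring Rc] (q : Rc) (m : ℕ) :
    qInt q (m + 1) = qInt q m + q ^ m := Finset.sum_range_succ _ _

lemma fSum_eq {Rc : Type*} [CommSemiring Rc] (q : Rc) :
    ∀ (c : ℕ) (S : Finset ℕ), S.card = c → 0 ∈ S → ∀ m : ℕ,
      (∑ ω ∈ ospFP S (m + 1) (fun ω => 0 ∈ ω.getD 0 ∅), q ^ invStar ω)
        = qFact q m * qStirling q c (m + 1) := by
  intro c
  induction c with
  | zero =>
    intro S hS h0S m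
    rw [Finset.card_eq_zero] at hS
    subst hS
    simp at h0S
  | succ c ih =>
    intro S hS h0S m
    by_cases hS0 : S = {0}
    · subst hS0
      have hc : c = 0 := by simp at hS; omega
      subst hc
      cases m with
      | zero =>
        rw [ospFP_singleton_one (P := fun ω => 0 ∈ ω.getD 0 ∅) (by simp)]
        simp [invStar_eq_myInv, myInv, crossSum, qFact, qStirling, qInt]
      | succ m =>
        rw [ospFP_singleton_succ_succ]
        rw [show qStirling q 1 (m + 2) = qStirling q 0 (m + 1) +
          qInt q (m + 2) * qStirling q 0 (m + 2) from rfl,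
          qStirling_zero_succ, qStirling_zero_succ]
        simp
    · have hSne : S.Nonempty := ⟨0, h0S⟩
      set x := S.max' hSne with hxdef
      have hxS : x ∈ S := S.max'_mem hSne
      have hx0 : x ≠ 0 := by
        intro h
        apply hS0
        apply Finset.Subset.antisymm
        · intro y hy
          have := S.le_max' y hy
          rw [← hxdef, h] at this
          simp only [Finset.mem_singleton]
          omega
        · intro y hy
          simp only [Finset.mem_singleton] at hy
          exact hy ▸ h0S
      have hins : insert x (S.erase x) = S := Finset.insert_erase hxS
      have hx : ∀ y ∈ S.erase x, y < x := fun y hy =>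
        lt_of_le_of_ne (S.le_max' y (Finset.mem_of_mem_erase hy)) (Finset.ne_of_mem_erase hy)
      have hcard : (S.erase x).card = c := by rw [Finset.card_erase_of_mem hxS]; omega
      have h0' : 0 ∈ S.erase x := Finset.mem_erase.mpr ⟨fun h => hx0 h.symm, h0S⟩
      have hc1 : 1 ≤ c := by
        have : 0 < (S.erase x).card := Finset.card_pos.mpr ⟨0, h0'⟩
        omega
      rw [← hins, master q hx m (fun ω => 0 ∈ ω.getD 0 ∅)]
      have hBeq : ∀ i, i < m + 1 →
          ospFP (S.erase x) (m + 1) (fun l => 0 ∈ (insB i x l).getD 0 ∅)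
            = ospFP (S.erase x) (m + 1) (fun ω => 0 ∈ ω.getD 0 ∅) := by
        intro i hi
        apply ospFP_congr
        intro l hpart hlen
        rw [insB_getD (by omega)]
        split_ifs with h
        · rw [← h, Finset.mem_insert]
          constructor
          · rintro (h' | h')
            · exact absurd h'.symm hx0
            · exact h'
          · exact Or.inr
        · exact Iff.rfl
      have hNeq0 : ospFP (S.erase x) m (fun l => 0 ∈ (insN 0 x l).getD 0 ∅) = ∅ := by
        rw [ospFP_congr (P' := fun _ => False), ospFP_false]
        intro l hpart hlen
        rw [insN_getD (by omega), if_neg (lt_irrefl 0), if_pos rfl]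
        simp only [Finset.mem_singleton, iff_false]
        exact fun h => hx0 h.symm
      have hNeq : ∀ i, 0 < i → i < m + 1 →
          ospFP (S.erase x) m (fun l => 0 ∈ (insN i x l).getD 0 ∅)
            = ospFP (S.erase x) m (fun ω => 0 ∈ ω.getD 0 ∅) := by
        intro i h0i hi
        apply ospFP_congr
        intro l hpart hlen
        rw [insN_getD (by omega), if_pos h0i]
      have hstep : ∀ i ∈ Finset.range (m + 1),
          q ^ (m - i) * ((∑ l ∈ ospFP (S.erase x) m (fun l => 0 ∈ (insN i x l).getD 0 ∅),
              q ^ invStar l)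
            + ∑ l ∈ ospFP (S.erase x) (m + 1) (fun l => 0 ∈ (insB i x l).getD 0 ∅),
              q ^ invStar l)
          = q ^ (m - i) * ((if i = 0 then 0 else
              ∑ l ∈ ospFP (S.erase x) m (fun ω => 0 ∈ ω.getD 0 ∅), q ^ invStar l)
            + ∑ l ∈ ospFP (S.erase x) (m + 1) (fun ω => 0 ∈ ω.getD 0 ∅), q ^ invStar l) := by
        intro i hi
        rw [Finset.mem_range] at hi
        rw [hBeq i hi]
        by_cases h : i = 0
        · subst h
          rw [hNeq0, if_pos rfl, Finset.sum_empty]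
        · rw [hNeq i (by omega) hi, if_neg h]
      rw [Finset.sum_congr rfl hstep, Finset.sum_range_succ']
      have hstep2 : ∀ i ∈ Finset.range m,
          q ^ (m - (i + 1)) * ((if i + 1 = 0 then 0 else
              ∑ l ∈ ospFP (S.erase x) m (fun ω => 0 ∈ ω.getD 0 ∅), q ^ invStar l)
            + ∑ l ∈ ospFP (S.erase x) (m + 1) (fun ω => 0 ∈ ω.getD 0 ∅), q ^ invStar l)
          = q ^ (m - 1 - i) * ((∑ l ∈ ospFP (S.erase x) m (fun ω => 0 ∈ ω.getD 0 ∅),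
              q ^ invStar l)
            + ∑ l ∈ ospFP (S.erase x) (m + 1) (fun ω => 0 ∈ ω.getD 0 ∅), q ^ invStar l) := by
        intro i hi
        rw [if_neg (by omega)]
        congr 2
        omega
      rw [Finset.sum_congr rfl hstep2, ← Finset.sum_mul, sum_pow_rev']
      have hkey : qInt q m * (∑ l ∈ ospFP (S.erase x) m (fun ω => 0 ∈ ω.getD 0 ∅),
          q ^ invStar l) = qFact q m * qStirling q c m := by
        cases m with
        | zero =>
          obtain ⟨c', rfl⟩ : ∃ c', c = c' + 1 := ⟨c - 1, by omega⟩
          rw [qInt_zero, qStirling_succ_zero]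
          ring
        | succ m' =>
          rw [ih (S.erase x) hcard h0' m', qFact_succ]
          ring
      have hkey2 := ih (S.erase x) hcard h0' m
      rw [hkey2, mul_add, hkey, qStirling_succ_succ, qInt_succ_last]
      simp only [Nat.sub_zero, eq_self_iff_true, if_true]
      ring

lemma gSum_eq {Rc : Type*} [CommSemiring Rc] (q : Rc) (k m : ℕ) :
    (∑ ω ∈ ospFP (Finset.Icc 1 (k + 1)) (m + 1) (fun ω => (k + 1) ∈ ω.getD m ∅),
      q ^ invStar ω) = qFact q m * qStirling q (k + 1) (m + 1) := by
  have hins : insert (k + 1) (Finset.Icc 1 k) = Finset.Icc 1 (k + 1) := by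
    ext y
    simp only [Finset.mem_insert, Finset.mem_Icc]
    omega
  have hx : ∀ y ∈ Finset.Icc 1 k, y < k + 1 := by
    intro y hy
    rw [Finset.mem_Icc] at hy
    omega
  have hxS : (k + 1) ∉ Finset.Icc 1 k := fun h => lt_irrefl _ (hx _ h)
  have hcard : (Finset.Icc 1 k).card = k := by rw [Nat.card_Icc]; omega
  rw [← hins, master q hx m (fun ω => (k + 1) ∈ ω.getD m ∅)]
  have hNeq : ∀ i, i < m + 1 →
      ospFP (Finset.Icc 1 k) m (fun l => (k + 1) ∈ (insN i (k + 1) l).getD m ∅)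
        = if i = m then ospFP (Finset.Icc 1 k) m (fun _ => True) else ∅ := by
    intro i hi
    by_cases h : i = m
    · subst h
      rw [if_pos rfl]
      apply ospFP_congr
      intro l hpart hlen
      rw [insN_getD (by omega), if_neg (lt_irrefl _), if_pos rfl]
      simp
    · rw [if_neg h, ospFP_congr (P' := fun _ => False), ospFP_false]
      intro l hpart hlen
      rw [insN_getD (by omega), if_neg (by omega), if_neg (by omega)]
      simp only [iff_false]
      exact not_mem_getD hxS hpart (m - 1)
  have hBeq : ∀ i, i < m + 1 →
      ospFP (Finset.Icc 1 k) (m + 1) (fun l => (k + 1) ∈ (insB i (k + 1) l).getD m ∅)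
        = if i = m then ospFP (Finset.Icc 1 k) (m + 1) (fun _ => True) else ∅ := by
    intro i hi
    by_cases h : i = m
    · subst h
      rw [if_pos rfl]
      apply ospFP_congr
      intro l hpart hlen
      rw [insB_getD (by omega), if_pos rfl]
      simp
    · rw [if_neg h, ospFP_congr (P' := fun _ => False), ospFP_false]
      intro l hpart hlen
      rw [insB_getD (by omega), if_neg (fun hh => h hh.symm)]
      simp only [iff_false]
      exact not_mem_getD hxS hpart m
  have hstep : ∀ i ∈ Finset.range (m + 1),
      q ^ (m - i) * ((∑ l ∈ ospFP (Finset.Icc 1 k) m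
          (fun l => (k + 1) ∈ (insN i (k + 1) l).getD m ∅), q ^ invStar l)
        + ∑ l ∈ ospFP (Finset.Icc 1 k) (m + 1)
          (fun l => (k + 1) ∈ (insB i (k + 1) l).getD m ∅), q ^ invStar l)
      = if i = m then ((∑ l ∈ ospFP (Finset.Icc 1 k) m (fun _ => True), q ^ invStar l)
          + ∑ l ∈ ospFP (Finset.Icc 1 k) (m + 1) (fun _ => True), q ^ invStar l) else 0 := by
    intro i hi
    rw [Finset.mem_range] at hi
    rw [hNeq i hi, hBeq i hi]
    by_cases h : i = m
    · subst h
      rw [if_pos rfl, if_pos rfl, if_pos rfl, Nat.sub_self, pow_zero, one_mul]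
    · rw [if_neg h, if_neg h, if_neg h]
      simp
  rw [Finset.sum_congr rfl hstep, Finset.sum_ite_eq' (Finset.range (m + 1)) m,
    if_pos (Finset.self_mem_range_succ m), hSum_eq q k _ hcard m, hSum_eq q k _ hcard (m + 1),
    qStirling_succ_succ, qFact_succ]
  ring

end QPB

open QPB in
/-- The q-poly-Bernoulli number
`B_{n,q}^{(k)} = ∑_{m=0}^{min(n,k)} [m]!_q {n+1 brace m+1}_q [m]!_q {k+1 brace m+1}_q`
is the generating polynomial of `q^{Inv*(σ)+Inv*(τ)}` over pairs `(σ, τ)`, where for some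
`m ≤ min(n,k)`, `σ` is an ordered set partition of `{0, 1, …, n}` into `m+1` blocks whose
first block contains `0`, and `τ` is an ordered set partition of `{1, …, k+1}` into `m+1`
blocks whose last block contains `k+1`. -/
theorem qPolyBernoulli_eq_sum_invStar (n k : ℕ) :
    (∑ m ∈ Finset.range (min n k + 1),
        qFact (Polynomial.X : Polynomial ℚ) m * qStirling (Polynomial.X : Polynomial ℚ) (n + 1) (m + 1) *
          qFact (Polynomial.X : Polynomial ℚ) m * qStirling (Polynomial.X : Polynomial ℚ) (k + 1) (m + 1))
      = ∑ᶠ p ∈ {p : List (Finset ℕ) × List (Finset ℕ) |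
            ∃ m ≤ min n k,
              IsOrderedPartitionOf (Finset.range (n + 1)) p.1 ∧ p.1.length = m + 1 ∧
                0 ∈ p.1.getD 0 ∅ ∧
              IsOrderedPartitionOf (Finset.Icc 1 (k + 1)) p.2 ∧ p.2.length = m + 1 ∧
                (k + 1) ∈ p.2.getD m ∅},
          (Polynomial.X : Polynomial ℚ) ^ (invStar p.1 + invStar p.2) := by
  classical
  have hset : {p : List (Finset ℕ) × List (Finset ℕ) |
      ∃ m ≤ min n k,
        IsOrderedPartitionOf (Finset.range (n + 1)) p.1 ∧ p.1.length = m + 1 ∧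
          0 ∈ p.1.getD 0 ∅ ∧
        IsOrderedPartitionOf (Finset.Icc 1 (k + 1)) p.2 ∧ p.2.length = m + 1 ∧
          (k + 1) ∈ p.2.getD m ∅}
      = ↑((Finset.range (min n k + 1)).biUnion (fun m =>
          (ospFP (Finset.range (n + 1)) (m + 1) (fun ω => 0 ∈ ω.getD 0 ∅)) ×ˢ
          (ospFP (Finset.Icc 1 (k + 1)) (m + 1) (fun ω => (k + 1) ∈ ω.getD m ∅)))) := by
    ext p
    simp only [Set.mem_setOf_eq, Finset.coe_biUnion, Set.mem_iUnion, Finset.mem_coe,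
      Finset.mem_product, mem_ospFP, Finset.mem_range]
    constructor
    · rintro ⟨m, hm, h1, h2, h3, h4, h5, h6⟩
      exact ⟨m, by omega, ⟨h1, h2, h3⟩, h4, h5, h6⟩
    · rintro ⟨m, hm, ⟨⟨h1, h2, h3⟩, h4, h5, h6⟩⟩
      exact ⟨m, by omega, h1, h2, h3, h4, h5, h6⟩
  rw [hset, finsum_mem_coe_finset]
  rw [Finset.sum_biUnion ?disj]
  case disj =>
    intro a _ b _ hab
    simp only [Function.onFun]
    rw [Finset.disjoint_left]
    rintro p hp1 hp2
    obtain ⟨hp1a, -⟩ := Finset.mem_product.mp hp1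
    obtain ⟨hp2a, -⟩ := Finset.mem_product.mp hp2
    obtain ⟨-, hl1, -⟩ := mem_ospFP.mp hp1a
    obtain ⟨-, hl2, -⟩ := mem_ospFP.mp hp2a
    exact hab (by omega)
  refine Finset.sum_congr rfl ?_
  intro m hm
  rw [Finset.sum_product]
  have hprod : (∑ σ ∈ ospFP (Finset.range (n + 1)) (m + 1) (fun ω => 0 ∈ ω.getD 0 ∅),
        ∑ τ ∈ ospFP (Finset.Icc 1 (k + 1)) (m + 1) (fun ω => (k + 1) ∈ ω.getD m ∅),
          (Polynomial.X : Polynomial ℚ) ^ (invStar σ + invStar τ))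
      = (∑ σ ∈ ospFP (Finset.range (n + 1)) (m + 1) (fun ω => 0 ∈ ω.getD 0 ∅),
          (Polynomial.X : Polynomial ℚ) ^ invStar σ)
        * ∑ τ ∈ ospFP (Finset.Icc 1 (k + 1)) (m + 1) (fun ω => (k + 1) ∈ ω.getD m ∅),
            (Polynomial.X : Polynomial ℚ) ^ invStar τ := by
    rw [Finset.sum_mul_sum]
    exact Finset.sum_congr rfl fun σ _ => Finset.sum_congr rfl fun τ _ => pow_add _ _ _
  rw [hprod]
  rw [fSum_eq (Polynomial.X : Polynomial ℚ) (n + 1) (Finset.range (n + 1))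
    (Finset.card_range (n + 1)) (Finset.mem_range.mpr (by omega)) m,
    gSum_eq (Polynomial.X : Polynomial ℚ) k m]
  ring
end

section
/- For all n, k ≥ 0, ∑_{A} q^{w(A)} = ∑_{m=0}^{min(n,k)} m! · {n+1 brace m+1}*_q · m! · {k+1 brace m+1}*_q, where the left-hand sum runs over all lonesum 0-1 matrices A of size n × k (rows indexed 1, …, n and columns indexed 1, …, k), and w(A) is the sum of the indices of the all-zero rows of A plus the sum of the indices of the all-zero columns of A. -/
open Finset Polynomial

attribute [local instance] Classical.propDecidable

/-- A 0-1 matrix (with Boolean entries) is lonesum if it contains neither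
`(0 1 / 1 0)` nor `(1 0 / 0 1)` as a 2×2 submatrix. -/
def IsLonesum {n k : ℕ} (M : Fin n → Fin k → Bool) : Prop :=
  ∀ i1 i2 : Fin n, ∀ j1 j2 : Fin k, i1 < i2 → j1 < j2 →
    ¬(M i1 j1 = false ∧ M i1 j2 = true ∧ M i2 j1 = true ∧ M i2 j2 = false) ∧
    ¬(M i1 j1 = true ∧ M i1 j2 = false ∧ M i2 j1 = false ∧ M i2 j2 = true)

/-- The weight `w(A)`: the sum of the indices (in `1, …, n`) of the all-zero rows
plus the sum of the indices (in `1, …, k`) of the all-zero columns. -/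
def lonesumWeight {n k : ℕ} (M : Fin n → Fin k → Bool) : ℕ :=
  (∑ i : Fin n, if ∀ j, M i j = false then (i : ℕ) + 1 else 0) +
    (∑ j : Fin k, if ∀ i, M i j = false then (j : ℕ) + 1 else 0)

/-- `π` is an (unordered) set partition of the finite set `S` into nonempty blocks. -/
def IsPartitionOf (S : Finset ℕ) (π : Finset (Finset ℕ)) : Prop :=
  (∀ B ∈ π, B.Nonempty) ∧ (π : Set (Finset ℕ)).PairwiseDisjoint id ∧
    (∀ x, x ∈ S ↔ ∃ B ∈ π, x ∈ B)

/-- The Cigler weight of a partition: the sum of the elements of the block containing `0`. -/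
def ciglerWeight (π : Finset (Finset ℕ)) : ℕ :=
  ∑ B ∈ π.filter (fun B => 0 ∈ B), ∑ i ∈ B, i

/-- Cigler's q-Stirling number of the second kind `{n brace k}*_q`: the generating
polynomial of `q^{∑_{i ∈ B₀} i}` over all partitions of `{0, 1, …, n-1}` into `k`
nonempty blocks, where `B₀` is the block containing `0`. -/
noncomputable def ciglerStirling (n k : ℕ) : Polynomial ℚ :=
  ∑ᶠ π ∈ {π : Finset (Finset ℕ) | IsPartitionOf (Finset.range n) π ∧ π.card = k},
    (Polynomial.X : Polynomial ℚ) ^ ciglerWeight π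

namespace LSAux

variable {n k : ℕ}

def myle {k : ℕ} (r s : Fin k → Bool) : Prop := ∀ j, r j = true → s j = true

lemma myle_refl (r : Fin k → Bool) : myle r r := fun _ h => h

lemma myle_trans {r s u : Fin k → Bool} (h1 : myle r s) (h2 : myle s u) : myle r u :=
  fun j h => h2 j (h1 j h)

lemma myle_antisymm {r s : Fin k → Bool} (h1 : myle r s) (h2 : myle s r) : r = s := by
  funext j
  have a := h1 j; have b := h2 j
  cases hr : r j <;> cases hs : s j <;> simp_all

noncomputable def Drows (M : Fin n → Fin k → Bool) : Finset (Fin k → Bool) :=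
  (Finset.univ.image M).filter (fun r => ∃ j, r j = true)

lemma mem_Drows {M : Fin n → Fin k → Bool} {r : Fin k → Bool} :
    r ∈ Drows M ↔ (∃ i, M i = r) ∧ ∃ j, r j = true := by
  simp [Drows]

noncomputable def rnk (D : Finset (Fin k → Bool)) (r : Fin k → Bool) : ℕ :=
  (D.filter (fun r' => myle r' r)).card

lemma comparable {M : Fin n → Fin k → Bool} (hM : IsLonesum M) (i i' : Fin n) :
    myle (M i) (M i') ∨ myle (M i') (M i) := by
  by_contra h
  push_neg at h
  obtain ⟨h1, h2⟩ := h
  simp only [myle, not_forall] at h1 h2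
  obtain ⟨j1, hj1t, hj1f⟩ := h1
  obtain ⟨j2, hj2t, hj2f⟩ := h2
  rw [Bool.not_eq_true] at hj1f hj2f
  have hii : i ≠ i' := by rintro rfl; rw [hj1t] at hj1f; exact Bool.true_eq_false.mp hj1f
  rcases lt_or_gt_of_ne hii with hi | hi <;>
    rcases lt_trichotomy j1 j2 with hj | hj | hj
  · exact (hM i i' j1 j2 hi hj).2 ⟨hj1t, hj2f, hj1f, hj2t⟩
  · subst hj; rw [hj1t] at hj2f; exact Bool.true_eq_false.mp hj2f
  · exact (hM i i' j2 j1 hi hj).1 ⟨hj2f, hj1t, hj2t, hj1f⟩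
  · exact (hM i' i j1 j2 hi hj).1 ⟨hj1f, hj2t, hj1t, hj2f⟩
  · subst hj; rw [hj1t] at hj2f; exact Bool.true_eq_false.mp hj2f
  · exact (hM i' i j2 j1 hi hj).2 ⟨hj2t, hj1f, hj2f, hj1t⟩

lemma comparable' {M : Fin n → Fin k → Bool} (hM : IsLonesum M) {r s : Fin k → Bool}
    (hr : r ∈ Drows M) (hs : s ∈ Drows M) : myle r s ∨ myle s r := by
  obtain ⟨⟨i, rfl⟩, -⟩ := mem_Drows.mp hr
  obtain ⟨⟨i', rfl⟩, -⟩ := mem_Drows.mp hs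
  exact comparable hM i i'

lemma rnk_le_rnk {D : Finset (Fin k → Bool)} {r s : Fin k → Bool} (h : myle r s) :
    rnk D r ≤ rnk D s := by
  apply Finset.card_le_card
  intro r' hr'
  rw [Finset.mem_filter] at hr' ⊢
  exact ⟨hr'.1, myle_trans hr'.2 h⟩

lemma rnk_le_iff {M : Fin n → Fin k → Bool} (hM : IsLonesum M) {r s : Fin k → Bool}
    (hr : r ∈ Drows M) (hs : s ∈ Drows M) :
    rnk (Drows M) r ≤ rnk (Drows M) s ↔ myle r s := by
  constructor
  · intro hle
    by_contra hn
    have hsr : myle s r := (comparable' hM hr hs).resolve_left hn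
    have hsub : (Drows M).filter (fun r' => myle r' s) ⊂ (Drows M).filter (fun r' => myle r' r) := by
      constructor
      · intro r' hr'
        rw [Finset.mem_filter] at hr' ⊢
        exact ⟨hr'.1, myle_trans hr'.2 hsr⟩
      · intro hsub'
        have : r ∈ (Drows M).filter (fun r' => myle r' s) :=
          hsub' (Finset.mem_filter.mpr ⟨hr, myle_refl r⟩)
        exact hn (Finset.mem_filter.mp this).2
    have := Finset.card_lt_card hsub
    unfold rnk at hle
    omega
  · exact rnk_le_rnk

lemma rnk_injOn {M : Fin n → Fin k → Bool} (hM : IsLonesum M) {r s : Fin k → Bool}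
    (hr : r ∈ Drows M) (hs : s ∈ Drows M) (h : rnk (Drows M) r = rnk (Drows M) s) : r = s :=
  myle_antisymm ((rnk_le_iff hM hr hs).mp h.le) ((rnk_le_iff hM hs hr).mp h.ge)

lemma rnk_pos {D : Finset (Fin k → Bool)} {r : Fin k → Bool} (hr : r ∈ D) : 1 ≤ rnk D r := by
  rw [rnk, Nat.one_le_iff_ne_zero, Ne, Finset.card_eq_zero, ← Ne, ← Finset.nonempty_iff_ne_empty]
  exact ⟨r, Finset.mem_filter.mpr ⟨hr, myle_refl r⟩⟩

lemma rnk_le_card {D : Finset (Fin k → Bool)} (r : Fin k → Bool) : rnk D r ≤ D.card :=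
  Finset.card_le_card (Finset.filter_subset _ _)

lemma rnk_surj {M : Fin n → Fin k → Bool} (hM : IsLonesum M) {t : ℕ} (ht1 : 1 ≤ t)
    (ht2 : t ≤ (Drows M).card) : ∃ r ∈ Drows M, rnk (Drows M) r = t := by
  have himg : (Drows M).image (rnk (Drows M)) ⊆ Finset.Icc 1 (Drows M).card := by
    intro x hx
    obtain ⟨r, hr, rfl⟩ := Finset.mem_image.mp hx
    exact Finset.mem_Icc.mpr ⟨rnk_pos hr, rnk_le_card r⟩
  have hcard : (Drows M).image (rnk (Drows M)) = Finset.Icc 1 (Drows M).card := by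
    apply Finset.eq_of_subset_of_card_le himg
    rw [Finset.card_image_of_injOn (fun r hr s hs h => rnk_injOn hM hr hs h), Nat.card_Icc]
    omega
  have : t ∈ (Drows M).image (rnk (Drows M)) := by
    rw [hcard]; exact Finset.mem_Icc.mpr ⟨ht1, ht2⟩
  obtain ⟨r, hr, hrt⟩ := Finset.mem_image.mp this
  exact ⟨r, hr, hrt⟩


noncomputable def fM (M : Fin n → Fin k → Bool) (i : Fin n) : ℕ := rnk (Drows M) (M i)

noncomputable def cj (M : Fin n → Fin k → Bool) (j : Fin k) : ℕ :=
  ((Drows M).filter (fun r => r j = true)).card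

noncomputable def gcol (M : Fin n → Fin k → Bool) (j : Fin k) : ℕ :=
  if ∀ i, M i j = false then 0 else (Drows M).card + 1 - cj M j

lemma fM_eq_zero_iff {M : Fin n → Fin k → Bool} (i : Fin n) :
    fM M i = 0 ↔ ∀ j, M i j = false := by
  constructor
  · intro h
    by_contra hn
    push_neg at hn
    obtain ⟨j, hj⟩ := hn
    rw [ne_eq, Bool.not_eq_false] at hj
    have : M i ∈ Drows M := mem_Drows.mpr ⟨⟨i, rfl⟩, j, hj⟩
    have := rnk_pos (D := Drows M) this
    rw [fM] at h; omega
  · intro h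
    rw [fM, rnk, Finset.card_eq_zero, Finset.filter_eq_empty_iff]
    intro r hr hle
    obtain ⟨-, j, hj⟩ := mem_Drows.mp hr
    have := hle j hj
    rw [h j] at this
    exact Bool.false_ne_true this

lemma cj_le_card (M : Fin n → Fin k → Bool) (j : Fin k) : cj M j ≤ (Drows M).card :=
  Finset.card_le_card (Finset.filter_subset _ _)

lemma cj_pos {M : Fin n → Fin k → Bool} {j : Fin k} (h : ¬ ∀ i, M i j = false) :
    1 ≤ cj M j := by
  push_neg at h
  obtain ⟨i, hi⟩ := h
  rw [ne_eq, Bool.not_eq_false] at hi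
  rw [cj, Nat.one_le_iff_ne_zero, Ne, Finset.card_eq_zero, ← Ne, ← Finset.nonempty_iff_ne_empty]
  exact ⟨M i, Finset.mem_filter.mpr ⟨mem_Drows.mpr ⟨⟨i, rfl⟩, j, hi⟩, hi⟩⟩

lemma gcol_eq_zero_iff {M : Fin n → Fin k → Bool} (j : Fin k) :
    gcol M j = 0 ↔ ∀ i, M i j = false := by
  rw [gcol]
  split
  · simp_all
  · rename_i h
    have h1 := cj_pos h
    have h2 := cj_le_card M j
    constructor
    · intro h'; omega
    · intro h'; exact absurd h' h

lemma gcol_le_card (M : Fin n → Fin k → Bool) (j : Fin k) : gcol M j ≤ (Drows M).card := by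
  rw [gcol]; split
  · omega
  · rename_i h; have := cj_pos h; omega

/-- The key decoding identity for lonesum matrices. -/
lemma entry_iff {M : Fin n → Fin k → Bool} (hM : IsLonesum M) (i : Fin n) (j : Fin k) :
    M i j = true ↔ (1 ≤ gcol M j ∧ gcol M j ≤ fM M i) := by
  set A := (Drows M).filter (fun r' => myle r' (M i)) with hA
  set B := (Drows M).filter (fun r => r j = true) with hB
  have hAD : A ⊆ Drows M := Finset.filter_subset _ _
  have hBD : B ⊆ Drows M := Finset.filter_subset _ _
  have hcardA : A.card = fM M i := rfl
  have hcardB : B.card = cj M j := rfl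
  constructor
  · intro hij
    have hcol : ¬ ∀ i', M i' j = false := by
      push_neg
      exact ⟨i, by simp [hij]⟩
    have hMiD : M i ∈ Drows M := mem_Drows.mpr ⟨⟨i, rfl⟩, j, hij⟩
    have hcj1 := cj_pos hcol
    have hcjm := cj_le_card M j
    have hgcol : gcol M j = (Drows M).card + 1 - cj M j := by rw [gcol, if_neg hcol]
    have hunion : A ∪ B = Drows M := by
      apply Finset.Subset.antisymm (Finset.union_subset hAD hBD)
      intro r hr
      rcases comparable' hM hr hMiD with h | h
      · exact Finset.mem_union_left _ (Finset.mem_filter.mpr ⟨hr, h⟩)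
      · exact Finset.mem_union_right _ (Finset.mem_filter.mpr ⟨hr, h j hij⟩)
    have hinter : 1 ≤ (A ∩ B).card := by
      rw [Nat.one_le_iff_ne_zero, Ne, Finset.card_eq_zero, ← Ne, ← Finset.nonempty_iff_ne_empty]
      exact ⟨M i, Finset.mem_inter.mpr ⟨Finset.mem_filter.mpr ⟨hMiD, myle_refl _⟩,
        Finset.mem_filter.mpr ⟨hMiD, hij⟩⟩⟩
    have hkey := Finset.card_union_add_card_inter A B
    rw [hunion, hcardA, hcardB] at hkey
    omega
  · rintro ⟨hg1, hg2⟩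
    by_contra hij
    rw [Bool.not_eq_true] at hij
    have hcol : ¬ ∀ i', M i' j = false := by
      intro h
      rw [(gcol_eq_zero_iff j).mpr h] at hg1
      omega
    have hcj1 := cj_pos hcol
    have hcjm := cj_le_card M j
    have hgcol : gcol M j = (Drows M).card + 1 - cj M j := by rw [gcol, if_neg hcol]
    have hinter : A ∩ B = ∅ := by
      rw [Finset.eq_empty_iff_forall_notMem]
      intro r hr
      obtain ⟨hrA, hrB⟩ := Finset.mem_inter.mp hr
      have h1 := (Finset.mem_filter.mp hrA).2
      have h2 := (Finset.mem_filter.mp hrB).2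
      have := h1 j h2
      rw [hij] at this
      exact Bool.false_ne_true this
    have hkey := Finset.card_union_add_card_inter A B
    rw [hinter, hcardA, hcardB] at hkey
    have hle : (A ∪ B).card ≤ (Drows M).card := Finset.card_le_card (Finset.union_subset hAD hBD)
    simp only [Finset.card_empty] at hkey
    omega

lemma exists_col {M : Fin n → Fin k → Bool} (hM : IsLonesum M) {r : Fin k → Bool}
    (hr : r ∈ Drows M) :
    ∃ j : Fin k, r j = true ∧ ∀ r' ∈ Drows M, (r' j = true ↔ myle r r') := by
  have hgood : ∃ j : Fin k, r j = true ∧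
      ∀ r' ∈ Drows M, rnk (Drows M) r' < rnk (Drows M) r → r' j = false := by
    rcases Nat.lt_or_ge (rnk (Drows M) r) 2 with h2 | h2
    · obtain ⟨-, j, hj⟩ := mem_Drows.mp hr
      refine ⟨j, hj, fun r' hr' hlt => absurd (rnk_pos hr') (by omega)⟩
    · obtain ⟨rm, hrm, hrmrk⟩ := rnk_surj hM (t := rnk (Drows M) r - 1) (by omega)
        (by have := rnk_le_card (D := Drows M) r; omega)
      have hne : ¬ myle r rm := by
        intro h
        have := rnk_le_rnk (D := Drows M) h
        omega
      rw [myle] at hne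
      push_neg at hne
      obtain ⟨j, hjt, hjf⟩ := hne
      rw [ne_eq, Bool.not_eq_true] at hjf
      refine ⟨j, hjt, fun r' hr' hlt => ?_⟩
      have : rnk (Drows M) r' ≤ rnk (Drows M) rm := by omega
      have hle := (rnk_le_iff hM hr' hrm).mp this
      cases h' : r' j with
      | false => rfl
      | true => rw [hle j h'] at hjf; exact (Bool.true_eq_false.mp hjf).elim
  obtain ⟨j, hjt, hjf⟩ := hgood
  refine ⟨j, hjt, fun r' hr' => ⟨fun h => ?_, fun h => h j hjt⟩⟩
  refine (rnk_le_iff hM hr hr').mp ?_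
  by_contra hn
  rw [not_le] at hn
  rw [hjf r' hr' hn] at h
  exact Bool.false_ne_true h

lemma gcol_cover {M : Fin n → Fin k → Bool} (hM : IsLonesum M) {t : ℕ} (ht1 : 1 ≤ t)
    (ht2 : t ≤ (Drows M).card) : ∃ j : Fin k, gcol M j = t := by
  obtain ⟨r, hr, hrt⟩ := rnk_surj hM ht1 ht2
  obtain ⟨j, hjt, hjiff⟩ := exists_col hM hr
  obtain ⟨⟨i0, hi0⟩, -⟩ := mem_Drows.mp hr
  have hcol : ¬ ∀ i', M i' j = false := by
    push_neg
    refine ⟨i0, ?_⟩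
    simp [hi0, hjt]
  have hBup : (Drows M).filter (fun r' => r' j = true) = (Drows M).filter (fun r' => myle r r') := by
    apply Finset.filter_congr
    intro r' hr'
    simp only [hjiff r' hr']
  have hpart : ((Drows M).filter (fun r' => myle r r')).card = (Drows M).card + 1 - t := by
    set U := (Drows M).filter (fun r' => myle r r') with hU
    set Dn := (Drows M).filter (fun r' => myle r' r) with hDn
    have hDncard : Dn.card = t := hrt
    have hUD : U ⊆ Drows M := Finset.filter_subset _ _
    have hDnD : Dn ⊆ Drows M := Finset.filter_subset _ _
    have hunion : Dn ∪ U = Drows M := by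
      apply Finset.Subset.antisymm (Finset.union_subset hDnD hUD)
      intro r' hr'
      rcases comparable' hM hr' hr with h | h
      · exact Finset.mem_union_left _ (Finset.mem_filter.mpr ⟨hr', h⟩)
      · exact Finset.mem_union_right _ (Finset.mem_filter.mpr ⟨hr', h⟩)
    have hinter : Dn ∩ U = {r} := by
      apply Finset.Subset.antisymm
      · intro r' hr'
        obtain ⟨h1, h2⟩ := Finset.mem_inter.mp hr'
        rw [Finset.mem_singleton]
        exact myle_antisymm (Finset.mem_filter.mp h1).2 (Finset.mem_filter.mp h2).2
      · rw [Finset.singleton_subset_iff]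
        exact Finset.mem_inter.mpr ⟨Finset.mem_filter.mpr ⟨hr, myle_refl r⟩,
          Finset.mem_filter.mpr ⟨hr, myle_refl r⟩⟩
    have hkey := Finset.card_union_add_card_inter Dn U
    rw [hunion, hinter] at hkey
    simp only [Finset.card_singleton] at hkey
    have := rnk_le_card (D := Drows M) r
    rw [rnk] at this
    omega
  have hcj : cj M j = (Drows M).card + 1 - t := by rw [cj, hBup, hpart]
  have hg : gcol M j = (Drows M).card + 1 - cj M j := by rw [gcol, if_neg hcol]
  refine ⟨j, ?_⟩
  rw [hg, hcj]
  omega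


noncomputable def CovF (n m : ℕ) : Finset (Fin n → ℕ) :=
  (Fintype.piFinset fun _ : Fin n => Finset.range (m+1)).filter
    (fun f => ∀ t, 1 ≤ t → t ≤ m → ∃ i, f i = t)

lemma mem_CovF {m : ℕ} {f : Fin n → ℕ} :
    f ∈ CovF n m ↔ (∀ i, f i ≤ m) ∧ ∀ t, 1 ≤ t → t ≤ m → ∃ i, f i = t := by
  simp [CovF, Fintype.mem_piFinset, Nat.lt_succ_iff]

def wF {n : ℕ} (f : Fin n → ℕ) : ℕ := ∑ i, if f i = 0 then (i : ℕ) + 1 else 0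

noncomputable def rho {k : ℕ} (g : Fin k → ℕ) (t : ℕ) : Fin k → Bool :=
  fun j => if 1 ≤ g j ∧ g j ≤ t then true else false

noncomputable def Enc {n k : ℕ} (f : Fin n → ℕ) (g : Fin k → ℕ) : Fin n → Fin k → Bool :=
  fun i => rho g (f i)

lemma rho_true_iff {g : Fin k → ℕ} {t : ℕ} {j : Fin k} :
    rho g t j = true ↔ 1 ≤ g j ∧ g j ≤ t := by
  simp only [rho]
  split <;> simp_all

lemma rho_false_iff {g : Fin k → ℕ} {t : ℕ} {j : Fin k} :
    rho g t j = false ↔ ¬(1 ≤ g j ∧ g j ≤ t) := by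
  rw [← Bool.not_eq_true]
  exact not_congr rho_true_iff

lemma enc_lonesum (f : Fin n → ℕ) (g : Fin k → ℕ) : IsLonesum (Enc f g) := by
  intro i1 i2 j1 j2 _ _
  constructor <;> rintro ⟨h1, h2, h3, h4⟩ <;>
    simp only [show ∀ i j, Enc f g i j = rho g (f i) j from fun _ _ => rfl,
      rho_true_iff, rho_false_iff] at h1 h2 h3 h4 <;> omega

lemma enc_row_zero_iff {m : ℕ} {f : Fin n → ℕ} {g : Fin k → ℕ} (hg : g ∈ CovF k m)
    {i : Fin n} (hfi : f i ≤ m) : (∀ j, Enc f g i j = false) ↔ f i = 0 := by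
  constructor
  · intro h
    by_contra h0
    obtain ⟨j, hj⟩ := (mem_CovF.mp hg).2 (f i) (by omega) hfi
    have := h j
    rw [show Enc f g i j = rho g (f i) j from rfl, rho_false_iff] at this
    exact this ⟨by omega, by omega⟩
  · intro h j
    rw [show Enc f g i j = rho g (f i) j from rfl, rho_false_iff, h]
    omega

lemma enc_col_zero_iff {m : ℕ} {f : Fin n → ℕ} {g : Fin k → ℕ} (hf : f ∈ CovF n m)
    (hgle : ∀ j, g j ≤ m) {j : Fin k} : (∀ i, Enc f g i j = false) ↔ g j = 0 := by
  constructor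
  · intro h
    by_contra h0
    obtain ⟨i, hi⟩ := (mem_CovF.mp hf).2 (g j) (by omega) (hgle j)
    have := h i
    rw [show Enc f g i j = rho g (f i) j from rfl, rho_false_iff] at this
    exact this ⟨by omega, by omega⟩
  · intro h i
    rw [show Enc f g i j = rho g (f i) j from rfl, rho_false_iff, h]
    omega

lemma drows_enc {m : ℕ} {f : Fin n → ℕ} {g : Fin k → ℕ} (hf : f ∈ CovF n m)
    (hg : g ∈ CovF k m) : Drows (Enc f g) = (Finset.Icc 1 m).image (rho g) := by
  obtain ⟨hf1, hf2⟩ := mem_CovF.mp hf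
  obtain ⟨hg1, hg2⟩ := mem_CovF.mp hg
  ext r
  rw [mem_Drows, Finset.mem_image]
  constructor
  · rintro ⟨⟨i, rfl⟩, j, hj⟩
    refine ⟨f i, Finset.mem_Icc.mpr ⟨?_, hf1 i⟩, rfl⟩
    rw [show Enc f g i j = rho g (f i) j from rfl, rho_true_iff] at hj
    omega
  · rintro ⟨t, ht, rfl⟩
    rw [Finset.mem_Icc] at ht
    obtain ⟨i, hi⟩ := hf2 t ht.1 ht.2
    obtain ⟨j, hj⟩ := hg2 t ht.1 ht.2
    exact ⟨⟨i, by rw [show Enc f g i = rho g (f i) from rfl, hi]⟩, j,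
      rho_true_iff.mpr ⟨by omega, by omega⟩⟩

lemma rho_injOn {m : ℕ} {g : Fin k → ℕ} (hg : g ∈ CovF k m) :
    Set.InjOn (rho g) (Finset.Icc 1 m) := by
  obtain ⟨hg1, hg2⟩ := mem_CovF.mp hg
  intro t ht t' ht' h
  simp only [Finset.coe_Icc, Set.mem_Icc] at ht ht'
  by_contra hne
  rcases lt_or_gt_of_ne hne with hlt | hlt
  · obtain ⟨j, hj⟩ := hg2 t' (by omega) ht'.2
    have h1 : rho g t' j = true := rho_true_iff.mpr (by omega)
    have h2 : rho g t j = false := rho_false_iff.mpr (by omega)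
    rw [← h, h2] at h1
    exact Bool.false_ne_true h1
  · obtain ⟨j, hj⟩ := hg2 t (by omega) ht.2
    have h1 : rho g t j = true := rho_true_iff.mpr (by omega)
    have h2 : rho g t' j = false := rho_false_iff.mpr (by omega)
    rw [h, h2] at h1
    exact Bool.false_ne_true h1

lemma card_drows_enc {m : ℕ} {f : Fin n → ℕ} {g : Fin k → ℕ} (hf : f ∈ CovF n m)
    (hg : g ∈ CovF k m) : (Drows (Enc f g)).card = m := by
  rw [drows_enc hf hg, Finset.card_image_of_injOn (rho_injOn hg), Nat.card_Icc]
  omega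

lemma myle_rho {m : ℕ} {g : Fin k → ℕ} (hg : g ∈ CovF k m) {t s : ℕ} (ht : t ≤ m) :
    myle (rho g t) (rho g s) ↔ t ≤ s := by
  obtain ⟨hg1, hg2⟩ := mem_CovF.mp hg
  constructor
  · intro h
    by_contra hn
    rw [not_le] at hn
    obtain ⟨j, hj⟩ := hg2 (s+1) (by omega) (by omega)
    have h1 : rho g t j = true := rho_true_iff.mpr (by omega)
    have := h j h1
    rw [rho_true_iff] at this
    omega
  · intro h j hj
    rw [rho_true_iff] at hj ⊢
    omega

lemma fM_enc {m : ℕ} {f : Fin n → ℕ} {g : Fin k → ℕ} (hf : f ∈ CovF n m)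
    (hg : g ∈ CovF k m) (i : Fin n) : fM (Enc f g) i = f i := by
  obtain ⟨hf1, hf2⟩ := mem_CovF.mp hf
  rw [fM, rnk, drows_enc hf hg]
  have hfilter : ((Finset.Icc 1 m).image (rho g)).filter (fun r' => myle r' (Enc f g i))
      = (Finset.Icc 1 (f i)).image (rho g) := by
    ext r
    rw [Finset.mem_filter, Finset.mem_image, Finset.mem_image]
    constructor
    · rintro ⟨⟨t, ht, rfl⟩, hle⟩
      rw [Finset.mem_Icc] at ht
      refine ⟨t, Finset.mem_Icc.mpr ⟨ht.1, ?_⟩, rfl⟩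
      exact (myle_rho hg ht.2).mp hle
    · rintro ⟨t, ht, rfl⟩
      rw [Finset.mem_Icc] at ht
      exact ⟨⟨t, Finset.mem_Icc.mpr ⟨ht.1, le_trans ht.2 (hf1 i)⟩, rfl⟩,
        (myle_rho hg (le_trans ht.2 (hf1 i))).mpr ht.2⟩
  rw [hfilter, Finset.card_image_of_injOn ((rho_injOn hg).mono ?_), Nat.card_Icc]
  · omega
  · intro x hx
    simp only [Finset.coe_Icc, Set.mem_Icc] at hx ⊢
    exact ⟨hx.1, le_trans hx.2 (hf1 i)⟩

lemma gcol_enc {m : ℕ} {f : Fin n → ℕ} {g : Fin k → ℕ} (hf : f ∈ CovF n m)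
    (hg : g ∈ CovF k m) (j : Fin k) : gcol (Enc f g) j = g j := by
  obtain ⟨hf1, hf2⟩ := mem_CovF.mp hf
  obtain ⟨hg1, hg2⟩ := mem_CovF.mp hg
  rcases Nat.eq_zero_or_pos (g j) with h0 | hpos
  · have hz : ∀ i, Enc f g i j = false := (enc_col_zero_iff hf hg1).mpr h0
    rw [gcol, if_pos hz, h0]
  · have hcol : ¬ ∀ i, Enc f g i j = false := by
      rw [enc_col_zero_iff hf hg1]
      omega
    have hcj : cj (Enc f g) j = m + 1 - g j := by
      rw [cj, drows_enc hf hg]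
      have hfilter : ((Finset.Icc 1 m).image (rho g)).filter (fun r => r j = true)
          = (Finset.Icc (g j) m).image (rho g) := by
        ext r
        rw [Finset.mem_filter, Finset.mem_image, Finset.mem_image]
        constructor
        · rintro ⟨⟨t, ht, rfl⟩, hrj⟩
          rw [Finset.mem_Icc] at ht
          rw [rho_true_iff] at hrj
          exact ⟨t, Finset.mem_Icc.mpr ⟨hrj.2, ht.2⟩, rfl⟩
        · rintro ⟨t, ht, rfl⟩
          rw [Finset.mem_Icc] at ht
          exact ⟨⟨t, Finset.mem_Icc.mpr ⟨by omega, ht.2⟩, rfl⟩,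
            rho_true_iff.mpr ⟨hpos, ht.1⟩⟩
      rw [hfilter, Finset.card_image_of_injOn ((rho_injOn hg).mono ?_), Nat.card_Icc]
      intro x hx
      simp only [Finset.coe_Icc, Set.mem_Icc] at hx ⊢
      exact ⟨by omega, hx.2⟩
    have hg' : gcol (Enc f g) j = (Drows (Enc f g)).card + 1 - cj (Enc f g) j := by
      rw [gcol, if_neg hcol]
    rw [hg', hcj, card_drows_enc hf hg]
    have := hg1 j
    omega

lemma weight_enc {m : ℕ} {f : Fin n → ℕ} {g : Fin k → ℕ} (hf : f ∈ CovF n m)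
    (hg : g ∈ CovF k m) : lonesumWeight (Enc f g) = wF f + wF g := by
  obtain ⟨hf1, hf2⟩ := mem_CovF.mp hf
  obtain ⟨hg1, hg2⟩ := mem_CovF.mp hg
  rw [lonesumWeight, wF, wF]
  congr 1
  · apply Finset.sum_congr rfl
    intro i _
    simp only [enc_row_zero_iff hg (hf1 i)]
  · apply Finset.sum_congr rfl
    intro j _
    simp only [enc_col_zero_iff hf hg1]

lemma fM_mem_CovF {M : Fin n → Fin k → Bool} (hM : IsLonesum M) :
    fM M ∈ CovF n ((Drows M).card) := by
  rw [mem_CovF]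
  refine ⟨fun i => rnk_le_card _, fun t ht1 ht2 => ?_⟩
  obtain ⟨r, hr, hrt⟩ := rnk_surj hM ht1 ht2
  obtain ⟨⟨i, rfl⟩, -⟩ := mem_Drows.mp hr
  exact ⟨i, hrt⟩

lemma gcol_mem_CovF {M : Fin n → Fin k → Bool} (hM : IsLonesum M) :
    gcol M ∈ CovF k ((Drows M).card) :=
  mem_CovF.mpr ⟨gcol_le_card M, fun _ ht1 ht2 => gcol_cover hM ht1 ht2⟩

lemma enc_fM_gcol {M : Fin n → Fin k → Bool} (hM : IsLonesum M) :
    Enc (fM M) (gcol M) = M := by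
  funext i j
  by_cases h : M i j = true
  · rw [h]
    exact rho_true_iff.mpr ((entry_iff hM i j).mp h)
  · rw [Bool.not_eq_true] at h
    rw [h]
    refine rho_false_iff.mpr (fun hc => ?_)
    have := (entry_iff hM i j).mpr hc
    rw [h] at this
    exact Bool.false_ne_true this

lemma card_drows_le {M : Fin n → Fin k → Bool} (hM : IsLonesum M) :
    (Drows M).card ≤ min n k := by
  refine le_min ?_ ?_
  · calc (Drows M).card ≤ (Finset.univ.image M).card :=
          Finset.card_le_card (Finset.filter_subset _ _)
      _ ≤ (Finset.univ : Finset (Fin n)).card := Finset.card_image_le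
      _ = n := by simp
  · rcases Nat.eq_zero_or_pos (Drows M).card with h | h
    · omega
    · have hsurj : Set.SurjOn (gcol M) ((Finset.univ : Finset (Fin k)) : Set (Fin k))
          ((Finset.Icc 1 (Drows M).card : Finset ℕ) : Set ℕ) := by
        intro t ht
        simp only [Finset.coe_Icc, Set.mem_Icc] at ht
        obtain ⟨j, hj⟩ := gcol_cover hM ht.1 ht.2
        exact ⟨j, by simp, hj⟩
      have := Finset.card_le_card_of_surjOn _ hsurj
      rw [Nat.card_Icc] at this
      simpa using this

lemma sum_fiber (n k m : ℕ) :
    ∑ M ∈ Finset.univ.filter (fun M : Fin n → Fin k → Bool =>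
        IsLonesum M ∧ (Drows M).card = m), (X : Polynomial ℚ) ^ lonesumWeight M
      = ∑ p ∈ CovF n m ×ˢ CovF k m, (X : Polynomial ℚ) ^ (wF p.1 + wF p.2) := by
  refine Finset.sum_nbij' (fun M => (fM M, gcol M)) (fun p => Enc p.1 p.2) ?_ ?_ ?_ ?_ ?_
  · intro M hMf
    obtain ⟨-, hM, hcard⟩ := Finset.mem_filter.mp hMf
    exact Finset.mem_product.mpr ⟨hcard ▸ fM_mem_CovF hM, hcard ▸ gcol_mem_CovF hM⟩
  · intro p hp
    obtain ⟨hf, hg⟩ := Finset.mem_product.mp hp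
    exact Finset.mem_filter.mpr ⟨Finset.mem_univ _,
      enc_lonesum p.1 p.2, card_drows_enc hf hg⟩
  · intro M hMf
    obtain ⟨-, hM, hcard⟩ := Finset.mem_filter.mp hMf
    exact enc_fM_gcol hM
  · intro p hp
    obtain ⟨hf, hg⟩ := Finset.mem_product.mp hp
    exact Prod.ext (funext (fM_enc hf hg)) (funext (gcol_enc hf hg))
  · intro M hMf
    obtain ⟨-, hM, hcard⟩ := Finset.mem_filter.mp hMf
    congr 1
    conv_lhs => rw [← enc_fM_gcol hM]
    exact weight_enc (hcard ▸ fM_mem_CovF hM) (hcard ▸ gcol_mem_CovF hM)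

lemma partB (n k : ℕ) :
    (∑ M ∈ Finset.univ.filter (fun M : Fin n → Fin k → Bool => IsLonesum M),
        (X : Polynomial ℚ) ^ lonesumWeight M)
      = ∑ m ∈ Finset.range (min n k + 1),
          (∑ f ∈ CovF n m, (X : Polynomial ℚ) ^ wF f) *
            (∑ g ∈ CovF k m, (X : Polynomial ℚ) ^ wF g) := by
  have hmaps : ∀ M ∈ Finset.univ.filter (fun M : Fin n → Fin k → Bool => IsLonesum M),
      (Drows M).card ∈ Finset.range (min n k + 1) := by
    intro M hMf
    rw [Finset.mem_filter] at hMf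
    rw [Finset.mem_range]
    have := card_drows_le hMf.2
    omega
  rw [← Finset.sum_fiberwise_of_maps_to hmaps
    (fun M => (X : Polynomial ℚ) ^ lonesumWeight M)]
  apply Finset.sum_congr rfl
  intro m _
  rw [Finset.filter_filter, sum_fiber n k m, Finset.sum_mul_sum, ← Finset.sum_product']
  exact Finset.sum_congr rfl (fun p _ => pow_add _ _ _)

end LSAux

namespace LSAux2
open LSAux

noncomputable def TT (n k : ℕ) : Finset (Finset (Finset ℕ)) :=
  ((Finset.range n).powerset.powerset).filter
    (fun π => IsPartitionOf (Finset.range n) π ∧ π.card = k)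

lemma cigler_eq (n k : ℕ) :
    ciglerStirling n k = ∑ π ∈ TT n k, (X : Polynomial ℚ) ^ ciglerWeight π := by
  rw [ciglerStirling]
  have hset : {π : Finset (Finset ℕ) | IsPartitionOf (Finset.range n) π ∧ π.card = k}
      = ↑(TT n k) := by
    ext π
    simp only [Set.mem_setOf_eq, Finset.mem_coe, TT, Finset.mem_filter, Finset.mem_powerset]
    constructor
    · intro h
      refine ⟨?_, h⟩
      intro B hB
      rw [Finset.mem_powerset]
      intro x hx
      exact (h.1.2.2 x).mpr ⟨B, hB, hx⟩
    · exact fun h => h.2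
  rw [hset, finsum_mem_coe_finset]

noncomputable def Bl {n : ℕ} (f : Fin n → ℕ) (t : ℕ) : Finset ℕ :=
  (Finset.univ.filter (fun i => f i = t)).image (fun i : Fin n => (i : ℕ) + 1)

lemma mem_Bl {n : ℕ} {f : Fin n → ℕ} {t x : ℕ} :
    x ∈ Bl f t ↔ ∃ i : Fin n, f i = t ∧ (i : ℕ) + 1 = x := by
  simp [Bl]

noncomputable def B0f {n : ℕ} (f : Fin n → ℕ) : Finset ℕ := insert 0 (Bl f 0)

noncomputable def Phi {n : ℕ} (f : Fin n → ℕ) (m : ℕ) : Finset (Finset ℕ) :=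
  insert (B0f f) ((Finset.Icc 1 m).image (Bl f))

noncomputable def blk0 (π : Finset (Finset ℕ)) : Finset ℕ :=
  if h : ∃ B ∈ π, 0 ∈ B then h.choose else ∅

lemma block_subset {N : ℕ} {π : Finset (Finset ℕ)} (hπ : IsPartitionOf (Finset.range N) π)
    {B : Finset ℕ} (hB : B ∈ π) : B ⊆ Finset.range N :=
  fun x hx => (hπ.2.2 x).mpr ⟨B, hB, hx⟩

lemma block_unique {N : ℕ} {π : Finset (Finset ℕ)} (hπ : IsPartitionOf (Finset.range N) π)
    {B B' : Finset ℕ} (hB : B ∈ π) (hB' : B' ∈ π)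
    {x : ℕ} (hx : x ∈ B) (hx' : x ∈ B') : B = B' := by
  by_contra hne
  have hd := hπ.2.1 (Finset.mem_coe.mpr hB) (Finset.mem_coe.mpr hB') hne
  simp only [Function.onFun, id_eq] at hd
  exact Finset.disjoint_left.mp hd hx hx'

lemma blk0_mem {N : ℕ} {π : Finset (Finset ℕ)} (hπ : IsPartitionOf (Finset.range N) π)
    (hN : 0 < N) : blk0 π ∈ π ∧ 0 ∈ blk0 π := by
  have h : ∃ B ∈ π, 0 ∈ B := (hπ.2.2 0).mp (Finset.mem_range.mpr hN)
  rw [blk0, dif_pos h]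
  exact h.choose_spec

lemma blk0_unique {N : ℕ} {π : Finset (Finset ℕ)} (hπ : IsPartitionOf (Finset.range N) π)
    (hN : 0 < N) {B : Finset ℕ} (hB : B ∈ π) (h0 : 0 ∈ B) : B = blk0 π :=
  block_unique hπ hB (blk0_mem hπ hN).1 h0 (blk0_mem hπ hN).2

noncomputable def eB (m : ℕ) (π : Finset (Finset ℕ)) : Fin m → Finset ℕ :=
  if h : (π.erase (blk0 π)).card = m then
    fun t => (((Finset.equivFinOfCardEq h).symm t : {x // x ∈ π.erase (blk0 π)}) : Finset ℕ)
  else fun _ => ∅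

lemma eB_mem {m : ℕ} {π : Finset (Finset ℕ)} (h : (π.erase (blk0 π)).card = m) (t : Fin m) :
    eB m π t ∈ π.erase (blk0 π) := by
  rw [eB, dif_pos h]
  exact ((Finset.equivFinOfCardEq h).symm t).2

lemma eB_inj {m : ℕ} {π : Finset (Finset ℕ)} (h : (π.erase (blk0 π)).card = m)
    {t t' : Fin m} (he : eB m π t = eB m π t') : t = t' := by
  rw [eB, dif_pos h] at he
  exact (Finset.equivFinOfCardEq h).symm.injective (Subtype.ext he)

lemma eB_surj {m : ℕ} {π : Finset (Finset ℕ)} (h : (π.erase (blk0 π)).card = m)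
    {B : Finset ℕ} (hB : B ∈ π.erase (blk0 π)) : ∃ t, eB m π t = B := by
  refine ⟨Finset.equivFinOfCardEq h ⟨B, hB⟩, ?_⟩
  rw [eB, dif_pos h]
  simp

noncomputable def fOf (n m : ℕ) (σ : Equiv.Perm (Fin m)) (π : Finset (Finset ℕ)) :
    Fin n → ℕ := fun i =>
  ∑ t ∈ Finset.univ.filter (fun t : Fin m => (i : ℕ) + 1 ∈ eB m π (σ t)), ((t : ℕ) + 1)

section PartAEnc

variable {n m : ℕ} {π : Finset (Finset ℕ)} {σ : Equiv.Perm (Fin m)}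

lemma card_erase_blk0 (hπ : IsPartitionOf (Finset.range (n+1)) π)
    (hc : π.card = m+1) : (π.erase (blk0 π)).card = m := by
  rw [Finset.card_erase_of_mem (blk0_mem hπ (Nat.succ_pos n)).1, hc]
  omega

lemma fOf_zero (hπ : IsPartitionOf (Finset.range (n+1)) π) (hc : π.card = m+1)
    {i : Fin n} (hi : (i : ℕ) + 1 ∈ blk0 π) : fOf n m σ π i = 0 := by
  have hL := card_erase_blk0 hπ hc
  show ∑ t ∈ Finset.univ.filter (fun t : Fin m => (i : ℕ) + 1 ∈ eB m π (σ t)), ((t : ℕ) + 1) = 0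
  have : Finset.univ.filter (fun t : Fin m => (i : ℕ) + 1 ∈ eB m π (σ t)) = ∅ := by
    rw [Finset.filter_eq_empty_iff]
    intro t _ hmem
    have h1 := eB_mem hL (σ t)
    rw [Finset.mem_erase] at h1
    exact h1.1 (block_unique hπ h1.2 (blk0_mem hπ (Nat.succ_pos n)).1 hmem hi)
  rw [this, Finset.sum_empty]

lemma fOf_eq_succ_iff (hπ : IsPartitionOf (Finset.range (n+1)) π) (hc : π.card = m+1)
    {i : Fin n} (t : Fin m) :
    fOf n m σ π i = (t : ℕ) + 1 ↔ (i : ℕ) + 1 ∈ eB m π (σ t) := by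
  have hL := card_erase_blk0 hπ hc
  by_cases hi : (i : ℕ) + 1 ∈ blk0 π
  · rw [fOf_zero hπ hc hi]
    constructor
    · intro h; omega
    · intro h
      exfalso
      have h1 := eB_mem hL (σ t)
      rw [Finset.mem_erase] at h1
      exact h1.1 (block_unique hπ h1.2 (blk0_mem hπ (Nat.succ_pos n)).1 h hi)
  · have hilt := i.isLt
    obtain ⟨B, hBπ, hiB⟩ := (hπ.2.2 ((i : ℕ) + 1)).mp (Finset.mem_range.mpr (by omega))
    have hBer : B ∈ π.erase (blk0 π) :=
      Finset.mem_erase.mpr ⟨fun h => hi (h ▸ hiB), hBπ⟩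
    obtain ⟨s, hs⟩ := eB_surj hL hBer
    have key : ∀ t' : Fin m, ((i : ℕ) + 1 ∈ eB m π (σ t')) ↔ t' = σ.symm s := by
      intro t'
      constructor
      · intro h
        have h1 := eB_mem hL (σ t')
        have h2 : eB m π (σ t') = B :=
          block_unique hπ (Finset.mem_of_mem_erase h1) hBπ h hiB
        rw [← hs] at h2
        have h3 := eB_inj hL h2
        rw [← h3, Equiv.symm_apply_apply]
      · rintro rfl
        rw [Equiv.apply_symm_apply, hs]
        exact hiB
    have hfval : fOf n m σ π i = ((σ.symm s : Fin m) : ℕ) + 1 := by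
      show ∑ t' ∈ Finset.univ.filter (fun t' : Fin m => (i : ℕ) + 1 ∈ eB m π (σ t')),
        ((t' : ℕ) + 1) = _
      rw [show Finset.univ.filter (fun t' : Fin m => (i : ℕ) + 1 ∈ eB m π (σ t'))
          = {σ.symm s} from by ext t'; simp [key t'], Finset.sum_singleton]
    rw [hfval, key t]
    constructor
    · intro h
      exact (Fin.ext (by omega : ((t : Fin m) : ℕ) = ((σ.symm s : Fin m) : ℕ))).symm.symm
    · intro h
      rw [h]

lemma fOf_eq_zero_iff (hπ : IsPartitionOf (Finset.range (n+1)) π) (hc : π.card = m+1)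
    {i : Fin n} : fOf n m σ π i = 0 ↔ (i : ℕ) + 1 ∈ blk0 π := by
  constructor
  · intro h
    by_contra hi
    have hilt := i.isLt
    obtain ⟨B, hBπ, hiB⟩ := (hπ.2.2 ((i : ℕ) + 1)).mp (Finset.mem_range.mpr (by omega))
    have hBer : B ∈ π.erase (blk0 π) :=
      Finset.mem_erase.mpr ⟨fun hE => hi (hE ▸ hiB), hBπ⟩
    obtain ⟨s, hs⟩ := eB_surj (card_erase_blk0 hπ hc) hBer
    have hv : fOf n m σ π i = ((σ.symm s : Fin m) : ℕ) + 1 :=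
      (fOf_eq_succ_iff hπ hc (σ.symm s)).mpr
        (by rw [Equiv.apply_symm_apply, hs]; exact hiB)
    omega
  · exact fOf_zero hπ hc

lemma fOf_mem_CovF (hπ : IsPartitionOf (Finset.range (n+1)) π) (hc : π.card = m+1) :
    fOf n m σ π ∈ CovF n m := by
  have hL := card_erase_blk0 hπ hc
  rw [mem_CovF]
  constructor
  · intro i
    by_cases hi : (i : ℕ) + 1 ∈ blk0 π
    · rw [fOf_zero hπ hc hi]; omega
    · have hilt := i.isLt
      obtain ⟨B, hBπ, hiB⟩ := (hπ.2.2 ((i : ℕ) + 1)).mp (Finset.mem_range.mpr (by omega))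
      have hBer : B ∈ π.erase (blk0 π) :=
        Finset.mem_erase.mpr ⟨fun hE => hi (hE ▸ hiB), hBπ⟩
      obtain ⟨s, hs⟩ := eB_surj hL hBer
      have hv : fOf n m σ π i = ((σ.symm s : Fin m) : ℕ) + 1 :=
        (fOf_eq_succ_iff hπ hc (σ.symm s)).mpr
          (by rw [Equiv.apply_symm_apply, hs]; exact hiB)
      have := (σ.symm s).isLt
      omega
  · intro t' ht1 ht2
    have hlt : t' - 1 < m := by omega
    have hmem := eB_mem hL (σ ⟨t'-1, hlt⟩)
    obtain ⟨x, hx⟩ := hπ.1 (eB m π (σ ⟨t'-1, hlt⟩)) (Finset.mem_of_mem_erase hmem)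
    have hxr := block_subset hπ (Finset.mem_of_mem_erase hmem) hx
    rw [Finset.mem_range] at hxr
    have hx0 : x ≠ 0 := by
      rintro rfl
      rw [Finset.mem_erase] at hmem
      exact hmem.1 (blk0_unique hπ (Nat.succ_pos n) hmem.2 hx)
    refine ⟨⟨x - 1, by omega⟩, ?_⟩
    have hv : fOf n m σ π ⟨x - 1, by omega⟩ = ((⟨t'-1, hlt⟩ : Fin m) : ℕ) + 1 := by
      apply (fOf_eq_succ_iff hπ hc _).mpr
      show x - 1 + 1 ∈ eB m π (σ ⟨t'-1, hlt⟩)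
      rwa [show x - 1 + 1 = x by omega]
    rw [hv]
    show t' - 1 + 1 = t'
    omega

lemma wF_fOf (hπ : IsPartitionOf (Finset.range (n+1)) π) (hc : π.card = m+1) :
    wF (fOf n m σ π) = ciglerWeight π := by
  have hcw : ciglerWeight π = ∑ x ∈ blk0 π, x := by
    rw [ciglerWeight]
    have hfe : π.filter (fun B => 0 ∈ B) = {blk0 π} := by
      ext B
      rw [Finset.mem_filter, Finset.mem_singleton]
      constructor
      · rintro ⟨h1, h2⟩
        exact blk0_unique hπ (Nat.succ_pos n) h1 h2
      · rintro rfl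
        exact ⟨(blk0_mem hπ (Nat.succ_pos n)).1, (blk0_mem hπ (Nat.succ_pos n)).2⟩
    rw [hfe, Finset.sum_singleton]
  rw [hcw, wF, ← Finset.sum_filter,
    ← Finset.sum_erase (blk0 π) (rfl : (fun (x : ℕ) => x) 0 = 0)]
  have himg : (Finset.univ.filter (fun i : Fin n => fOf n m σ π i = 0)).image
      (fun i : Fin n => (i : ℕ) + 1) = (blk0 π).erase 0 := by
    ext x
    rw [Finset.mem_image, Finset.mem_erase]
    constructor
    · rintro ⟨i, hi, rfl⟩
      rw [Finset.mem_filter] at hi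
      exact ⟨by omega, (fOf_eq_zero_iff hπ hc).mp hi.2⟩
    · rintro ⟨hx0, hxB⟩
      have hxr := block_subset hπ (blk0_mem hπ (Nat.succ_pos n)).1 hxB
      rw [Finset.mem_range] at hxr
      refine ⟨⟨x - 1, by omega⟩, ?_, by show x - 1 + 1 = x; omega⟩
      rw [Finset.mem_filter]
      refine ⟨Finset.mem_univ _, (fOf_eq_zero_iff hπ hc).mpr ?_⟩
      show x - 1 + 1 ∈ blk0 π
      rwa [show x - 1 + 1 = x by omega]
  rw [← himg, Finset.sum_image (fun a _ b _ h => Fin.ext (by omega : ((a : Fin n) : ℕ) = b))]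

end PartAEnc

section PartADec

variable {n m : ℕ}

lemma zero_notMem_Bl {f : Fin n → ℕ} {t : ℕ} : (0 : ℕ) ∉ Bl f t := by
  simp [mem_Bl]

lemma mem_B0f {f : Fin n → ℕ} {x : ℕ} :
    x ∈ B0f f ↔ x = 0 ∨ ∃ i : Fin n, f i = 0 ∧ (i : ℕ) + 1 = x := by
  simp [B0f, mem_Bl]

lemma Bl_disj {f : Fin n → ℕ} {t t' x : ℕ} (h : x ∈ Bl f t) (h' : x ∈ Bl f t') : t = t' := by
  rw [mem_Bl] at h h'
  obtain ⟨i, hi, hix⟩ := h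
  obtain ⟨i', hi', hix'⟩ := h'
  have hii : i = i' := Fin.ext (by omega)
  rw [← hi, ← hi', hii]

lemma B0f_Bl_disj {f : Fin n → ℕ} {t x : ℕ} (h : x ∈ B0f f) (h' : x ∈ Bl f t) : t = 0 := by
  rcases mem_B0f.mp h with rfl | ⟨i, hi, hix⟩
  · exact absurd h' zero_notMem_Bl
  · exact Bl_disj h' (mem_Bl.mpr ⟨i, hi, hix⟩)

lemma B0f_notMem_image {f : Fin n → ℕ} : B0f f ∉ (Finset.Icc 1 m).image (Bl f) := by
  rw [Finset.mem_image]
  rintro ⟨t, ht, h⟩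
  rw [Finset.mem_Icc] at ht
  have h0 : (0 : ℕ) ∈ B0f f := Finset.mem_insert_self 0 _
  rw [← h] at h0
  exact zero_notMem_Bl h0

lemma Bl_injOn {f : Fin n → ℕ} (hf2 : ∀ t, 1 ≤ t → t ≤ m → ∃ i, f i = t) :
    Set.InjOn (Bl f) ↑(Finset.Icc 1 m) := by
  intro t ht t' ht' h
  simp only [Finset.coe_Icc, Set.mem_Icc] at ht ht'
  obtain ⟨i, hi⟩ := hf2 t ht.1 ht.2
  have hmem : (i : ℕ) + 1 ∈ Bl f t := mem_Bl.mpr ⟨i, hi, rfl⟩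
  rw [h] at hmem
  exact (Bl_disj (mem_Bl.mpr ⟨i, hi, rfl⟩) hmem)

lemma Phi_partition {f : Fin n → ℕ} (hf : f ∈ CovF n m) :
    IsPartitionOf (Finset.range (n+1)) (Phi f m) := by
  obtain ⟨hf1, hf2⟩ := mem_CovF.mp hf
  have hsub : ∀ B ∈ Phi f m, B ⊆ Finset.range (n+1) := by
    intro B hB x hx
    rw [Finset.mem_range]
    rcases Finset.mem_insert.mp hB with rfl | hB'
    · rcases Finset.mem_insert.mp hx with rfl | hx'
      · omega
      · obtain ⟨i, -, hix⟩ := mem_Bl.mp hx'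
        have := i.isLt
        omega
    · obtain ⟨t, -, rfl⟩ := Finset.mem_image.mp hB'
      obtain ⟨i, -, hix⟩ := mem_Bl.mp hx
      have := i.isLt
      omega
  refine ⟨?_, ?_, ?_⟩
  · intro B hB
    rcases Finset.mem_insert.mp hB with rfl | hB'
    · exact ⟨0, Finset.mem_insert_self 0 _⟩
    · obtain ⟨t, ht, rfl⟩ := Finset.mem_image.mp hB'
      rw [Finset.mem_Icc] at ht
      obtain ⟨i, hi⟩ := hf2 t ht.1 ht.2
      exact ⟨(i : ℕ) + 1, mem_Bl.mpr ⟨i, hi, rfl⟩⟩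
  · intro B hB B' hB' hne
    simp only [Finset.mem_coe] at hB hB'
    simp only [Function.onFun, id_eq]
    rw [Finset.disjoint_left]
    intro x hx hx'
    apply hne
    rcases Finset.mem_insert.mp hB with rfl | hB2 <;>
      rcases Finset.mem_insert.mp hB' with h2 | hB2'
    · rw [h2]
    · exfalso
      obtain ⟨t, ht, rfl⟩ := Finset.mem_image.mp hB2'
      rw [Finset.mem_Icc] at ht
      have := B0f_Bl_disj hx hx'
      omega
    · exfalso
      obtain ⟨t, ht, rfl⟩ := Finset.mem_image.mp hB2
      rw [Finset.mem_Icc] at ht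
      have := B0f_Bl_disj (h2 ▸ hx') hx
      omega
    · obtain ⟨t, ht, rfl⟩ := Finset.mem_image.mp hB2
      obtain ⟨t', ht', rfl⟩ := Finset.mem_image.mp hB2'
      rw [Bl_disj hx hx']
  · intro x
    constructor
    · intro hx
      rw [Finset.mem_range] at hx
      rcases Nat.eq_zero_or_pos x with rfl | hx0
      · exact ⟨B0f f, Finset.mem_insert_self _ _, Finset.mem_insert_self _ _⟩
      · have hi : x - 1 < n := by omega
        rcases Nat.eq_zero_or_pos (f ⟨x-1, hi⟩) with h0 | hpos
        · exact ⟨B0f f, Finset.mem_insert_self _ _, Finset.mem_insert_of_mem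
            (mem_Bl.mpr ⟨⟨x-1, hi⟩, h0, by show x - 1 + 1 = x; omega⟩)⟩
        · exact ⟨Bl f (f ⟨x-1, hi⟩), Finset.mem_insert_of_mem (Finset.mem_image.mpr
            ⟨f ⟨x-1, hi⟩, Finset.mem_Icc.mpr ⟨hpos, hf1 _⟩, rfl⟩),
            mem_Bl.mpr ⟨⟨x-1, hi⟩, rfl, by show x - 1 + 1 = x; omega⟩⟩
    · rintro ⟨B, hB, hx⟩
      exact hsub B hB hx

lemma Phi_card {f : Fin n → ℕ} (hf : f ∈ CovF n m) : (Phi f m).card = m + 1 := by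
  obtain ⟨hf1, hf2⟩ := mem_CovF.mp hf
  rw [Phi, Finset.card_insert_of_notMem B0f_notMem_image,
    Finset.card_image_of_injOn (Bl_injOn hf2), Nat.card_Icc]
  omega

lemma Phi_mem_TT {f : Fin n → ℕ} (hf : f ∈ CovF n m) : Phi f m ∈ TT (n+1) (m+1) := by
  rw [TT, Finset.mem_filter]
  refine ⟨?_, Phi_partition hf, Phi_card hf⟩
  rw [Finset.mem_powerset]
  intro B hB
  rw [Finset.mem_powerset]
  intro x hx
  exact (((Phi_partition hf).2.2) x).mpr ⟨B, hB, hx⟩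

lemma blk0_Phi {f : Fin n → ℕ} (hf : f ∈ CovF n m) : blk0 (Phi f m) = B0f f :=
  (blk0_unique (Phi_partition hf) (Nat.succ_pos n) (Finset.mem_insert_self _ _)
    (Finset.mem_insert_self 0 _)).symm

lemma erase_Phi {f : Fin n → ℕ} (hf : f ∈ CovF n m) :
    (Phi f m).erase (blk0 (Phi f m)) = (Finset.Icc 1 m).image (Bl f) := by
  rw [blk0_Phi hf, Phi, Finset.erase_insert B0f_notMem_image]

lemma card_erase_Phi {f : Fin n → ℕ} (hf : f ∈ CovF n m) :
    ((Phi f m).erase (blk0 (Phi f m))).card = m := by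
  rw [erase_Phi hf, Finset.card_image_of_injOn (Bl_injOn (mem_CovF.mp hf).2), Nat.card_Icc]
  omega

noncomputable def FOf (m : ℕ) {n : ℕ} (f : Fin n → ℕ) : Fin m → Fin m := fun t =>
  if h : ∃ s : Fin m, eB m (Phi f m) s = Bl f ((t : ℕ) + 1) then h.choose else t

noncomputable def σOf (m : ℕ) {n : ℕ} (f : Fin n → ℕ) : Equiv.Perm (Fin m) :=
  if h : Function.Bijective (FOf m f) then Equiv.ofBijective _ h else 1

lemma FOf_spec {f : Fin n → ℕ} (hf : f ∈ CovF n m) (t : Fin m) :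
    eB m (Phi f m) (FOf m f t) = Bl f ((t : ℕ) + 1) := by
  have hL := card_erase_Phi hf
  have hP : ∃ s : Fin m, eB m (Phi f m) s = Bl f ((t : ℕ) + 1) := by
    apply eB_surj hL
    rw [erase_Phi hf]
    exact Finset.mem_image.mpr ⟨(t : ℕ) + 1,
      Finset.mem_Icc.mpr ⟨by omega, by have := t.isLt; omega⟩, rfl⟩
  simp only [FOf]
  rw [dif_pos hP]
  exact hP.choose_spec

lemma FOf_inj {f : Fin n → ℕ} (hf : f ∈ CovF n m) : Function.Injective (FOf m f) := by
  intro t t' h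
  have h1 := FOf_spec hf t
  have h2 := FOf_spec hf t'
  rw [h] at h1
  rw [h1] at h2
  have := Bl_injOn (mem_CovF.mp hf).2
    (by simp only [Finset.coe_Icc, Set.mem_Icc]
        exact ⟨by omega, by have := t'.isLt; omega⟩)
    (by simp only [Finset.coe_Icc, Set.mem_Icc]
        exact ⟨by omega, by have := t.isLt; omega⟩) h2
  exact (Fin.ext (by omega)).symm.symm

lemma σOf_apply {f : Fin n → ℕ} (hf : f ∈ CovF n m) (t : Fin m) :
    σOf m f t = FOf m f t := by
  have hbij := Finite.injective_iff_bijective.mp (FOf_inj hf)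
  rw [σOf, dif_pos hbij]
  rfl

lemma fOf_σOf {f : Fin n → ℕ} (hf : f ∈ CovF n m) :
    fOf n m (σOf m f) (Phi f m) = f := by
  obtain ⟨hf1, hf2⟩ := mem_CovF.mp hf
  have hπ := Phi_partition hf
  have hc := Phi_card hf
  funext i
  rcases Nat.eq_zero_or_pos (f i) with h0 | hpos
  · rw [h0]
    apply (fOf_eq_zero_iff hπ hc).mpr
    rw [blk0_Phi hf]
    exact mem_B0f.mpr (Or.inr ⟨i, h0, rfl⟩)
  · have hlt : f i - 1 < m := by have := hf1 i; omega
    have hv : fOf n m (σOf m f) (Phi f m) i = ((⟨f i - 1, hlt⟩ : Fin m) : ℕ) + 1 := by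
      apply (fOf_eq_succ_iff hπ hc _).mpr
      rw [σOf_apply hf, FOf_spec hf]
      apply mem_Bl.mpr
      refine ⟨i, ?_, rfl⟩
      show f i = f i - 1 + 1
      omega
    rw [hv]
    show f i - 1 + 1 = f i
    omega

end PartADec

section PartALeft

variable {n m : ℕ} {π : Finset (Finset ℕ)} {σ : Equiv.Perm (Fin m)}

lemma Bl_fOf (hπ : IsPartitionOf (Finset.range (n+1)) π) (hc : π.card = m+1) (t : Fin m) :
    Bl (fOf n m σ π) ((t : ℕ) + 1) = eB m π (σ t) := by
  have hL := card_erase_blk0 hπ hc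
  ext x
  rw [mem_Bl]
  constructor
  · rintro ⟨i, hfi, rfl⟩
    exact (fOf_eq_succ_iff hπ hc t).mp hfi
  · intro hx
    have hmem := eB_mem hL (σ t)
    have hxr := block_subset hπ (Finset.mem_of_mem_erase hmem) hx
    rw [Finset.mem_range] at hxr
    have hx0 : x ≠ 0 := by
      rintro rfl
      rw [Finset.mem_erase] at hmem
      exact hmem.1 (blk0_unique hπ (Nat.succ_pos n) hmem.2 hx)
    refine ⟨⟨x - 1, by omega⟩, ?_, by show x - 1 + 1 = x; omega⟩
    apply (fOf_eq_succ_iff hπ hc t).mpr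
    show x - 1 + 1 ∈ eB m π (σ t)
    rwa [show x - 1 + 1 = x by omega]

lemma B0f_fOf (hπ : IsPartitionOf (Finset.range (n+1)) π) (hc : π.card = m+1) :
    B0f (fOf n m σ π) = blk0 π := by
  ext x
  rw [mem_B0f]
  constructor
  · rintro (rfl | ⟨i, hfi, rfl⟩)
    · exact (blk0_mem hπ (Nat.succ_pos n)).2
    · exact (fOf_eq_zero_iff hπ hc).mp hfi
  · intro hx
    rcases Nat.eq_zero_or_pos x with rfl | hx0
    · exact Or.inl rfl
    · have hxr := block_subset hπ (blk0_mem hπ (Nat.succ_pos n)).1 hx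
      rw [Finset.mem_range] at hxr
      refine Or.inr ⟨⟨x - 1, by omega⟩, ?_, by show x - 1 + 1 = x; omega⟩
      apply (fOf_eq_zero_iff hπ hc).mpr
      show x - 1 + 1 ∈ blk0 π
      rwa [show x - 1 + 1 = x by omega]

lemma Phi_fOf (hπ : IsPartitionOf (Finset.range (n+1)) π) (hc : π.card = m+1) :
    Phi (fOf n m σ π) m = π := by
  have hL := card_erase_blk0 hπ hc
  have himg : (Finset.Icc 1 m).image (Bl (fOf n m σ π)) = π.erase (blk0 π) := by
    ext B
    rw [Finset.mem_image]
    constructor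
    · rintro ⟨t', ht', rfl⟩
      rw [Finset.mem_Icc] at ht'
      have hlt : t' - 1 < m := by omega
      have hbl : Bl (fOf n m σ π) t' = eB m π (σ ⟨t' - 1, hlt⟩) := by
        rw [← Bl_fOf hπ hc ⟨t' - 1, hlt⟩]
        congr 1
        show t' = t' - 1 + 1
        omega
      rw [hbl]
      exact eB_mem hL _
    · intro hB
      obtain ⟨s, hs⟩ := eB_surj hL hB
      refine ⟨((σ.symm s : Fin m) : ℕ) + 1, Finset.mem_Icc.mpr
        ⟨by omega, by have := (σ.symm s).isLt; omega⟩, ?_⟩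
      rw [Bl_fOf hπ hc (σ.symm s), Equiv.apply_symm_apply, hs]
  rw [Phi, B0f_fOf hπ hc, himg, Finset.insert_erase (blk0_mem hπ (Nat.succ_pos n)).1]

lemma σOf_fOf (hπ : IsPartitionOf (Finset.range (n+1)) π) (hc : π.card = m+1) :
    σOf m (fOf n m σ π) = σ := by
  have hL := card_erase_blk0 hπ hc
  have hFOf : FOf m (fOf n m σ π) = ⇑σ := by
    funext t
    have hP : ∃ s : Fin m, eB m (Phi (fOf n m σ π) m) s = Bl (fOf n m σ π) ((t : ℕ) + 1) :=
      ⟨σ t, by rw [Phi_fOf hπ hc, Bl_fOf hπ hc]⟩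
    simp only [FOf]
    rw [dif_pos hP]
    have hspec := hP.choose_spec
    generalize hq : hP.choose = s0 at hspec ⊢
    rw [Phi_fOf hπ hc, Bl_fOf hπ hc] at hspec
    exact eB_inj hL hspec
  have hbij : Function.Bijective (FOf m (fOf n m σ π)) := by
    rw [hFOf]; exact σ.bijective
  rw [σOf, dif_pos hbij]
  exact Equiv.ext (fun t => by rw [Equiv.ofBijective_apply, hFOf])

end PartALeft

lemma partA (n m : ℕ) :
    ((m.factorial : ℕ) : Polynomial ℚ) * ciglerStirling (n+1) (m+1)
      = ∑ f ∈ CovF n m, (X : Polynomial ℚ) ^ wF f := by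
  rw [cigler_eq]
  have h1 : ((m.factorial : ℕ) : Polynomial ℚ)
      * ∑ π ∈ TT (n+1) (m+1), (X : Polynomial ℚ) ^ ciglerWeight π
      = ∑ p ∈ (Finset.univ : Finset (Equiv.Perm (Fin m))) ×ˢ TT (n+1) (m+1),
          (X : Polynomial ℚ) ^ ciglerWeight p.2 := by
    rw [Finset.sum_product' _ _ (fun _ π => (X : Polynomial ℚ) ^ ciglerWeight π),
      Finset.sum_const, Finset.card_univ, Fintype.card_perm, Fintype.card_fin, nsmul_eq_mul]
  rw [h1]
  refine Finset.sum_nbij' (fun p => fOf n m p.1 p.2) (fun f => (σOf m f, Phi f m))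
    ?_ ?_ ?_ ?_ ?_
  · rintro ⟨σ', π'⟩ hp
    obtain ⟨-, hπT⟩ := Finset.mem_product.mp hp
    obtain ⟨-, hπ, hc⟩ := Finset.mem_filter.mp hπT
    exact fOf_mem_CovF hπ hc
  · intro f hf
    exact Finset.mem_product.mpr ⟨Finset.mem_univ _, Phi_mem_TT hf⟩
  · rintro ⟨σ', π'⟩ hp
    obtain ⟨-, hπT⟩ := Finset.mem_product.mp hp
    obtain ⟨-, hπ, hc⟩ := Finset.mem_filter.mp hπT
    exact Prod.ext (σOf_fOf hπ hc) (Phi_fOf hπ hc)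
  · intro f hf
    exact fOf_σOf hf
  · rintro ⟨σ', π'⟩ hp
    obtain ⟨-, hπT⟩ := Finset.mem_product.mp hp
    obtain ⟨-, hπ, hc⟩ := Finset.mem_filter.mp hπT
    rw [wF_fOf hπ hc]

end LSAux2

/-- The weight generating polynomial of lonesum `n × k` matrices equals
`∑_{m=0}^{min(n,k)} m! {n+1 brace m+1}*_q m! {k+1 brace m+1}*_q`. -/
theorem lonesum_weight_sum_eq (n k : ℕ) :
    (∑ M ∈ Finset.univ.filter (fun M : Fin n → Fin k → Bool => IsLonesum M),
        (Polynomial.X : Polynomial ℚ) ^ lonesumWeight M)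
      = ∑ m ∈ Finset.range (min n k + 1),
          (m.factorial : Polynomial ℚ) * ciglerStirling (n + 1) (m + 1) *
            (m.factorial : Polynomial ℚ) * ciglerStirling (k + 1) (m + 1) := by
  rw [LSAux.partB n k]
  apply Finset.sum_congr rfl
  intro m _
  rw [← LSAux2.partA n m, ← LSAux2.partA k m]
  ring
end
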